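/- arXiv:1611.09002 — 4 statements merged into one kernel-verified Lean document; each statement's English description precedes it below -/
import Mathlib

section
/- Every multigraph G with maximum degree Δ and maximum edge multiplicity μ admits a proper edge-colouring using at most Δ + μ colours. -/
open Finset

/-- A multigraph on vertex type `V` with edge type `E`: each edge has an
unordered pair of distinct endpoints (loopless). -/
structure Multigraph (V : Type) (E : Type) where
  ends : E → Sym2 V
  loopless : ∀ e, ¬ (ends e).IsDiag

namespace Multigraph

variable {V E : Type} [Fintype V] [Fintype E] [DecidableEq V] [DecidableEq E]

/-- The degree of a vertex: the number of edges incident to it. -/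
noncomputable def degree (G : Multigraph V E) (v : V) : ℕ :=
  {e : E | v ∈ G.ends e}.ncard

/-- The multiplicity of an unordered pair of vertices. -/
noncomputable def multiplicity (G : Multigraph V E) (s : Sym2 V) : ℕ :=
  {e : E | G.ends e = s}.ncard

/-- Two distinct edges are adjacent when they share an endpoint. -/
def EdgeAdj (G : Multigraph V E) (e f : E) : Prop :=
  e ≠ f ∧ ∃ v, v ∈ G.ends e ∧ v ∈ G.ends f

/-- A matching: a set of pairwise non-adjacent edges. -/
def IsMatching (G : Multigraph V E) (M : Finset E) : Prop :=
  ∀ e ∈ M, ∀ f ∈ M, e ≠ f → ¬ G.EdgeAdj e f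

/-- A maximal matching. -/
def IsMaximalMatching (G : Multigraph V E) (M : Finset E) : Prop :=
  G.IsMatching M ∧ ∀ f ∉ M, ∃ e ∈ M, G.EdgeAdj e f

/-- `c` is a proper edge-colouring of `G` minus the edge set `D`, using
colours from `{1, …, k}`. -/
def IsProperOff (G : Multigraph V E) (D : Finset E) (k : ℕ) (c : E → ℕ) : Prop :=
  (∀ e, e ∉ D → c e ∈ Finset.Icc 1 k) ∧
    ∀ e f, e ∉ D → f ∉ D → G.EdgeAdj e f → c e ≠ c f

/-- The underlying simple graph of a multigraph. -/
def toSimple (G : Multigraph V E) : SimpleGraph V where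
  Adj u v := u ≠ v ∧ ∃ e, G.ends e = s(u, v)
  symm := ⟨by
    rintro u v ⟨h, e, he⟩
    exact ⟨h.symm, e, he.trans Sym2.eq_swap⟩⟩
  loopless := ⟨fun v h => h.1 rfl⟩

/-- The distance between edges `e` and `f` is at least `d`: every path in the
underlying graph between an endpoint of `e` and an endpoint of `f` has length
at least `d`. -/
def EdgeDistGe (G : Multigraph V E) (e f : E) (d : ℕ) : Prop :=
  ∀ u v, u ∈ G.ends e → v ∈ G.ends f → ∀ p : G.toSimple.Walk u v, d ≤ p.length

/-- The distance between edges `e` and `f` is at most `d`. -/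
def EdgeDistLe (G : Multigraph V E) (e f : E) (d : ℕ) : Prop :=
  ∃ u v, u ∈ G.ends e ∧ v ∈ G.ends f ∧ ∃ p : G.toSimple.Walk u v, p.length ≤ d

/-- `G` contains no cycle of length 5. -/
def C5Free (G : Multigraph V E) : Prop :=
  ¬ ∃ (v : Fin 5 → V) (f : Fin 5 → E), Function.Injective v ∧ Function.Injective f ∧
      ∀ i : Fin 5, G.ends (f i) = s(v i, v (i + 1))

end Multigraph

set_option linter.unusedSectionVars false

namespace VizingProof
open Multigraph Classical

variable {V E : Type} [Fintype V] [Fintype E] [DecidableEq V] [DecidableEq E]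

noncomputable def used (G : Multigraph V E) (D : Finset E) (c : E → ℕ) (v : V) : Finset ℕ :=
  (Finset.univ.filter (fun g => g ∉ D ∧ v ∈ G.ends g)).image c

noncomputable def free (G : Multigraph V E) (D : Finset E) (k : ℕ) (c : E → ℕ) (v : V) : Finset ℕ :=
  Finset.Icc 1 k \ used G D c v

variable {G : Multigraph V E} {D : Finset E} {k : ℕ} {c : E → ℕ}

lemma mem_used_iff {v : V} {γ : ℕ} :
    γ ∈ used G D c v ↔ ∃ g, g ∉ D ∧ v ∈ G.ends g ∧ c g = γ := by
  unfold used
  simp only [Finset.mem_image, Finset.mem_filter, Finset.mem_univ, true_and]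
  constructor
  · rintro ⟨g, ⟨h1, h2⟩, h3⟩; exact ⟨g, h1, h2, h3⟩
  · rintro ⟨g, h1, h2, h3⟩; exact ⟨g, ⟨h1, h2⟩, h3⟩

lemma used_of {g : E} (hg : g ∉ D) {v : V} (hv : v ∈ G.ends g) : c g ∈ used G D c v :=
  mem_used_iff.mpr ⟨g, hg, hv, rfl⟩

lemma mem_free_iff {v : V} {γ : ℕ} :
    γ ∈ free G D k c v ↔ γ ∈ Finset.Icc 1 k ∧ γ ∉ used G D c v := Finset.mem_sdiff

lemma free_Icc {v : V} {γ : ℕ} (h : γ ∈ free G D k c v) : γ ∈ Finset.Icc 1 k :=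
  (mem_free_iff.mp h).1

lemma free_not_used {v : V} {γ : ℕ} (h : γ ∈ free G D k c v) : γ ∉ used G D c v :=
  (mem_free_iff.mp h).2

lemma unique_color_edge (hprop : IsProperOff G D k c) {g g' : E} {v : V}
    (hg : g ∉ D) (hg' : g' ∉ D) (hvg : v ∈ G.ends g) (hvg' : v ∈ G.ends g')
    (hcc : c g = c g') : g = g' := by
  by_contra hne
  exact hprop.2 g g' hg hg' ⟨hne, v, hvg, hvg'⟩ hcc

lemma ends_ne {g : E} {a b : V} (hab : G.ends g = s(a, b)) : a ≠ b := by
  intro h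
  exact G.loopless g (by rw [hab, Sym2.mk_isDiag_iff]; exact h)

lemma degree_eq_card (G : Multigraph V E) (v : V) :
    G.degree v = (Finset.univ.filter (fun g => v ∈ G.ends g)).card := by
  unfold degree
  rw [Set.ncard_eq_toFinset_card']
  congr 1
  ext g
  simp

lemma multiplicity_eq_card (G : Multigraph V E) (s : Sym2 V) :
    Multigraph.multiplicity G s = (Finset.univ.filter (fun g => G.ends g = s)).card := by
  unfold Multigraph.multiplicity
  rw [Set.ncard_eq_toFinset_card']
  congr 1
  ext g
  simp

lemma used_subset_Icc (hprop : IsProperOff G D k c) (v : V) :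
    used G D c v ⊆ Finset.Icc 1 k := by
  intro γ hγ
  obtain ⟨g, hg, _, rfl⟩ := mem_used_iff.mp hγ
  exact hprop.1 g hg

lemma card_free_ge {Δ μ : ℕ} (hprop : IsProperOff G D (Δ + μ) c)
    (hΔ : ∀ v, G.degree v ≤ Δ) (v : V) : μ ≤ (free G D (Δ + μ) c v).card := by
  have hsub := used_subset_Icc hprop v
  have h1 : (used G D c v).card ≤ Δ := by
    calc (used G D c v).card ≤ ((Finset.univ : Finset E).filter
          (fun g => g ∉ D ∧ v ∈ G.ends g)).card := Finset.card_image_le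
      _ ≤ ((Finset.univ : Finset E).filter (fun g => v ∈ G.ends g)).card := by
          apply Finset.card_le_card
          intro g hg
          simp only [Finset.mem_filter] at *
          exact ⟨hg.1, hg.2.2⟩
      _ = G.degree v := (degree_eq_card G v).symm
      _ ≤ Δ := hΔ v
  have : (free G D (Δ + μ) c v).card = (Δ + μ + 1 - 1) - (used G D c v).card := by
    rw [free, Finset.card_sdiff_of_subset hsub, Nat.card_Icc]
  omega

lemma card_free_ge_strong {Δ μ : ℕ} (hprop : IsProperOff G D (Δ + μ) c)
    (hΔ : ∀ v, G.degree v ≤ Δ) {v : V} {e₀ : E} (he₀ : e₀ ∈ D) (hv : v ∈ G.ends e₀) :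
    μ + 1 ≤ (free G D (Δ + μ) c v).card := by
  have hsub := used_subset_Icc hprop v
  have he₀mem : e₀ ∈ (Finset.univ : Finset E).filter (fun g => v ∈ G.ends g) := by
    simp [hv]
  have h1 : (used G D c v).card ≤ Δ - 1 := by
    calc (used G D c v).card ≤ ((Finset.univ : Finset E).filter
          (fun g => g ∉ D ∧ v ∈ G.ends g)).card := Finset.card_image_le
      _ ≤ (((Finset.univ : Finset E).filter (fun g => v ∈ G.ends g)).erase e₀).card := by
          apply Finset.card_le_card
          intro g hg
          simp only [Finset.mem_filter, Finset.mem_erase] at *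
          exact ⟨fun h => hg.2.1 (h ▸ he₀), Finset.mem_univ g, hg.2.2⟩
      _ = ((Finset.univ : Finset E).filter (fun g => v ∈ G.ends g)).card - 1 :=
          Finset.card_erase_of_mem he₀mem
      _ ≤ Δ - 1 := by
          have := (degree_eq_card G v) ▸ hΔ v
          omega
  have hΔpos : 1 ≤ G.degree v := by
    rw [degree_eq_card]
    exact Finset.card_pos.mpr ⟨e₀, he₀mem⟩
  have hΔ1 : 1 ≤ Δ := le_trans hΔpos ((degree_eq_card G v) ▸ hΔ v)
  have : (free G D (Δ + μ) c v).card = (Δ + μ + 1 - 1) - (used G D c v).card := by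
    rw [free, Finset.card_sdiff_of_subset hsub, Nat.card_Icc]
  omega

end VizingProof

namespace VizingProof
open Multigraph Classical

variable {V E : Type} [Fintype V] [Fintype E] [DecidableEq V] [DecidableEq E]
variable {G : Multigraph V E} {D : Finset E} {k : ℕ} {c : E → ℕ}

structure IsFan (G : Multigraph V E) (D : Finset E) (k : ℕ) (c : E → ℕ) (x : V) (e₀ : E)
    (f : ℕ → E) (y : ℕ → V) (n : ℕ) : Prop where
  hn : 1 ≤ n
  h0 : f 0 = e₀
  hends : ∀ i, i < n → G.ends (f i) = s(x, y i)
  hinj : ∀ i, i < n → ∀ j, j < n → f i = f j → i = j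
  hnotD : ∀ i, 0 < i → i < n → f i ∉ D
  hcond : ∀ i, 0 < i → i < n → ∃ j, j < i ∧ c (f i) ∈ free G D k c (y j)

lemma IsFan.prefix {x : V} {e₀ : E} {f : ℕ → E} {y : ℕ → V} {n : ℕ}
    (hfan : IsFan G D k c x e₀ f y n) {m : ℕ} (h1 : 1 ≤ m) (h2 : m ≤ n) :
    IsFan G D k c x e₀ f y m where
  hn := h1
  h0 := hfan.h0
  hends := fun i hi => hfan.hends i (lt_of_lt_of_le hi h2)
  hinj := fun i hi j hj => hfan.hinj i (lt_of_lt_of_le hi h2) j (lt_of_lt_of_le hj h2)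
  hnotD := fun i h0i hi => hfan.hnotD i h0i (lt_of_lt_of_le hi h2)
  hcond := fun i h0i hi => hfan.hcond i h0i (lt_of_lt_of_le hi h2)

lemma IsFan.x_mem {x : V} {e₀ : E} {f : ℕ → E} {y : ℕ → V} {n : ℕ}
    (hfan : IsFan G D k c x e₀ f y n) {i : ℕ} (hi : i < n) : x ∈ G.ends (f i) := by
  rw [hfan.hends i hi]; exact Sym2.mem_mk_left x (y i)

lemma IsFan.y_mem {x : V} {e₀ : E} {f : ℕ → E} {y : ℕ → V} {n : ℕ}
    (hfan : IsFan G D k c x e₀ f y n) {i : ℕ} (hi : i < n) : y i ∈ G.ends (f i) := by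
  rw [hfan.hends i hi]; exact Sym2.mem_mk_right x (y i)

lemma IsFan.y_ne_x {x : V} {e₀ : E} {f : ℕ → E} {y : ℕ → V} {n : ℕ}
    (hfan : IsFan G D k c x e₀ f y n) {i : ℕ} (hi : i < n) : y i ≠ x :=
  (ends_ne (hfan.hends i hi)).symm

/-- Colouring an uncoloured edge with a colour free at both its endpoints. -/
lemma properOff_color (hprop : IsProperOff G D k c) {e₀ : E} {a b : V} {γ : ℕ}
    (he₀ : e₀ ∈ D) (hab : G.ends e₀ = s(a, b))
    (ha : γ ∈ free G D k c a) (hb : γ ∈ free G D k c b) :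
    IsProperOff G (D.erase e₀) k (Function.update c e₀ γ) := by
  have hnotD : ∀ g : E, g ∉ D.erase e₀ → g ≠ e₀ → g ∉ D := by
    intro g hg hne hD
    exact hg (Finset.mem_erase.mpr ⟨hne, hD⟩)
  constructor
  · intro g hg
    by_cases hge : g = e₀
    · subst hge; rw [Function.update_self]; exact free_Icc ha
    · rw [Function.update_of_ne hge]; exact hprop.1 g (hnotD g hg hge)
  · intro g g' hg hg' hadj
    by_cases hge : g = e₀ <;> by_cases hge' : g' = e₀
    · exact absurd (hge.trans hge'.symm) hadj.1
    · subst hge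
      rw [Function.update_self, Function.update_of_ne hge']
      obtain ⟨_, v, hv1, hv2⟩ := hadj
      have hused : c g' ∈ used G D c v := used_of (hnotD g' hg' hge') hv2
      rw [hab, Sym2.mem_iff] at hv1
      intro hcc
      rcases hv1 with rfl | rfl
      · exact free_not_used ha (hcc ▸ hused)
      · exact free_not_used hb (hcc ▸ hused)
    · subst hge'
      rw [Function.update_self, Function.update_of_ne hge]
      obtain ⟨_, v, hv1, hv2⟩ := hadj
      have hused : c g ∈ used G D c v := used_of (hnotD g hg hge) hv1
      rw [hab, Sym2.mem_iff] at hv2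
      intro hcc
      rcases hv2 with rfl | rfl
      · exact free_not_used ha (hcc ▸ hused)
      · exact free_not_used hb (hcc ▸ hused)
    · rw [Function.update_of_ne hge, Function.update_of_ne hge']
      exact hprop.2 g g' (hnotD g hg hge) (hnotD g' hg' hge') hadj

/-- Recolouring a coloured edge with a colour free at both its endpoints. -/
lemma properOff_recolor (hprop : IsProperOff G D k c) {g₀ : E} {a b : V} {γ : ℕ}
    (hg₀ : g₀ ∉ D) (hab : G.ends g₀ = s(a, b))
    (ha : γ ∈ free G D k c a) (hb : γ ∈ free G D k c b) :
    IsProperOff G D k (Function.update c g₀ γ) := by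
  constructor
  · intro g hg
    by_cases hge : g = g₀
    · subst hge; rw [Function.update_self]; exact free_Icc ha
    · rw [Function.update_of_ne hge]; exact hprop.1 g hg
  · intro g g' hg hg' hadj
    by_cases hge : g = g₀ <;> by_cases hge' : g' = g₀
    · exact absurd (hge.trans hge'.symm) hadj.1
    · subst hge
      rw [Function.update_self, Function.update_of_ne hge']
      obtain ⟨_, v, hv1, hv2⟩ := hadj
      have hused : c g' ∈ used G D c v := used_of hg' hv2
      rw [hab, Sym2.mem_iff] at hv1
      intro hcc
      rcases hv1 with rfl | rfl
      · exact free_not_used ha (hcc ▸ hused)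
      · exact free_not_used hb (hcc ▸ hused)
    · subst hge'
      rw [Function.update_self, Function.update_of_ne hge]
      obtain ⟨_, v, hv1, hv2⟩ := hadj
      have hused : c g ∈ used G D c v := used_of hg hv1
      rw [hab, Sym2.mem_iff] at hv2
      intro hcc
      rcases hv2 with rfl | rfl
      · exact free_not_used ha (hcc ▸ hused)
      · exact free_not_used hb (hcc ▸ hused)
    · rw [Function.update_of_ne hge, Function.update_of_ne hge']
      exact hprop.2 g g' hg hg' hadj

/-- The fan-rotation lemma: a colour free at `x` and at the last fan vertex lets us
extend the colouring. -/
lemma rotate (G : Multigraph V E) (D : Finset E) (k : ℕ) (e₀ : E) (he₀ : e₀ ∈ D) (x : V) :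
    ∀ n (c : E → ℕ) (f : ℕ → E) (y : ℕ → V), IsProperOff G D k c →
      IsFan G D k c x e₀ f y n →
      ∀ γ, γ ∈ free G D k c x → γ ∈ free G D k c (y (n - 1)) →
      ∃ c', IsProperOff G (D.erase e₀) k c' := by
  intro n
  induction n using Nat.strong_induction_on with
  | _ n IH =>
    intro c f y hprop hfan γ hγx hγy
    rcases eq_or_lt_of_le hfan.hn with h1 | h2
    · -- base case n = 1
      have h1' : n = 1 := h1.symm
      subst h1'
      have hends : G.ends e₀ = s(x, y 0) := hfan.h0 ▸ hfan.hends 0 (by norm_num)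
      exact ⟨_, properOff_color hprop he₀ hends hγx hγy⟩
    · -- step case n ≥ 2
      set m := n - 1 with hm
      have hm0 : 0 < m := by omega
      have hmn : m < n := by omega
      obtain ⟨j, hjm, hαfree⟩ := hfan.hcond m hm0 hmn
      set α := c (f m) with hα
      have hg₀D : f m ∉ D := hfan.hnotD m hm0 hmn
      have hendsm : G.ends (f m) = s(x, y m) := hfan.hends m hmn
      set c' := Function.update c (f m) γ with hc'
      have hprop' : IsProperOff G D k c' := properOff_recolor hprop hg₀D hendsm hγx hγy
      -- α is free at x for c'
      have hαx' : α ∈ free G D k c' x := by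
        rw [mem_free_iff]
        refine ⟨hprop.1 (f m) hg₀D, ?_⟩
        rw [mem_used_iff]
        rintro ⟨g, hg, hxg, hcg⟩
        by_cases hgm : g = f m
        · subst hgm
          rw [hc', Function.update_self] at hcg
          have : α ∈ used G D c x := used_of hg₀D (hfan.x_mem hmn)
          exact free_not_used hγx (hcg ▸ this)
        · rw [hc', Function.update_of_ne hgm] at hcg
          exact hgm (unique_color_edge hprop hg hg₀D hxg (hfan.x_mem hmn) hcg)
      -- α is free at y j for c'
      have hyj_ne_ym : y j ≠ y m := by
        intro hyy
        have h1 : α ∈ used G D c (y m) := used_of hg₀D (hfan.y_mem hmn)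
        exact free_not_used hαfree (hyy ▸ h1)
      have hαyj' : α ∈ free G D k c' (y j) := by
        rw [mem_free_iff]
        refine ⟨hprop.1 (f m) hg₀D, ?_⟩
        rw [mem_used_iff]
        rintro ⟨g, hg, hyg, hcg⟩
        by_cases hgm : g = f m
        · subst hgm
          rw [hendsm, Sym2.mem_iff] at hyg
          rcases hyg with h | h
          · exact hfan.y_ne_x (lt_trans hjm hmn) h
          · exact hyj_ne_ym h
        · rw [hc', Function.update_of_ne hgm] at hcg
          exact free_not_used hαfree (hcg ▸ used_of hg hyg)
      -- the prefix fan is still a fan for c'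
      have hfan' : IsFan G D k c' x e₀ f y (j + 1) := by
        have hjn : j + 1 ≤ n := by omega
        refine ⟨by omega, hfan.h0, fun i hi => hfan.hends i (by omega),
          fun i hi j' hj' => hfan.hinj i (by omega) j' (by omega),
          fun i h0i hi => hfan.hnotD i h0i (by omega), ?_⟩
        intro i h0i hi
        obtain ⟨j', hj'i, hfree⟩ := hfan.hcond i h0i (by omega)
        refine ⟨j', hj'i, ?_⟩
        have hfim : f i ≠ f m := by
          intro h
          have := hfan.hinj i (by omega) m hmn h
          omega
        rw [hc', Function.update_of_ne hfim]
        rw [mem_free_iff]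
        refine ⟨free_Icc hfree, ?_⟩
        rw [mem_used_iff]
        rintro ⟨g, hg, hyg, hcg⟩
        by_cases hgm : g = f m
        · subst hgm
          rw [Function.update_self] at hcg
          have : c (f i) ∈ used G D c x := used_of (hfan.hnotD i h0i (by omega)) (hfan.x_mem (show i < n by omega))
          exact free_not_used hγx (hcg ▸ this)
        · rw [Function.update_of_ne hgm] at hcg
          exact free_not_used hfree (hcg ▸ used_of hg hyg)
      have hj1 : (j + 1) - 1 = j := by omega
      exact IH (j + 1) (by omega) c' f y hprop' hfan' α hαx' (hj1 ▸ hαyj')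

end VizingProof
namespace VizingProof
open Multigraph Classical

variable {V E : Type} [Fintype V] [Fintype E] [DecidableEq V] [DecidableEq E]
variable {G : Multigraph V E} {D : Finset E} {k : ℕ} {c : E → ℕ}

/-- An edge is an α/β-edge. -/
def Ap (G : Multigraph V E) (D : Finset E) (c : E → ℕ) (α β : ℕ) (g : E) : Prop :=
  g ∉ D ∧ (c g = α ∨ c g = β)

/-- The graph on edges: two α/β-edges sharing an endpoint are adjacent. -/
def Hgr (G : Multigraph V E) (D : Finset E) (c : E → ℕ) (α β : ℕ) : SimpleGraph E where
  Adj g h := g ≠ h ∧ Ap G D c α β g ∧ Ap G D c α β h ∧ ∃ v, v ∈ G.ends g ∧ v ∈ G.ends h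
  symm := ⟨by
    rintro g h ⟨h1, h2, h3, v, hv1, hv2⟩
    exact ⟨h1.symm, h3, h2, v, hv2, hv1⟩⟩
  loopless := ⟨fun g hg => hg.1 rfl⟩

/-- Two vertices joined by a Kempe chain. -/
def VConn (G : Multigraph V E) (D : Finset E) (c : E → ℕ) (α β : ℕ) (v w : V) : Prop :=
  ∃ g h, Ap G D c α β g ∧ v ∈ G.ends g ∧ Ap G D c α β h ∧ w ∈ G.ends h ∧
    (Hgr G D c α β).Reachable g h

noncomputable def swapc (c : E → ℕ) (α β : ℕ) (S : Set E) (g : E) : ℕ :=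
  if g ∈ S then (if c g = α then β else α) else c g

lemma swap_proper (hprop : IsProperOff G D k c) {α β : ℕ}
    (hα : α ∈ Finset.Icc 1 k) (hβ : β ∈ Finset.Icc 1 k) (hαβ : α ≠ β) {S : Set E}
    (hS : ∀ g ∈ S, Ap G D c α β g)
    (hclosed : ∀ g ∈ S, ∀ h, Ap G D c α β h → (∃ v, v ∈ G.ends g ∧ v ∈ G.ends h) → h ∈ S) :
    IsProperOff G D k (swapc c α β S) := by
  constructor
  · intro g hg
    unfold swapc
    split
    · split <;> assumption
    · exact hprop.1 g hg
  · intro g g' hg hg' hadj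
    have hbase := hprop.2 g g' hg hg' hadj
    obtain ⟨hne, v, hv1, hv2⟩ := hadj
    unfold swapc
    by_cases h1 : g ∈ S <;> by_cases h2 : g' ∈ S
    · rw [if_pos h1, if_pos h2]
      rcases (hS g h1).2 with hc1 | hc1 <;> rcases (hS g' h2).2 with hc2 | hc2 <;>
        simp [hc1, hc2, hαβ, Ne.symm hαβ] <;> exact hbase (hc1.trans hc2.symm)
    · rw [if_pos h1, if_neg h2]
      have hnAp : ¬ Ap G D c α β g' := fun h => h2 (hclosed g h1 g' h ⟨v, hv1, hv2⟩)
      have ha : c g' ≠ α := fun h => hnAp ⟨hg', Or.inl h⟩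
      have hb : c g' ≠ β := fun h => hnAp ⟨hg', Or.inr h⟩
      split
      · exact fun h => hb h.symm
      · exact fun h => ha h.symm
    · rw [if_neg h1, if_pos h2]
      have hnAp : ¬ Ap G D c α β g := fun h => h1 (hclosed g' h2 g h ⟨v, hv2, hv1⟩)
      have ha : c g ≠ α := fun h => hnAp ⟨hg, Or.inl h⟩
      have hb : c g ≠ β := fun h => hnAp ⟨hg, Or.inr h⟩
      split
      · exact hb
      · exact ha
    · rw [if_neg h1, if_neg h2]; exact hbase

/-- Every vertex meets at most two α/β-edges. -/
lemma degA_le_two (hprop : IsProperOff G D k c) (α β : ℕ) (v : V) :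
    ((Finset.univ : Finset E).filter (fun g => Ap G D c α β g ∧ v ∈ G.ends g)).card ≤ 2 := by
  have h2 : ((Finset.univ : Finset Bool)).card = 2 := by simp
  rw [← h2]
  apply Finset.card_le_card_of_injOn (fun g => decide (c g = α))
  · intro g _; exact Finset.mem_univ _
  · intro g hg g' hg' heq
    simp only [Finset.coe_filter, Set.mem_setOf_eq] at hg hg'
    have hiff : (c g = α) ↔ (c g' = α) := decide_eq_decide.mp heq
    have hcc : c g = c g' := by
      by_cases h : c g = α
      · rw [h, (hiff.mp h)]
      · have h' : ¬ c g' = α := fun hh => h (hiff.mpr hh)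
        have hb : c g = β := (hg.2.1.2).resolve_left h
        have hb' : c g' = β := (hg'.2.1.2).resolve_left h'
        rw [hb, hb']
    exact unique_color_edge hprop hg.2.1.1 hg'.2.1.1 hg.2.2 hg'.2.2 hcc

/-- If one of the two colours is unused at `v`, at most one α/β-edge meets `v`. -/
lemma degA_le_one (hprop : IsProperOff G D k c) {α β : ℕ} {v : V}
    (h : α ∉ used G D c v ∨ β ∉ used G D c v) :
    ((Finset.univ : Finset E).filter (fun g => Ap G D c α β g ∧ v ∈ G.ends g)).card ≤ 1 := by
  rw [Finset.card_le_one]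
  intro g hg g' hg'
  simp only [Finset.mem_filter, Finset.mem_univ, true_and] at hg hg'
  have hcol : ∀ h' : E, Ap G D c α β h' → v ∈ G.ends h' → c h' = c g := by
    intro h' hAp hv
    rcases h with hmiss | hmiss
    · have h1 : c h' = β := hAp.2.resolve_left (fun hh => hmiss (hh ▸ used_of hAp.1 hv))
      have h2 : c g = β := hg.1.2.resolve_left (fun hh => hmiss (hh ▸ used_of hg.1.1 hg.2))
      rw [h1, h2]
    · have h1 : c h' = α := hAp.2.resolve_right (fun hh => hmiss (hh ▸ used_of hAp.1 hv))
      have h2 : c g = α := hg.1.2.resolve_right (fun hh => hmiss (hh ▸ used_of hg.1.1 hg.2))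
      rw [h1, h2]
  exact unique_color_edge hprop hg.1.1 hg'.1.1 hg.2 hg'.2 (hcol g' hg'.1 hg'.2).symm

end VizingProof
namespace VizingProof
open Multigraph Classical

variable {V E : Type} [Fintype V] [Fintype E] [DecidableEq V] [DecidableEq E]
variable {G : Multigraph V E} {D : Finset E} {k : ℕ} {c : E → ℕ}

/-- Three distinct vertices of α/β-degree ≤ 1 cannot all lie in the same Kempe chain. -/
lemma three_endpoint (hprop : IsProperOff G D k c) {α β : ℕ} {x z z' : V}
    (hxz : x ≠ z) (hxz' : x ≠ z') (hzz' : z ≠ z')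
    (hdx : ((Finset.univ : Finset E).filter (fun g => Ap G D c α β g ∧ x ∈ G.ends g)).card ≤ 1)
    (hdz : ((Finset.univ : Finset E).filter (fun g => Ap G D c α β g ∧ z ∈ G.ends g)).card ≤ 1)
    (hdz' : ((Finset.univ : Finset E).filter (fun g => Ap G D c α β g ∧ z' ∈ G.ends g)).card ≤ 1)
    (hc1 : VConn G D c α β x z) (hc2 : VConn G D c α β x z') : False := by
  classical
  set H := Hgr G D c α β with hH
  obtain ⟨g1, h1, hg1A, hxg1, hh1A, hzh1, hr1⟩ := hc1
  obtain ⟨g2, h2, hg2A, hxg2, hh2A, hzh2, hr2⟩ := hc2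
  set gx := g1 with hgx
  have hxuniq : ∀ g : E, Ap G D c α β g → x ∈ G.ends g → g = gx := by
    intro g hA hx
    have hmem : ∀ g' : E, Ap G D c α β g' → x ∈ G.ends g' →
        g' ∈ (Finset.univ : Finset E).filter (fun g => Ap G D c α β g ∧ x ∈ G.ends g) := by
      intro g' hA' hx'; simp [hA', hx']
    exact Finset.card_le_one.mp hdx g (hmem g hA hx) gx (hmem gx hg1A hxg1)
  have hg2gx : g2 = gx := hxuniq g2 hg2A hxg2
  -- the component of gx
  set C := (Finset.univ : Finset E).filter (fun g => Ap G D c α β g ∧ H.Reachable gx g) with hC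
  set VC := (Finset.univ : Finset V).filter (fun v => ∃ g ∈ C, v ∈ G.ends g) with hVC
  have hCA : ∀ g ∈ C, Ap G D c α β g := by
    intro g hg; rw [hC, Finset.mem_filter] at hg; exact hg.2.1
  have hCreach : ∀ g ∈ C, H.Reachable gx g := by
    intro g hg; rw [hC, Finset.mem_filter] at hg; exact hg.2.2
  have hmemC : ∀ g : E, Ap G D c α β g → H.Reachable gx g → g ∈ C := by
    intro g hA hr; rw [hC, Finset.mem_filter]; exact ⟨Finset.mem_univ _, hA, hr⟩
  have hmemVC : ∀ v : V, ∀ g ∈ C, v ∈ G.ends g → v ∈ VC := by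
    intro v g hg hv; rw [hVC, Finset.mem_filter]; exact ⟨Finset.mem_univ _, g, hg, hv⟩
  have hgxC : gx ∈ C := hmemC gx hg1A (SimpleGraph.Reachable.refl gx)
  have hxVC : x ∈ VC := hmemVC x gx hgxC hxg1
  have hh1C : h1 ∈ C := hmemC h1 hh1A hr1
  have hzVC : z ∈ VC := hmemVC z h1 hh1C hzh1
  have hh2C : h2 ∈ C := hmemC h2 hh2A (hg2gx ▸ hr2)
  have hz'VC : z' ∈ VC := hmemVC z' h2 hh2C hzh2
  -- handshake
  have hhand : ∑ v ∈ VC, (C.filter (fun g => v ∈ G.ends g)).card = 2 * C.card := by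
    have hper : ∀ g ∈ C, (VC.filter (fun v => v ∈ G.ends g)).card = 2 := by
      intro g hg
      have hm : (G.ends g).out.1 ∈ G.ends g := Sym2.out_fst_mem _
      obtain ⟨b, hab⟩ := Sym2.mem_iff_exists.mp hm
      set a := (G.ends g).out.1
      have hne : a ≠ b := ends_ne hab
      have haVC : a ∈ VC := hmemVC a g hg hm
      have hbVC : b ∈ VC := hmemVC b g hg (by rw [hab]; exact Sym2.mem_mk_right a b)
      have : VC.filter (fun v => v ∈ G.ends g) = {a, b} := by
        ext v
        simp only [Finset.mem_filter, Finset.mem_insert, Finset.mem_singleton]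
        constructor
        · rintro ⟨_, hv⟩
          rw [hab, Sym2.mem_iff] at hv
          exact hv
        · rintro (rfl | rfl)
          · exact ⟨haVC, hm⟩
          · exact ⟨hbVC, by rw [hab]; exact Sym2.mem_mk_right _ _⟩
      rw [this, Finset.card_insert_of_notMem (by simp [hne]), Finset.card_singleton]
    calc ∑ v ∈ VC, (C.filter (fun g => v ∈ G.ends g)).card
        = ∑ v ∈ VC, ∑ g ∈ C, (if v ∈ G.ends g then 1 else 0) := by
          apply Finset.sum_congr rfl; intro v _; rw [Finset.card_filter]
      _ = ∑ g ∈ C, ∑ v ∈ VC, (if v ∈ G.ends g then 1 else 0) := Finset.sum_comm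
      _ = ∑ g ∈ C, (VC.filter (fun v => v ∈ G.ends g)).card := by
          apply Finset.sum_congr rfl; intro g _; rw [Finset.card_filter]
      _ = ∑ g ∈ C, 2 := Finset.sum_congr rfl hper
      _ = 2 * C.card := by rw [Finset.sum_const, smul_eq_mul, mul_comm]
  -- injection from VC \ {x} into C
  have hVCcard : VC.card ≤ C.card + 1 := by
    have hkey : ∀ v ∈ VC, ∃ g, g ∈ C ∧ v ∈ G.ends g ∧
        ∀ g' ∈ C, v ∈ G.ends g' → H.dist gx g ≤ H.dist gx g' := by
      intro v hv
      rw [hVC, Finset.mem_filter] at hv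
      obtain ⟨_, g0, hg0, hvg0⟩ := hv
      have hne : (C.filter (fun g => v ∈ G.ends g)).Nonempty :=
        ⟨g0, Finset.mem_filter.mpr ⟨hg0, hvg0⟩⟩
      obtain ⟨g, hg, hmin⟩ := Finset.exists_min_image _ (fun g => H.dist gx g) hne
      rw [Finset.mem_filter] at hg
      exact ⟨g, hg.1, hg.2, fun g' hg' hv' => hmin g' (Finset.mem_filter.mpr ⟨hg', hv'⟩)⟩
    set φ : V → E := fun v =>
      if hv : ∃ g, g ∈ C ∧ v ∈ G.ends g ∧
          ∀ g' ∈ C, v ∈ G.ends g' → H.dist gx g ≤ H.dist gx g' then hv.choose else gx with hφ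
    have hφspec : ∀ v ∈ VC, φ v ∈ C ∧ v ∈ G.ends (φ v) ∧
        ∀ g' ∈ C, v ∈ G.ends g' → H.dist gx (φ v) ≤ H.dist gx g' := by
      intro v hv
      have h := hkey v hv
      rw [hφ]
      simp only [dif_pos h]
      exact h.choose_spec
    have hinj : (VC.erase x).card ≤ C.card := by
      apply Finset.card_le_card_of_injOn φ
      · intro v hv
        exact (hφspec v (Finset.mem_of_mem_erase hv)).1
      · intro v hv v' hv' heq
        by_contra hvv'
        simp only [Finset.coe_erase, Set.mem_diff, Finset.mem_coe, Set.mem_singleton_iff] at hv hv'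
        obtain ⟨hvVC, hvx⟩ := hv
        obtain ⟨hv'VC, hv'x⟩ := hv'
        obtain ⟨hgC, hvg, hmin⟩ := hφspec v hvVC
        obtain ⟨hg'C, hv'g, hmin'⟩ := hφspec v' hv'VC
        set g := φ v with hgdef
        rw [← heq] at hv'g hmin' hg'C
        -- g contains both v and v', so ends g = s(v, v')
        obtain ⟨w, hw⟩ := Sym2.mem_iff_exists.mp hvg
        have hv'w : v' = w := by
          have := hv'g
          rw [hw, Sym2.mem_iff] at this
          rcases this with h | h
          · exact absurd h.symm hvv'
          · exact h
        subst hv'w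
        have hends : G.ends g = s(v, v') := hw
        have hreach : H.Reachable gx g := hCreach g hgC
        by_cases hggx : g = gx
        · rw [hggx] at hends
          have : x ∈ G.ends gx := hxg1
          rw [hends, Sym2.mem_iff] at this
          rcases this with h | h
          · exact hvx h.symm
          · exact hv'x h.symm
        · have hdpos : 0 < H.dist gx g := by
            rcases Nat.eq_zero_or_pos (H.dist gx g) with h0 | h
            · rcases SimpleGraph.dist_eq_zero_iff_eq_or_not_reachable.mp h0 with h | h
              · exact absurd h.symm hggx
              · exact absurd hreach h
            · exact h
          obtain ⟨p, hp⟩ := hreach.exists_walk_length_eq_dist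
          obtain ⟨gmid, hadj, q, hq⟩ := SimpleGraph.Walk.exists_eq_cons_of_ne hggx p.reverse
          · have hqlen : q.length + 1 = H.dist gx g := by
              have : p.reverse.length = q.length + 1 := by rw [hq]; simp
              rw [SimpleGraph.Walk.length_reverse, hp] at this
              omega
            have hdmid : H.dist gx gmid < H.dist gx g := by
              have h1 : H.dist gx gmid ≤ q.reverse.length := SimpleGraph.dist_le q.reverse
              rw [SimpleGraph.Walk.length_reverse] at h1
              omega
            have hadj' : g ≠ gmid ∧ Ap G D c α β g ∧ Ap G D c α β gmid ∧
                ∃ v, v ∈ G.ends g ∧ v ∈ G.ends gmid := hadj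
            obtain ⟨hne', hApg, hApmid, u, hu1, hu2⟩ := hadj'
            have hmidC : gmid ∈ C := hmemC gmid hApmid ⟨q.reverse⟩
            rw [hends, Sym2.mem_iff] at hu1
            rcases hu1 with rfl | rfl
            · exact absurd (hmin gmid hmidC hu2) (by omega)
            · exact absurd (hmin' gmid hmidC hu2) (by omega)
    have : VC.card ≤ (VC.erase x).card + 1 := by
      rw [Finset.card_erase_of_mem hxVC]
      omega
    omega
  -- final counting
  set T : Finset V := {x, z, z'} with hT
  have hTsub : T ⊆ VC := by
    intro v hv
    rw [hT] at hv
    simp only [Finset.mem_insert, Finset.mem_singleton] at hv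
    rcases hv with rfl | rfl | rfl <;> assumption
  have hTcard : T.card = 3 := by
    rw [hT, Finset.card_insert_of_notMem (by simp [hxz, hxz']),
      Finset.card_insert_of_notMem (by simp [hzz']), Finset.card_singleton]
  have hsplit : ∑ v ∈ VC \ T, (C.filter (fun g => v ∈ G.ends g)).card
      + ∑ v ∈ T, (C.filter (fun g => v ∈ G.ends g)).card = 2 * C.card := by
    rw [Finset.sum_sdiff hTsub]; exact hhand
  have hdegC : ∀ v : V,
      (C.filter (fun g => v ∈ G.ends g)).card ≤
        ((Finset.univ : Finset E).filter (fun g => Ap G D c α β g ∧ v ∈ G.ends g)).card := by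
    intro v
    apply Finset.card_le_card
    intro g hg
    rw [Finset.mem_filter] at hg ⊢
    exact ⟨Finset.mem_univ _, hCA g hg.1, hg.2⟩
  have hrest : ∑ v ∈ VC \ T, (C.filter (fun g => v ∈ G.ends g)).card ≤ 2 * (VC.card - 3) := by
    calc ∑ v ∈ VC \ T, (C.filter (fun g => v ∈ G.ends g)).card
        ≤ ∑ _v ∈ VC \ T, 2 := by
          apply Finset.sum_le_sum
          intro v _
          exact le_trans (hdegC v) (degA_le_two hprop α β v)
      _ = 2 * (VC \ T).card := by rw [Finset.sum_const, smul_eq_mul, mul_comm]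
      _ = 2 * (VC.card - 3) := by rw [Finset.card_sdiff_of_subset hTsub, hTcard]
  have hTsum : ∑ v ∈ T, (C.filter (fun g => v ∈ G.ends g)).card ≤ 3 := by
    have h1 : ∑ v ∈ T, (C.filter (fun g => v ∈ G.ends g)).card
        = (C.filter (fun g => x ∈ G.ends g)).card + ((C.filter (fun g => z ∈ G.ends g)).card
          + (C.filter (fun g => z' ∈ G.ends g)).card) := by
      rw [hT, Finset.sum_insert (by simp [hxz, hxz']), Finset.sum_insert (by simp [hzz']),
        Finset.sum_singleton]
    rw [h1]
    have e1 := le_trans (hdegC x) hdx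
    have e2 := le_trans (hdegC z) hdz
    have e3 := le_trans (hdegC z') hdz'
    omega
  have hVC3 : 3 ≤ VC.card := hTcard ▸ Finset.card_le_card hTsub
  omega

end VizingProof
namespace VizingProof
open Multigraph Classical

variable {V E : Type} [Fintype V] [Fintype E] [DecidableEq V] [DecidableEq E]
variable {G : Multigraph V E} {D : Finset E} {k : ℕ} {c : E → ℕ}

lemma no_common {e₀ : E} {x : V} (he₀ : e₀ ∈ D)
    (hno : ¬ ∃ c', IsProperOff G (D.erase e₀) k c')
    {c' : E → ℕ} {f : ℕ → E} {y : ℕ → V} {m : ℕ}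
    (hprop' : IsProperOff G D k c') (hfan' : IsFan G D k c' x e₀ f y m)
    {t : ℕ} (ht : t < m) {γ : ℕ}
    (h1 : γ ∈ free G D k c' x) (h2 : γ ∈ free G D k c' (y t)) : False := by
  apply hno
  refine rotate G D k e₀ he₀ x (t + 1) c' f y hprop' (hfan'.prefix (by omega) (by omega)) γ h1 ?_
  simpa using h2

lemma mem_used_of_not_free {v : V} {γ : ℕ} (hIcc : γ ∈ Finset.Icc 1 k)
    (h : γ ∉ free G D k c v) : γ ∈ used G D c v := by
  by_contra h'
  exact h (mem_free_iff.mpr ⟨hIcc, h'⟩)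

/-- The Kempe-chain lemma: free sets of distinct fan vertices are disjoint. -/
lemma kempe (hprop : IsProperOff G D k c) {e₀ : E} {x : V} (he₀ : e₀ ∈ D)
    (hno : ¬ ∃ c', IsProperOff G (D.erase e₀) k c')
    {f : ℕ → E} {y : ℕ → V} {n : ℕ} (hfan : IsFan G D k c x e₀ f y n)
    {β : ℕ} (hβx : β ∈ free G D k c x)
    {i j : ℕ} (hi : i < n) (hj : j < n) (hyij : y i ≠ y j)
    {α : ℕ} (hαi : α ∈ free G D k c (y i)) (hαj : α ∈ free G D k c (y j)) : False := by
  classical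
  have hαIcc : α ∈ Finset.Icc 1 k := free_Icc hαi
  have hβIcc : β ∈ Finset.Icc 1 k := free_Icc hβx
  have hβfree : ∀ t, t < n → β ∉ free G D k c (y t) := by
    intro t ht h
    exact no_common he₀ hno hprop hfan ht hβx h
  have hαnx : α ∉ free G D k c x := by
    intro h
    exact no_common he₀ hno hprop hfan hi h hαi
  have hαβ : α ≠ β := fun h => hαnx (h ▸ hβx)
  have hαxused : α ∈ used G D c x := mem_used_of_not_free hαIcc hαnx
  have hβnusedx : β ∉ used G D c x := free_not_used hβx
  have hdx : ((Finset.univ : Finset E).filter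
      (fun g => Ap G D c α β g ∧ x ∈ G.ends g)).card ≤ 1 :=
    degA_le_one hprop (Or.inr hβnusedx)
  have hdy : ∀ t, t < n → α ∈ free G D k c (y t) →
      ((Finset.univ : Finset E).filter
        (fun g => Ap G D c α β g ∧ (y t) ∈ G.ends g)).card ≤ 1 := by
    intro t _ h
    exact degA_le_one hprop (Or.inl (free_not_used h))
  -- a fan vertex with α free, not chain-connected to x, exists
  have hex : ∃ t, t < n ∧ α ∈ free G D k c (y t) ∧ ¬ VConn G D c α β x (y t) := by
    by_cases hci : VConn G D c α β x (y i)
    · by_cases hcj : VConn G D c α β x (y j)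
      · exact absurd (three_endpoint hprop (hfan.y_ne_x hi).symm (hfan.y_ne_x hj).symm hyij
          hdx (hdy i hi hαi) (hdy j hj hαj) hci hcj) (fun h => h)
      · exact ⟨j, hj, hαj, hcj⟩
    · exact ⟨i, hi, hαi, hci⟩
  set t₀ := Nat.find hex with ht₀
  obtain ⟨ht₀n, hαw, hnconn⟩ := Nat.find_spec hex
  set w := y t₀ with hw
  -- the Kempe chain through w
  set S : Set E := {g | Ap G D c α β g ∧
    ∃ h, Ap G D c α β h ∧ w ∈ G.ends h ∧ (Hgr G D c α β).Reachable h g} with hS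
  have hSA : ∀ g ∈ S, Ap G D c α β g := fun g hg => hg.1
  have hclosed : ∀ g ∈ S, ∀ h, Ap G D c α β h →
      (∃ v, v ∈ G.ends g ∧ v ∈ G.ends h) → h ∈ S := by
    rintro g ⟨hApg, h₀, hAph₀, hwh₀, hr⟩ h hAph ⟨v, hv1, hv2⟩
    by_cases hgh : g = h
    · exact hgh ▸ ⟨hApg, h₀, hAph₀, hwh₀, hr⟩
    · exact ⟨hAph, h₀, hAph₀, hwh₀, hr.trans ⟨SimpleGraph.Walk.cons
        (And.intro hgh ⟨hApg, hAph, v, hv1, hv2⟩ : (Hgr G D c α β).Adj g h) SimpleGraph.Walk.nil⟩⟩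
  set cs := swapc c α β S with hcs
  have hcs_proper : IsProperOff G D k cs := swap_proper hprop hαIcc hβIcc hαβ hSA hclosed
  have hxS : ∀ g : E, x ∈ G.ends g → g ∉ S := by
    rintro g hxg ⟨hApg, h₀, hAph₀, hwh₀, hr⟩
    exact hnconn ⟨g, h₀, hApg, hxg, hAph₀, hwh₀, hr.symm⟩
  have hcs_at_x : ∀ g : E, x ∈ G.ends g → cs g = c g := by
    intro g hxg
    rw [hcs, swapc, if_neg (hxS g hxg)]
  have hβx' : β ∈ free G D k cs x := by
    rw [mem_free_iff]
    refine ⟨hβIcc, ?_⟩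
    rw [mem_used_iff]
    rintro ⟨g, hg, hxg, hcg⟩
    rw [hcs_at_x g hxg] at hcg
    exact hβnusedx (hcg ▸ used_of hg hxg)
  have hβw' : β ∈ free G D k cs w := by
    rw [mem_free_iff]
    refine ⟨hβIcc, ?_⟩
    rw [mem_used_iff]
    rintro ⟨g, hg, hwg, hcg⟩
    by_cases hgS : g ∈ S
    · rw [hcs, swapc, if_pos hgS] at hcg
      by_cases hcgα : c g = α
      · exact free_not_used hαw (hcgα ▸ used_of hg hwg)
      · rw [if_neg hcgα] at hcg
        exact hαβ hcg
    · rw [hcs, swapc, if_neg hgS] at hcg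
      exact hgS ⟨⟨hg, Or.inr hcg⟩, g, ⟨hg, Or.inr hcg⟩, hwg, SimpleGraph.Reachable.refl g⟩
  -- the prefix fan survives the swap
  have hfan' : IsFan G D k cs x e₀ f y (t₀ + 1) := by
    refine ⟨by omega, hfan.h0, fun s hs => hfan.hends s (by omega),
      fun s hs s' hs' => hfan.hinj s (by omega) s' (by omega),
      fun s h0s hs => hfan.hnotD s h0s (by omega), ?_⟩
    intro s h0s hs
    obtain ⟨j', hj's, hfree⟩ := hfan.hcond s h0s (by omega)
    have hsn : s < n := by omega
    have hfsx : x ∈ G.ends (f s) := hfan.x_mem hsn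
    have hfsD : f s ∉ D := hfan.hnotD s h0s hsn
    refine ⟨j', hj's, ?_⟩
    rw [hcs_at_x (f s) hfsx, mem_free_iff]
    refine ⟨free_Icc hfree, ?_⟩
    rw [mem_used_iff]
    rintro ⟨g, hg, hyg, hcg⟩
    by_cases hgS : g ∈ S
    · rw [hcs, swapc, if_pos hgS] at hcg
      by_cases hcgα : c g = α
      · rw [if_pos hcgα] at hcg
        have : c (f s) ∈ used G D c x := used_of hfsD hfsx
        exact hβnusedx (hcg ▸ this)
      · rw [if_neg hcgα] at hcg
        -- c (f s) = α and c g = β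
        have hcfs : c (f s) = α := hcg.symm
        have hcgβ : c g = β := (hSA g hgS).2.resolve_left hcgα
        have hαfreej' : α ∈ free G D k c (y j') := hcfs ▸ hfree
        have hnc : ¬ VConn G D c α β x (y j') := by
          rintro ⟨g₁, h₁, hApg₁, hxg₁, hAph₁, hyh₁, hr₁⟩
          have huniq : h₁ = g := by
            have hcard := degA_le_one hprop (Or.inl (free_not_used hαfreej'))
              (v := y j') (α := α) (β := β)
            have m1 : h₁ ∈ (Finset.univ : Finset E).filter
                (fun g' => Ap G D c α β g' ∧ (y j') ∈ G.ends g') := by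
              simp [hAph₁, hyh₁]
            have m2 : g ∈ (Finset.univ : Finset E).filter
                (fun g' => Ap G D c α β g' ∧ (y j') ∈ G.ends g') := by
              simp only [Finset.mem_filter]
              exact ⟨Finset.mem_univ g, ⟨hg, Or.inr hcgβ⟩, hyg⟩
            exact Finset.card_le_one.mp hcard h₁ m1 g m2
          obtain ⟨hApg, h₀, hAph₀, hwh₀, hr₀⟩ := hgS
          exact hnconn ⟨g₁, h₀, hApg₁, hxg₁, hAph₀, hwh₀, (hr₁.trans (huniq ▸ hr₀.symm))⟩
        have hPj' : j' < n ∧ α ∈ free G D k c (y j') ∧ ¬ VConn G D c α β x (y j') :=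
          ⟨by omega, hαfreej', hnc⟩
        exact Nat.find_min hex (by omega : j' < t₀) hPj'
    · rw [hcs, swapc, if_neg hgS] at hcg
      exact free_not_used hfree (hcg ▸ used_of hg hyg)
  exact no_common he₀ hno hcs_proper hfan' (by omega : t₀ < t₀ + 1) hβx' hβw'

end VizingProof
namespace VizingProof
open Multigraph Classical

variable {V E : Type} [Fintype V] [Fintype E] [DecidableEq V] [DecidableEq E]

/-- The extension lemma: any partial proper colouring can colour one more edge. -/
lemma ext_lemma (G : Multigraph V E) {Δ μ : ℕ}
    (hΔ : ∀ v, G.degree v ≤ Δ) (hμ : ∀ s, Multigraph.multiplicity G s ≤ μ)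
    (D : Finset E) (e₀ : E) (he₀ : e₀ ∈ D) (c : E → ℕ)
    (hprop : IsProperOff G D (Δ + μ) c) :
    ∃ c', IsProperOff G (D.erase e₀) (Δ + μ) c' := by
  classical
  by_contra hno
  set k := Δ + μ with hk
  have hx : (G.ends e₀).out.1 ∈ G.ends e₀ := Sym2.out_fst_mem _
  obtain ⟨y₀, hxy⟩ := Sym2.mem_iff_exists.mp hx
  set x := (G.ends e₀).out.1 with hxdef
  have hfan1 : IsFan G D k c x e₀ (fun _ => e₀) (fun _ => y₀) 1 := by
    refine ⟨le_refl 1, rfl, ?_, ?_, ?_, ?_⟩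
    · intro i hi
      have : i = 0 := by omega
      subst this
      exact hxy
    · intro i hi j hj _; omega
    · intro i h0 h1; omega
    · intro i h0 h1; omega
  have hlen : ∀ m (f : ℕ → E) (y : ℕ → V), IsFan G D k c x e₀ f y m →
      m ≤ Fintype.card E := by
    intro m f y hf
    have h1 : (Finset.range m).card ≤ (Finset.univ : Finset E).card := by
      apply Finset.card_le_card_of_injOn f (fun _ _ => Finset.mem_univ _)
      intro a ha b hb hab
      simp only [Finset.coe_range, Set.mem_Iio] at ha hb
      exact hf.hinj a ha b hb hab
    simpa using h1
  set P : ℕ → Prop := fun m => ∃ f y, IsFan G D k c x e₀ f y m with hP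
  have hP1 : P 1 := ⟨_, _, hfan1⟩
  have hcard1 : 1 ≤ Fintype.card E := Fintype.card_pos_iff.mpr ⟨e₀⟩
  set n := Nat.findGreatest P (Fintype.card E) with hnn
  have hPn : P n := Nat.findGreatest_spec hcard1 hP1
  have hmax : ¬ P (n + 1) := by
    by_cases hle : n + 1 ≤ Fintype.card E
    · exact Nat.findGreatest_is_greatest (by omega) hle
    · rintro ⟨f, y, hf⟩
      exact absurd (hlen _ f y hf) (by omega)
  obtain ⟨f, y, hfan⟩ := hPn
  have hn1 : 1 ≤ n := hfan.hn
  have hxe₀ : x ∈ G.ends e₀ := hx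
  have hfreex : (free G D k c x).Nonempty := by
    rw [← Finset.card_pos]
    have h := card_free_ge_strong hprop hΔ he₀ hxe₀
    rw [← hk] at h
    omega
  obtain ⟨β, hβx⟩ := hfreex
  set Z := (Finset.range n).image y with hZ
  have hfree_disj : ∀ z ∈ Z, ∀ z' ∈ Z, z ≠ z' →
      Disjoint (free G D k c z) (free G D k c z') := by
    intro z hz z' hz' hne
    obtain ⟨i, hi, rfl⟩ := Finset.mem_image.mp hz
    obtain ⟨j, hj, rfl⟩ := Finset.mem_image.mp hz'
    rw [Finset.mem_range] at hi hj
    rw [Finset.disjoint_left]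
    intro α hα hα'
    exact kempe hprop he₀ hno hfan hβx hi hj hne hα hα'
  set U := Z.biUnion (fun z => free G D k c z) with hU
  have hUcard : U.card = ∑ z ∈ Z, (free G D k c z).card := Finset.card_biUnion hfree_disj
  have hy0Z : y 0 ∈ Z := Finset.mem_image.mpr ⟨0, Finset.mem_range.mpr (by omega), rfl⟩
  have hy0e₀ : y 0 ∈ G.ends e₀ := by
    have := hfan.y_mem (show 0 < n by omega)
    rwa [hfan.h0] at this
  set B := μ * Z.card with hB
  have hZpos : 1 ≤ Z.card := Finset.card_pos.mpr ⟨y 0, hy0Z⟩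
  have hlow : B + 1 ≤ ∑ z ∈ Z, (free G D k c z).card := by
    rw [← Finset.add_sum_erase Z _ hy0Z]
    have h1 : μ + 1 ≤ (free G D k c (y 0)).card := card_free_ge_strong hprop hΔ he₀ hy0e₀
    have h2 : (Z.erase (y 0)).card • μ ≤ ∑ z ∈ Z.erase (y 0), (free G D k c z).card :=
      Finset.card_nsmul_le_sum _ _ _ (fun z _ => card_free_ge hprop hΔ z)
    rw [smul_eq_mul, Finset.card_erase_of_mem hy0Z] at h2
    have h3 : (Z.card - 1) * μ + μ = B := by
      rw [hB]
      have hzc : Z.card - 1 + 1 = Z.card := by omega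
      calc (Z.card - 1) * μ + μ = (Z.card - 1 + 1) * μ := by ring
        _ = μ * Z.card := by rw [hzc, mul_comm]
    omega
  -- upper bound: |U| ≤ n - 1
  set ψ : ℕ → E := fun γ =>
    if hγ : ∃ g, g ∉ D ∧ x ∈ G.ends g ∧ c g = γ then hγ.choose else e₀ with hψ
  have hψspec : ∀ γ ∈ U, ψ γ ∉ D ∧ x ∈ G.ends (ψ γ) ∧ c (ψ γ) = γ := by
    intro γ hγU
    obtain ⟨z, hzZ, hγz⟩ := Finset.mem_biUnion.mp hγU
    obtain ⟨i, hi, rfl⟩ := Finset.mem_image.mp hzZ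
    rw [Finset.mem_range] at hi
    have hnfx : γ ∉ free G D k c x := fun h => no_common he₀ hno hprop hfan hi h hγz
    have hused : γ ∈ used G D c x := mem_used_of_not_free (free_Icc hγz) hnfx
    have hexg : ∃ g, g ∉ D ∧ x ∈ G.ends g ∧ c g = γ := mem_used_iff.mp hused
    rw [hψ]
    simp only [dif_pos hexg]
    exact hexg.choose_spec
  have hψfan : ∀ γ ∈ U, ∃ s, 0 < s ∧ s < n ∧ f s = ψ γ := by
    intro γ hγU
    obtain ⟨hψD, hψx, hψc⟩ := hψspec γ hγU
    obtain ⟨z, hzZ, hγz⟩ := Finset.mem_biUnion.mp hγU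
    obtain ⟨i₀, hi₀, rfl⟩ := Finset.mem_image.mp hzZ
    rw [Finset.mem_range] at hi₀
    by_contra hno'
    push_neg at hno'
    have hne0 : ∀ s, s < n → f s ≠ ψ γ := by
      intro s hs
      rcases Nat.eq_zero_or_pos s with rfl | hpos
      · rw [hfan.h0]
        intro h
        exact hψD (h ▸ he₀)
      · exact hno' s hpos hs
    obtain ⟨wγ, hwγ⟩ := Sym2.mem_iff_exists.mp hψx
    apply hmax
    refine ⟨Function.update f n (ψ γ), Function.update y n wγ, ?_⟩
    refine ⟨by omega, ?_, ?_, ?_, ?_, ?_⟩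
    · rw [Function.update_of_ne (by omega : (0:ℕ) ≠ n)]
      exact hfan.h0
    · intro s hs
      rcases Nat.lt_or_ge s n with hsn | hsn
      · rw [Function.update_of_ne (by omega : s ≠ n), Function.update_of_ne (by omega : s ≠ n)]
        exact hfan.hends s hsn
      · have hsn' : s = n := by omega
        subst hsn'
        rw [Function.update_self, Function.update_self]
        exact hwγ
    · intro s hs s' hs' heq
      rcases Nat.lt_or_ge s n with h1 | h1 <;> rcases Nat.lt_or_ge s' n with h2 | h2
      · rw [Function.update_of_ne (by omega : s ≠ n),
          Function.update_of_ne (by omega : s' ≠ n)] at heq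
        exact hfan.hinj s h1 s' h2 heq
      · have : s' = n := by omega
        subst this
        rw [Function.update_of_ne (by omega : s ≠ n), Function.update_self] at heq
        exact absurd heq (hne0 s h1)
      · have : s = n := by omega
        subst this
        rw [Function.update_of_ne (by omega : s' ≠ n), Function.update_self] at heq
        exact absurd heq.symm (hne0 s' h2)
      · omega
    · intro s h0s hs
      rcases Nat.lt_or_ge s n with h1 | h1
      · rw [Function.update_of_ne (by omega : s ≠ n)]
        exact hfan.hnotD s h0s h1
      · have : s = n := by omega
        subst this
        rw [Function.update_self]
        exact hψD
    · intro s h0s hs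
      rcases Nat.lt_or_ge s n with h1 | h1
      · obtain ⟨j₀, hj₀, hfr⟩ := hfan.hcond s h0s h1
        refine ⟨j₀, hj₀, ?_⟩
        rw [Function.update_of_ne (by omega : s ≠ n),
          Function.update_of_ne (by omega : j₀ ≠ n)]
        exact hfr
      · have : s = n := by omega
        subst this
        refine ⟨i₀, by omega, ?_⟩
        rw [Function.update_self, Function.update_of_ne (by omega : i₀ ≠ n), hψc]
        exact hγz
  have hup1 : U.card + 1 ≤ n := by
    have hinjU : Set.InjOn ψ U := by
      intro γ hγ δ hδ heq
      have h1 := (hψspec γ hγ).2.2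
      have h2 := (hψspec δ hδ).2.2
      rw [← h1, ← h2, heq]
    have hmaps : ∀ γ ∈ U, ψ γ ∈ (Finset.Ioo 0 n).image f := by
      intro γ hγ
      obtain ⟨s, h0s, hsn, hfs⟩ := hψfan γ hγ
      exact Finset.mem_image.mpr ⟨s, Finset.mem_Ioo.mpr ⟨h0s, hsn⟩, hfs⟩
    have h1 : U.card ≤ ((Finset.Ioo 0 n).image f).card :=
      Finset.card_le_card_of_injOn ψ hmaps hinjU
    have h2 : ((Finset.Ioo 0 n).image f).card ≤ (Finset.Ioo 0 n).card :=
      Finset.card_image_le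
    rw [Nat.card_Ioo] at h2
    omega
  have hup2 : n ≤ B := by
    have hmaps : ∀ i ∈ Finset.range n,
        f i ∈ Z.biUnion (fun z => Finset.univ.filter (fun g => G.ends g = s(x, z))) := by
      intro i hi
      rw [Finset.mem_range] at hi
      refine Finset.mem_biUnion.mpr ⟨y i, Finset.mem_image.mpr ⟨i, Finset.mem_range.mpr hi, rfl⟩, ?_⟩
      simp only [Finset.mem_filter, Finset.mem_univ, true_and]
      exact hfan.hends i hi
    have hinjf : Set.InjOn f (Finset.range n) := by
      intro a ha b hb hab
      simp only [Finset.coe_range, Set.mem_Iio] at ha hb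
      exact hfan.hinj a ha b hb hab
    have h1 : n ≤ (Z.biUnion (fun z => Finset.univ.filter (fun g => G.ends g = s(x, z)))).card := by
      have := Finset.card_le_card_of_injOn f hmaps hinjf
      simpa using this
    have hdisjZ : ∀ z ∈ Z, ∀ z' ∈ Z, z ≠ z' →
        Disjoint (Finset.univ.filter (fun g => G.ends g = s(x, z)))
          (Finset.univ.filter (fun g => G.ends g = s(x, z'))) := by
      intro z _ z' _ hne
      rw [Finset.disjoint_left]
      intro g hg hg'
      simp only [Finset.mem_filter, Finset.mem_univ, true_and] at hg hg'
      exact hne (Sym2.congr_right.mp (hg ▸ hg'))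
    have h2 : (Z.biUnion (fun z => Finset.univ.filter (fun g => G.ends g = s(x, z)))).card
        = ∑ z ∈ Z, (Finset.univ.filter (fun g => G.ends g = s(x, z))).card :=
      Finset.card_biUnion hdisjZ
    have h3 : ∀ z ∈ Z, (Finset.univ.filter (fun g => G.ends g = s(x, z))).card ≤ μ := by
      intro z _
      rw [← multiplicity_eq_card]
      exact hμ _
    have h4 : ∑ z ∈ Z, (Finset.univ.filter (fun g => G.ends g = s(x, z))).card ≤ Z.card • μ :=
      Finset.sum_le_card_nsmul _ _ _ h3
    rw [smul_eq_mul, mul_comm] at h4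
    omega
  omega

end VizingProof

namespace VizingProof
open Multigraph Classical

variable {V E : Type} [Fintype V] [Fintype E] [DecidableEq V] [DecidableEq E]

lemma exists_proper_all (G : Multigraph V E) {Δ μ : ℕ}
    (hΔ : ∀ v, G.degree v ≤ Δ) (hμ : ∀ s, Multigraph.multiplicity G s ≤ μ) :
    ∀ (m : ℕ) (D : Finset E), Dᶜ.card ≤ m → ∃ c, IsProperOff G D (Δ + μ) c := by
  classical
  have htriv : ∀ D : Finset E, Dᶜ = ∅ → ∃ c, IsProperOff G D (Δ + μ) c := by
    intro D hD
    have hDuniv : D = Finset.univ := by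
      rwa [Finset.compl_eq_empty_iff] at hD
    refine ⟨fun _ => 1, ?_, ?_⟩
    · intro e he
      rw [hDuniv] at he
      exact absurd (Finset.mem_univ e) he
    · intro e f he hf _
      rw [hDuniv] at he
      exact absurd (Finset.mem_univ e) he
  intro m
  induction m with
  | zero =>
    intro D hD
    exact htriv D (Finset.card_eq_zero.mp (le_antisymm hD (Nat.zero_le _)))
  | succ m IH =>
    intro D hD
    by_cases hC : Dᶜ = ∅
    · exact htriv D hC
    · obtain ⟨e₀, he₀⟩ := Finset.nonempty_iff_ne_empty.mpr hC
      have he₀D : e₀ ∉ D := Finset.mem_compl.mp he₀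
      have hins : (insert e₀ D)ᶜ.card ≤ m := by
        rw [Finset.compl_insert, Finset.card_erase_of_mem he₀]
        have h1 : 1 ≤ Dᶜ.card := Finset.card_pos.mpr ⟨e₀, he₀⟩
        omega
      obtain ⟨c, hc⟩ := IH (insert e₀ D) hins
      obtain ⟨c', hc'⟩ := ext_lemma G hΔ hμ (insert e₀ D) e₀
        (Finset.mem_insert_self _ _) c hc
      rw [Finset.erase_insert he₀D] at hc'
      exact ⟨c', hc'⟩

end VizingProof


/-- **Vizing–Gupta.** Every multigraph with maximum degree `Δ` and maximum edge
multiplicity `μ` has a proper edge-colouring with colours from `{1, …, Δ + μ}`. -/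
theorem vizing_gupta {V E : Type} [Fintype V] [Fintype E] [DecidableEq V] [DecidableEq E]
    (G : Multigraph V E) (Δ μ : ℕ)
    (hΔ : ∀ v, G.degree v ≤ Δ) (hμ : ∀ s, G.multiplicity s ≤ μ) :
    ∃ c : E → ℕ, (∀ e, c e ∈ Finset.Icc 1 (Δ + μ)) ∧
      ∀ e f, G.EdgeAdj e f → c e ≠ c f := by
  classical
  obtain ⟨c, hc⟩ := VizingProof.exists_proper_all G hΔ hμ (Fintype.card E) ∅ (by simp)
  exact ⟨c, fun e => hc.1 e (Finset.notMem_empty e),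
    fun e f hadj => hc.2 e f (Finset.notMem_empty e) (Finset.notMem_empty f) hadj⟩
end

section
/- Every simple graph G with maximum degree Δ admits a proper edge-colouring using at most Δ + 1 colours. -/
namespace SimpleGraph

variable {V : Type}

/-- Two distinct edges (as unordered pairs) share an endpoint. -/
def EdgeAdj (e f : Sym2 V) : Prop :=
  e ≠ f ∧ ∃ v, v ∈ e ∧ v ∈ f

/-- The distance between edges `e` and `f` is at least `d`: every path between
an endpoint of `e` and an endpoint of `f` has length at least `d`. -/
def EdgeDistGe (G : SimpleGraph V) (e f : Sym2 V) (d : ℕ) : Prop :=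
  ∀ u v, u ∈ e → v ∈ f → ∀ p : G.Walk u v, d ≤ p.length

/-- A matching of `G`: pairwise non-adjacent edges of `G`. -/
def IsMatchingSet (G : SimpleGraph V) (M : Set (Sym2 V)) : Prop :=
  M ⊆ G.edgeSet ∧ ∀ e ∈ M, ∀ f ∈ M, e ≠ f → ¬ EdgeAdj e f

/-- A proper edge-colouring of `G` (off a deleted set `D`) with colours from
`{1, …, k}`. -/
def IsProperEC (G : SimpleGraph V) (D : Set (Sym2 V)) (k : ℕ) (c : Sym2 V → ℕ) : Prop :=
  (∀ e ∈ G.edgeSet, e ∉ D → c e ∈ Finset.Icc 1 k) ∧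
    ∀ e ∈ G.edgeSet, ∀ f ∈ G.edgeSet, e ∉ D → f ∉ D → EdgeAdj e f → c e ≠ c f

end SimpleGraph


open SimpleGraph Finset

set_option linter.unusedSectionVars false
set_option maxHeartbeats 1000000

namespace VizingAux

variable {V : Type} [Fintype V] [DecidableEq V] (G : SimpleGraph V) [DecidableRel G.Adj]

def Free (c : Sym2 V → ℕ) (D : Set (Sym2 V)) (v : V) (b : ℕ) : Prop :=
  ∀ w, G.Adj v w → s(v, w) ∉ D → c s(v, w) ≠ b





lemma exists_pred (K : SimpleGraph V) {b v : V} (h : K.Reachable b v) (hne : v ≠ b) :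
    ∃ u, K.Adj v u ∧ K.dist b u < K.dist b v := by
  obtain ⟨p, hp⟩ := h.exists_walk_length_eq_dist
  cases hpr : p.reverse with
  | nil => exact absurd rfl hne
  | @cons _ u _ h' q =>
    refine ⟨u, h', ?_⟩
    have h1 : K.dist b u ≤ q.length := by simpa using K.dist_le q.reverse
    have h2 : q.length + 1 = K.dist b v := by
      have := congrArg SimpleGraph.Walk.length hpr
      simp only [SimpleGraph.Walk.length_reverse, SimpleGraph.Walk.length_cons] at this
      omega
    omega

lemma reach_card_le (K : SimpleGraph V) [DecidableRel K.Adj] (b : V) :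
    (Finset.univ.filter fun v => K.Reachable b v).card ≤ K.edgeFinset.card + 1 := by
  classical
  set S := Finset.univ.filter fun v => K.Reachable b v with hS
  have hbS : b ∈ S := by simp [hS]
  have key : (S.erase b).card ≤ K.edgeFinset.card := by
    apply Finset.card_le_card_of_injOn
      (fun v => if h : K.Reachable b v ∧ v ≠ b then
        s(v, Classical.choose (exists_pred K h.1 h.2)) else s(b, b))
    · intro v hv
      rw [Finset.mem_coe, Finset.mem_erase, hS, Finset.mem_filter] at hv
      have h : K.Reachable b v ∧ v ≠ b := ⟨hv.2.2, hv.1⟩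
      have hc := Classical.choose_spec (exists_pred K h.1 h.2)
      simp only [dif_pos h]
      rw [Finset.mem_coe, SimpleGraph.mem_edgeFinset, SimpleGraph.mem_edgeSet]
      exact hc.1
    · intro v₁ hv₁ v₂ hv₂ heq
      rw [Finset.coe_erase, Set.mem_diff] at hv₁ hv₂
      simp only [hS, Finset.coe_filter, Set.mem_setOf_eq, Finset.mem_coe, Finset.mem_univ,
        true_and] at hv₁ hv₂
      have h1 : K.Reachable b v₁ ∧ v₁ ≠ b := ⟨hv₁.1, by simpa using hv₁.2⟩
      have h2 : K.Reachable b v₂ ∧ v₂ ≠ b := ⟨hv₂.1, by simpa using hv₂.2⟩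
      have hc1 := Classical.choose_spec (exists_pred K h1.1 h1.2)
      have hc2 := Classical.choose_spec (exists_pred K h2.1 h2.2)
      simp only [dif_pos h1, dif_pos h2, Sym2.eq_iff] at heq
      rcases heq with ⟨h, _⟩ | ⟨ha, hb'⟩
      · exact h
      · exfalso
        rw [hb'] at hc1
        rw [← ha] at hc2
        omega
  have := Finset.card_erase_add_one hbS
  omega


lemma three_leaves (K : SimpleGraph V) [DecidableRel K.Adj] (hdeg : ∀ v, K.degree v ≤ 2)
    {a b d : V} (hab : a ≠ b) (had : a ≠ d) (hbd : b ≠ d)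
    (ha : K.degree a ≤ 1) (hb : K.degree b ≤ 1) (hd : K.degree d ≤ 1)
    (hra : K.Reachable b a) (hrd : K.Reachable b d) : False := by
  classical
  set K' : SimpleGraph V :=
    { Adj := fun u v => K.Adj u v ∧ K.Reachable b u ∧ K.Reachable b v
      symm := by constructor; intro u v h; exact ⟨h.1.symm, h.2.2, h.2.1⟩
      loopless := by constructor; intro u h; exact K.loopless.irrefl u h.1 } with hK'
  have hle : K' ≤ K := fun u v h => h.1
  have hAdj : ∀ u v, K'.Adj u v ↔ (K.Adj u v ∧ K.Reachable b u ∧ K.Reachable b v) := by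
    intro u v; rw [hK']
  -- reachability transfer
  have key : ∀ {u w : V} (p : K.Walk u w), K.Reachable b u → K'.Reachable u w := by
    intro u w p
    induction p with
    | nil => intro _; exact SimpleGraph.Reachable.refl _
    | @cons u' v' w' h p ih =>
      intro hbu
      have hbv : K.Reachable b v' := hbu.trans h.reachable
      exact ((hAdj u' v').mpr ⟨h, hbu, hbv⟩).reachable.trans (ih hbv)
  have htrans : ∀ v, K.Reachable b v → K'.Reachable b v := by
    intro v h
    exact h.elim fun p => key p (SimpleGraph.Reachable.refl b)
  -- degrees
  have hdegle : ∀ v, K'.degree v ≤ K.degree v := by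
    intro v
    apply Finset.card_le_card
    intro w hw
    rw [SimpleGraph.mem_neighborFinset] at hw ⊢
    exact hle hw
  set S := Finset.univ.filter fun v => K.Reachable b v with hS
  have hmemS : ∀ v, v ∈ S ↔ K.Reachable b v := by intro v; simp [hS]
  have haS : a ∈ S := (hmemS a).mpr hra
  have hbS : b ∈ S := (hmemS b).mpr (SimpleGraph.Reachable.refl b)
  have hdS : d ∈ S := (hmemS d).mpr hrd
  have hTsub : ({a, b, d} : Finset V) ⊆ S := by
    intro v hv
    simp only [Finset.mem_insert, Finset.mem_singleton] at hv
    rcases hv with rfl | rfl | rfl <;> assumption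
  have hTcard : ({a, b, d} : Finset V).card = 3 := by
    rw [Finset.card_insert_of_notMem (by simp [hab, had]),
      Finset.card_insert_of_notMem (by simp [hbd]), Finset.card_singleton]
  have hS3 : 3 ≤ S.card := hTcard ▸ Finset.card_le_card hTsub
  -- edge lower bound
  have hSfilter : S = Finset.univ.filter fun v => K'.Reachable b v := by
    apply Finset.ext
    intro v
    simp only [hS, Finset.mem_filter, Finset.mem_univ, true_and]
    exact ⟨htrans v, fun h => h.mono hle⟩
  have hlow : S.card ≤ K'.edgeFinset.card + 1 := by
    rw [hSfilter]; exact reach_card_le K' b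
  -- degree zero off S
  have hdeg0 : ∀ v, v ∉ S → K'.degree v = 0 := by
    intro v hv
    rw [hmemS] at hv
    rw [SimpleGraph.degree, Finset.card_eq_zero]
    apply Finset.eq_empty_of_forall_notMem
    intro w hw
    rw [SimpleGraph.mem_neighborFinset, hAdj] at hw
    exact hv hw.2.1
  -- handshake
  have hhs : ∑ v, K'.degree v = 2 * K'.edgeFinset.card :=
    K'.sum_degrees_eq_twice_card_edges
  have hsumS : ∑ v ∈ S, K'.degree v = ∑ v, K'.degree v := by
    apply Finset.sum_subset (Finset.subset_univ S)
    intro v _ hv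
    exact hdeg0 v hv
  -- slack counting
  have hslack1 : ∀ v ∈ ({a, b, d} : Finset V), 1 ≤ 2 - K'.degree v := by
    intro v hv
    simp only [Finset.mem_insert, Finset.mem_singleton] at hv
    have h2 := hdegle v
    rcases hv with rfl | rfl | rfl <;> omega
  have hslacksum : 3 ≤ ∑ v ∈ S, (2 - K'.degree v) := by
    calc (3 : ℕ) = ∑ _v ∈ ({a, b, d} : Finset V), 1 := by rw [Finset.sum_const, hTcard]; ring
    _ ≤ ∑ v ∈ ({a, b, d} : Finset V), (2 - K'.degree v) := Finset.sum_le_sum hslack1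
    _ ≤ ∑ v ∈ S, (2 - K'.degree v) := Finset.sum_le_sum_of_subset hTsub
  have hcompl : ∑ v ∈ S, K'.degree v + ∑ v ∈ S, (2 - K'.degree v) = 2 * S.card := by
    rw [← Finset.sum_add_distrib]
    have : ∀ v ∈ S, K'.degree v + (2 - K'.degree v) = 2 := by
      intro v _
      have h1 := hdegle v
      have h2 := hdeg v
      omega
    rw [Finset.sum_congr rfl this, Finset.sum_const, smul_eq_mul, mul_comm]
  omega







/-- the subgraph of edges coloured `α` or `β`. -/
def Kgraph (c : Sym2 V → ℕ) (D : Set (Sym2 V)) (α β : ℕ) : SimpleGraph V where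
  Adj u v := G.Adj u v ∧ s(u, v) ∉ D ∧ (c s(u, v) = α ∨ c s(u, v) = β)
  symm := by
    constructor
    intro u v h
    refine ⟨h.1.symm, ?_, ?_⟩
    · rw [Sym2.eq_swap]; exact h.2.1
    · rw [Sym2.eq_swap]; exact h.2.2
  loopless := ⟨fun v h => G.loopless.irrefl v h.1⟩

lemma kgraph_adj {c D α β} {u v : V} :
    (Kgraph G c D α β).Adj u v ↔
      (G.Adj u v ∧ s(u, v) ∉ D ∧ (c s(u, v) = α ∨ c s(u, v) = β)) := Iff.rfl

/-- Kempe swap of colours `α`, `β` on the component of `u`. -/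
noncomputable def cSwap (c : Sym2 V → ℕ) (D : Set (Sym2 V)) (α β : ℕ) (u : V) :
    Sym2 V → ℕ := fun e' =>
  @ite _ (e' ∈ (Kgraph G c D α β).edgeSet ∧ ∃ v ∈ e', (Kgraph G c D α β).Reachable u v)
    (Classical.propDecidable _)
    (if c e' = α then β else α) (c e')

lemma reach_of_mem {c D α β} {u : V} {e' : Sym2 V}
    (he : e' ∈ (Kgraph G c D α β).edgeSet)
    (hr : ∃ w ∈ e', (Kgraph G c D α β).Reachable u w)
    {v : V} (hv : v ∈ e') : (Kgraph G c D α β).Reachable u v := by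
  induction e' using Sym2.ind with
  | _ a b =>
    rw [mem_edgeSet] at he
    obtain ⟨w, hw, hwr⟩ := hr
    rw [Sym2.mem_iff] at hv hw
    rcases hv with rfl | rfl <;> rcases hw with rfl | rfl
    · exact hwr
    · exact hwr.trans he.symm.reachable
    · exact hwr.trans he.reachable
    · exact hwr

lemma not_kgraph_colour {c : Sym2 V → ℕ} {D α β} {e' : Sym2 V}
    (he : e' ∈ G.edgeSet) (hD : e' ∉ D)
    (hk : e' ∉ (Kgraph G c D α β).edgeSet) : c e' ≠ α ∧ c e' ≠ β := by
  induction e' using Sym2.ind with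
  | _ a b =>
    rw [mem_edgeSet] at he hk
    rw [kgraph_adj] at hk
    push_neg at hk
    exact hk he hD

lemma cSwap_eq_of_swapped {c : Sym2 V → ℕ} {D α β} {u : V} {e' : Sym2 V}
    (he : e' ∈ (Kgraph G c D α β).edgeSet)
    (hr : ∃ w ∈ e', (Kgraph G c D α β).Reachable u w) :
    cSwap G c D α β u e' = if c e' = α then β else α := by
  rw [cSwap]; rw [if_pos ⟨he, hr⟩]

lemma cSwap_eq_of_not {c : Sym2 V → ℕ} {D α β} {u : V} {e' : Sym2 V}
    (h : ¬(e' ∈ (Kgraph G c D α β).edgeSet ∧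
      ∃ w ∈ e', (Kgraph G c D α β).Reachable u w)) :
    cSwap G c D α β u e' = c e' := by
  rw [cSwap]; rw [if_neg h]

/-- the colours at an unreachable vertex are unchanged by the swap. -/
lemma cSwap_eq_of_unreachable {c : Sym2 V → ℕ} {D α β} {u v : V} {e' : Sym2 V}
    (hv : v ∈ e') (hur : ¬ (Kgraph G c D α β).Reachable u v) :
    cSwap G c D α β u e' = c e' := by
  apply cSwap_eq_of_not
  rintro ⟨he, hr⟩
  exact hur (reach_of_mem G he hr hv)

/-- Kempe swap preserves properness. -/
lemma cSwap_proper {c : Sym2 V → ℕ} {D : Set (Sym2 V)} {k α β : ℕ} {u : V}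
    (hc : IsProperEC G D k c) (hα : α ∈ Finset.Icc 1 k) (hβ : β ∈ Finset.Icc 1 k)
    (hαβ : α ≠ β) : IsProperEC G D k (cSwap G c D α β u) := by
  constructor
  · intro e' he hD
    by_cases h : e' ∈ (Kgraph G c D α β).edgeSet ∧
        ∃ w ∈ e', (Kgraph G c D α β).Reachable u w
    · rw [cSwap_eq_of_swapped G h.1 h.2]
      split <;> assumption
    · rw [cSwap_eq_of_not G h]
      exact hc.1 e' he hD
  · intro e₁ he₁ e₂ he₂ hD₁ hD₂ hadj
    obtain ⟨hne, v, hv₁, hv₂⟩ := hadj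
    have hcol := hc.2 e₁ he₁ e₂ he₂ hD₁ hD₂ ⟨hne, v, hv₁, hv₂⟩
    by_cases h1 : e₁ ∈ (Kgraph G c D α β).edgeSet ∧
        ∃ w ∈ e₁, (Kgraph G c D α β).Reachable u w
    · by_cases h2 : e₂ ∈ (Kgraph G c D α β).edgeSet ∧
          ∃ w ∈ e₂, (Kgraph G c D α β).Reachable u w
      · -- both swapped
        rw [cSwap_eq_of_swapped G h1.1 h1.2, cSwap_eq_of_swapped G h2.1 h2.2]
        have hm1 : c e₁ = α ∨ c e₁ = β := by
          have := h1.1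
          induction e₁ using Sym2.ind with
          | _ a b => rw [mem_edgeSet, kgraph_adj] at this; exact this.2.2
        have hm2 : c e₂ = α ∨ c e₂ = β := by
          have := h2.1
          induction e₂ using Sym2.ind with
          | _ a b => rw [mem_edgeSet, kgraph_adj] at this; exact this.2.2
        rcases hm1 with hm1 | hm1 <;> rcases hm2 with hm2 | hm2 <;>
          simp [hm1, hm2, hαβ, Ne.symm hαβ] at hcol ⊢
      · -- e₂ not swapped: it cannot be a K-edge
        have h2' : e₂ ∉ (Kgraph G c D α β).edgeSet := by
          intro hk
          exact h2 ⟨hk, v, hv₂, reach_of_mem G h1.1 h1.2 hv₁⟩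
        have hne2 := not_kgraph_colour G he₂ hD₂ h2'
        rw [cSwap_eq_of_swapped G h1.1 h1.2, cSwap_eq_of_not G h2]
        split
        · exact fun h => hne2.2 h.symm
        · exact fun h => hne2.1 h.symm
    · by_cases h2 : e₂ ∈ (Kgraph G c D α β).edgeSet ∧
          ∃ w ∈ e₂, (Kgraph G c D α β).Reachable u w
      · have h1' : e₁ ∉ (Kgraph G c D α β).edgeSet := by
          intro hk
          exact h1 ⟨hk, v, hv₁, reach_of_mem G h2.1 h2.2 hv₂⟩
        have hne1 := not_kgraph_colour G he₁ hD₁ h1'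
        rw [cSwap_eq_of_swapped G h2.1 h2.2, cSwap_eq_of_not G h1]
        split
        · exact hne1.2
        · exact hne1.1
      · rw [cSwap_eq_of_not G h1, cSwap_eq_of_not G h2]
        exact hcol

/-- after the swap, `α` is free at `u` if `β` was. -/
lemma cSwap_free {c : Sym2 V → ℕ} {D : Set (Sym2 V)} {α β : ℕ} {u : V}
    (hβ : Free G c D u β) (hαβ : α ≠ β) : Free G (cSwap G c D α β u) D u α := by
  intro w hw hD
  by_cases h : s(u, w) ∈ (Kgraph G c D α β).edgeSet ∧
      ∃ w' ∈ s(u, w), (Kgraph G c D α β).Reachable u w'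
  · rw [cSwap_eq_of_swapped G h.1 h.2]
    have hm : c s(u, w) = α ∨ c s(u, w) = β := by
      have := h.1
      rw [mem_edgeSet, kgraph_adj] at this
      exact this.2.2
    have hnb := hβ w hw hD
    rcases hm with hm | hm
    · rw [if_pos hm]; exact Ne.symm hαβ
    · exact absurd hm hnb
  · rw [cSwap_eq_of_not G h]
    intro hcα
    apply h
    constructor
    · rw [mem_edgeSet, kgraph_adj]
      exact ⟨hw, hD, Or.inl hcα⟩
    · exact ⟨u, Sym2.mem_mk_left u w, SimpleGraph.Reachable.refl u⟩

/-- free colours at unreachable vertices are preserved. -/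
lemma cSwap_free_of_unreachable {c : Sym2 V → ℕ} {D : Set (Sym2 V)} {α β b : ℕ} {u v : V}
    (hb : Free G c D v b) (hur : ¬ (Kgraph G c D α β).Reachable u v) :
    Free G (cSwap G c D α β u) D v b := by
  intro w hw hD
  rw [cSwap_eq_of_unreachable G (Sym2.mem_mk_left v w) hur]
  exact hb w hw hD



/-- data of a (Vizing) fan at `x` with uncoloured edge `s(x,y)`. -/
structure FanData (G : SimpleGraph V) (c : Sym2 V → ℕ) (D : Set (Sym2 V)) (x y : V)
    (f : ℕ → V) (n : ℕ) : Prop where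
  hxy : G.Adj x y
  heD : s(x, y) ∈ D
  hf0 : f 0 = y
  hadj : ∀ j, j ≤ n → G.Adj x (f j)
  hinj : ∀ j, j ≤ n → ∀ j', j' ≤ n → f j = f j' → j = j'
  hfan : ∀ j, j < n → s(x, f (j+1)) ∉ D ∧ Free G c D (f j) (c s(x, f (j+1)))

/-- the fan-rotated colouring: edge `s(x, f m)` (for `m < j`) gets the colour of
`s(x, f (m+1))`; the edge `s(x, f j)` becomes uncoloured. -/
noncomputable def cFan (c : Sym2 V → ℕ) (x : V) (f : ℕ → V) (j : ℕ) : Sym2 V → ℕ :=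
  fun e' =>
    @dite _ (∃ m, m < j ∧ e' = s(x, f m)) (Classical.propDecidable _)
      (fun h => c s(x, f (@Nat.find _ (Classical.decPred _) h + 1))) (fun _ => c e')

def DFan (D : Set (Sym2 V)) (x y : V) (f : ℕ → V) (j : ℕ) : Set (Sym2 V) :=
  insert s(x, f j) (D \ {s(x, y)})

section FanLemmas

variable {G} {c : Sym2 V → ℕ} {D : Set (Sym2 V)} {x y : V} {f : ℕ → V} {n : ℕ} {Δ : ℕ}

lemma FanData.ne_x (hF : FanData G c D x y f n) {j : ℕ} (hj : j ≤ n) : f j ≠ x :=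
  (hF.hadj j hj).ne'

lemma FanData.fanD (hF : FanData G c D x y f n) {j : ℕ} (h1 : 1 ≤ j) (hj : j ≤ n) :
    s(x, f j) ∉ D := by
  obtain ⟨j', rfl⟩ : ∃ j', j = j' + 1 := ⟨j - 1, by omega⟩
  exact (hF.hfan j' (by omega)).1

lemma FanData.edge_mem (hF : FanData G c D x y f n) {j : ℕ} (hj : j ≤ n) :
    s(x, f j) ∈ G.edgeSet := by rw [mem_edgeSet]; exact hF.hadj j hj

/-- fan edges are pairwise distinct. -/
lemma FanData.edge_inj (hF : FanData G c D x y f n) {j j' : ℕ} (hj : j ≤ n) (hj' : j' ≤ n)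
    (h : s(x, f j) = s(x, f j')) : j = j' := by
  rcases Sym2.eq_iff.mp h with ⟨-, h2⟩ | ⟨h1, -⟩
  · exact hF.hinj j hj j' hj' h2
  · exact absurd h1.symm (hF.ne_x hj')

lemma cFan_shift (hF : FanData G c D x y f n) {j : ℕ} (hj : j ≤ n) {m : ℕ} (hm : m < j) :
    cFan c x f j s(x, f m) = c s(x, f (m + 1)) := by
  rw [cFan]
  have hex : ∃ m', m' < j ∧ s(x, f m) = s(x, f m') := ⟨m, hm, rfl⟩
  rw [dif_pos hex]
  have hsp := @Nat.find_spec _ (Classical.decPred _) hex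
  have heq : @Nat.find _ (Classical.decPred _) hex = m :=
    (hF.edge_inj (by omega) (by omega) hsp.2.symm :)
  rw [heq]

lemma cFan_not_shift {j : ℕ} {e' : Sym2 V}
    (h : ∀ m, m < j → e' ≠ s(x, f m)) : cFan c x f j e' = c e' := by
  rw [cFan, dif_neg]
  rintro ⟨m, hm, rfl⟩
  exact h m hm rfl

lemma cFan_not_x {j : ℕ} {e' : Sym2 V} (h : x ∉ e') : cFan c x f j e' = c e' := by
  apply cFan_not_shift
  intro m _ he
  rw [he] at h
  exact h (Sym2.mem_mk_left _ _)

/-- an edge not in `DFan j` which is not a shifted fan edge is coloured in `c`. -/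
lemma FanData.notD (hF : FanData G c D x y f n) {j : ℕ} {e' : Sym2 V}
    (hD' : e' ∉ DFan D x y f j) (h : ∀ m, m < j → e' ≠ s(x, f m)) : e' ∉ D := by
  intro hmem
  rw [DFan, Set.mem_insert_iff] at hD'
  push_neg at hD'
  have h2 := hD'.2
  rw [Set.mem_diff] at h2
  have : e' = s(x, y) := by
    by_contra hne
    exact h2 ⟨hmem, by simpa using hne⟩
  rcases Nat.eq_zero_or_pos j with rfl | hpos
  · exact hD'.1 (by rw [this, hF.hf0])
  · exact h 0 hpos (by rw [this, hF.hf0])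

/-- helper: decompose an edge containing `v`. -/
lemma edge_decomp {G : SimpleGraph V} {e' : Sym2 V} (he : e' ∈ G.edgeSet) {v : V}
    (hv : v ∈ e') : ∃ w, G.Adj v w ∧ e' = s(v, w) := by
  induction e' using Sym2.ind with
  | _ a b =>
    rw [mem_edgeSet] at he
    rw [Sym2.mem_iff] at hv
    rcases hv with rfl | rfl
    · exact ⟨b, he, rfl⟩
    · exact ⟨a, he.symm, Sym2.eq_swap.symm⟩

/-- the fan-rotated colouring is proper off `DFan j`. -/
lemma FanData.cFan_proper (hF : FanData G c D x y f n)
    (hc : IsProperEC G D (Δ + 1) c) {j : ℕ} (hj : j ≤ n) :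
    IsProperEC G (DFan D x y f j) (Δ + 1) (cFan c x f j) := by
  constructor
  · intro e' he' hD'
    by_cases hsh : ∃ m, m < j ∧ e' = s(x, f m)
    · obtain ⟨m, hm, rfl⟩ := hsh
      rw [cFan_shift hF hj hm]
      exact hc.1 _ (hF.edge_mem (by omega)) (hF.fanD (by omega) (by omega))
    · push_neg at hsh
      rw [cFan_not_shift hsh]
      exact hc.1 e' he' (hF.notD hD' hsh)
  · intro e₁ he₁ e₂ he₂ hD₁ hD₂ hadj
    -- key asymmetric case: e₁ a shifted fan edge, e₂ not shifted
    have key : ∀ e₁ ∈ G.edgeSet, ∀ e₂ ∈ G.edgeSet, e₁ ∉ DFan D x y f j →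
        e₂ ∉ DFan D x y f j → EdgeAdj e₁ e₂ →
        (∃ m, m < j ∧ e₁ = s(x, f m)) → (∀ m, m < j → e₂ ≠ s(x, f m)) →
        cFan c x f j e₁ ≠ cFan c x f j e₂ := by
      intro e₁ he₁ e₂ he₂ hD₁ hD₂ hadj hsh₁ hsh₂
      obtain ⟨m, hm, rfl⟩ := hsh₁
      rw [cFan_shift hF hj hm, cFan_not_shift hsh₂]
      have he₂D : e₂ ∉ D := hF.notD hD₂ hsh₂
      have hm1n : m + 1 ≤ n := by omega
      have hne : e₂ ≠ s(x, f (m + 1)) := by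
        intro heq
        rcases Nat.lt_or_ge (m + 1) j with h | h
        · exact hsh₂ (m + 1) h heq
        · have : m + 1 = j := by omega
          rw [DFan, heq, this] at hD₂
          exact hD₂ (Set.mem_insert _ _)
      obtain ⟨-, v, hv₁, hv₂⟩ := hadj
      rw [Sym2.mem_iff] at hv₁
      rcases hv₁ with rfl | rfl
      · -- shared vertex is x
        intro hcol
        exact hc.2 e₂ he₂ _ (hF.edge_mem hm1n) he₂D (hF.fanD (by omega) hm1n)
          ⟨hne, v, hv₂, Sym2.mem_mk_left _ _⟩ hcol.symm
      · -- shared vertex is f m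
        obtain ⟨w, hw, rfl⟩ := edge_decomp he₂ hv₂
        intro hcol
        exact (hF.hfan m (by omega)).2 w hw he₂D hcol.symm
    by_cases h1 : ∃ m, m < j ∧ e₁ = s(x, f m) <;>
      by_cases h2 : ∃ m, m < j ∧ e₂ = s(x, f m)
    · -- both shifted
      obtain ⟨m₁, hm₁, rfl⟩ := h1
      obtain ⟨m₂, hm₂, rfl⟩ := h2
      rw [cFan_shift hF hj hm₁, cFan_shift hF hj hm₂]
      have hmm : m₁ ≠ m₂ := by
        intro h; exact hadj.1 (by rw [h])
      apply hc.2 _ (hF.edge_mem (by omega)) _ (hF.edge_mem (by omega))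
        (hF.fanD (by omega) (by omega)) (hF.fanD (by omega) (by omega))
      refine ⟨?_, x, Sym2.mem_mk_left _ _, Sym2.mem_mk_left _ _⟩
      intro h
      have := hF.edge_inj (j := m₁ + 1) (j' := m₂ + 1) (by omega) (by omega) h
      omega
    · push_neg at h2
      exact key e₁ he₁ e₂ he₂ hD₁ hD₂ hadj h1 h2
    · push_neg at h1
      obtain ⟨hne, v, hv₁, hv₂⟩ := hadj
      exact (key e₂ he₂ e₁ he₁ hD₂ hD₁ ⟨hne.symm, v, hv₂, hv₁⟩ h2 h1).symm
    · push_neg at h1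
      push_neg at h2
      rw [cFan_not_shift h1, cFan_not_shift h2]
      exact hc.2 e₁ he₁ e₂ he₂ (hF.notD hD₁ h1) (hF.notD hD₂ h2) hadj

/-- a colour free at `x` stays free at `x` after fan rotation. -/
lemma FanData.cFan_free_x (hF : FanData G c D x y f n) {j : ℕ} (hj : j ≤ n) {γ : ℕ}
    (hγ : Free G c D x γ) : Free G (cFan c x f j) (DFan D x y f j) x γ := by
  intro w hw hD'
  by_cases hsh : ∃ m, m < j ∧ s(x, w) = s(x, f m)
  · obtain ⟨m, hm, heq⟩ := hsh
    rw [heq, cFan_shift hF hj hm]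
    exact hγ (f (m + 1)) (hF.hadj (m + 1) (by omega)) (hF.fanD (by omega) (by omega))
  · push_neg at hsh
    rw [cFan_not_shift hsh]
    exact hγ w hw (hF.notD hD' hsh)

/-- a colour free at `f j` stays free at `f j` after fan rotation to `j`. -/
lemma FanData.cFan_free_f (hF : FanData G c D x y f n) {j : ℕ} (hj : j ≤ n) {γ : ℕ}
    (hγ : Free G c D (f j) γ) : Free G (cFan c x f j) (DFan D x y f j) (f j) γ := by
  intro w hw hD'
  have hwx : w ≠ x := by
    rintro rfl
    apply hD'
    rw [DFan, Sym2.eq_swap]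
    exact Set.mem_insert _ _
  have hxe : x ∉ s(f j, w) := by
    rw [Sym2.mem_iff]
    push_neg
    exact ⟨Ne.symm (hF.ne_x hj), Ne.symm hwx⟩
  rw [cFan_not_x hxe]
  apply hγ w hw
  apply hF.notD hD'
  intro m _ heq
  rw [heq] at hxe
  exact hxe (Sym2.mem_mk_left _ _)

/-- colouring the uncoloured edge `s(x,z)` with a colour free at both endpoints. -/
lemma colour_last {D₀ : Set (Sym2 V)} {c' : Sym2 V → ℕ} {x z : V} {α : ℕ}
    (hxz : G.Adj x z)
    (hprop : IsProperEC G (insert s(x, z) D₀) (Δ + 1) c')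
    (hfx : Free G c' (insert s(x, z) D₀) x α)
    (hfz : Free G c' (insert s(x, z) D₀) z α)
    (hα : α ∈ Finset.Icc 1 (Δ + 1)) :
    IsProperEC G D₀ (Δ + 1) (Function.update c' s(x, z) α) := by
  constructor
  · intro e' he' hD'
    rcases eq_or_ne e' s(x, z) with rfl | hne
    · rw [Function.update_self]; exact hα
    · rw [Function.update_of_ne hne]
      exact hprop.1 e' he' (by simp [hne, hD'])
  · have key : ∀ e₂ ∈ G.edgeSet, e₂ ∉ D₀ → e₂ ≠ s(x, z) → EdgeAdj s(x, z) e₂ →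
        c' e₂ ≠ α := by
      intro e₂ he₂ hD₂ hne₂ hadj
      obtain ⟨-, v, hv₁, hv₂⟩ := hadj
      have hD₂' : e₂ ∉ insert s(x, z) D₀ := by simp [hne₂, hD₂]
      rw [Sym2.mem_iff] at hv₁
      rcases hv₁ with rfl | rfl
      · obtain ⟨w, hw, rfl⟩ := edge_decomp he₂ hv₂
        exact hfx w hw hD₂'
      · obtain ⟨w, hw, rfl⟩ := edge_decomp he₂ hv₂
        exact hfz w hw hD₂'
    intro e₁ he₁ e₂ he₂ hD₁ hD₂ hadj
    rcases eq_or_ne e₁ s(x, z) with rfl | hne₁ <;> rcases eq_or_ne e₂ s(x, z) with rfl | hne₂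
    · exact absurd rfl hadj.1
    · rw [Function.update_self, Function.update_of_ne hne₂]
      exact fun h => key e₂ he₂ hD₂ hne₂ hadj h.symm
    · rw [Function.update_self, Function.update_of_ne hne₁]
      obtain ⟨hne, v, hv₁, hv₂⟩ := hadj
      exact key e₁ he₁ hD₁ hne₁ ⟨hne.symm, v, hv₂, hv₁⟩
    · rw [Function.update_of_ne hne₁, Function.update_of_ne hne₂]
      exact hprop.2 e₁ he₁ e₂ he₂ (by simp [hne₁, hD₁]) (by simp [hne₂, hD₂]) hadj

end FanLemmas

section ExistsFree

variable {G} {c : Sym2 V → ℕ} {D : Set (Sym2 V)} {Δ : ℕ}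

lemma exists_free (hΔ : ∀ v, G.degree v ≤ Δ) (hc : IsProperEC G D (Δ + 1) c) (v : V) :
    ∃ b ∈ Finset.Icc 1 (Δ + 1), Free G c D v b := by
  classical
  set N := (G.neighborFinset v).filter (fun w => s(v, w) ∉ D) with hN
  set I := N.image (fun w => c s(v, w)) with hI
  have hIsub : I ⊆ Finset.Icc 1 (Δ + 1) := by
    intro b hb
    rw [hI, Finset.mem_image] at hb
    obtain ⟨w, hw, rfl⟩ := hb
    rw [hN, Finset.mem_filter, SimpleGraph.mem_neighborFinset] at hw
    exact hc.1 _ (by rw [mem_edgeSet]; exact hw.1) hw.2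
  have hcard : I.card < (Finset.Icc 1 (Δ + 1)).card := by
    have h1 : I.card ≤ N.card := Finset.card_image_le
    have h2 : N.card ≤ G.degree v := Finset.card_le_card (Finset.filter_subset _ _)
    have h3 : (Finset.Icc 1 (Δ + 1)).card = Δ + 1 := by
      rw [Nat.card_Icc]; omega
    have := hΔ v
    omega
  have hnsub : ¬ (Finset.Icc 1 (Δ + 1) ⊆ I) := fun h =>
    absurd (Finset.card_le_card h) (by omega)
  obtain ⟨b, hb⟩ := Finset.sdiff_nonempty.mpr hnsub
  rw [Finset.mem_sdiff] at hb
  refine ⟨b, hb.1, ?_⟩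
  intro w hw hD hbw
  apply hb.2
  rw [hI, Finset.mem_image]
  exact ⟨w, by rw [hN, Finset.mem_filter, SimpleGraph.mem_neighborFinset]; exact ⟨hw, hD⟩, hbw⟩

end ExistsFree

section Main

variable {G} {c : Sym2 V → ℕ} {D : Set (Sym2 V)} {x y : V} {Δ : ℕ}

/-- the α/β edges avoiding `x`, in the original colouring. -/
def HHgraph (G : SimpleGraph V) (c : Sym2 V → ℕ) (D : Set (Sym2 V)) (x : V) (α β : ℕ) :
    SimpleGraph V where
  Adj u v := G.Adj u v ∧ u ≠ x ∧ v ≠ x ∧ s(u, v) ∉ D ∧ (c s(u, v) = α ∨ c s(u, v) = β)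
  symm := by
    constructor
    intro u v h
    refine ⟨h.1.symm, h.2.2.1, h.2.1, ?_, ?_⟩ <;> rw [Sym2.eq_swap]
    exacts [h.2.2.2.1, h.2.2.2.2]
  loopless := ⟨fun v h => G.loopless.irrefl v h.1⟩

lemma hhgraph_adj {α β : ℕ} {u v : V} :
    (HHgraph G c D x α β).Adj u v ↔
      (G.Adj u v ∧ u ≠ x ∧ v ≠ x ∧ s(u, v) ∉ D ∧ (c s(u, v) = α ∨ c s(u, v) = β)) :=
  Iff.rfl

theorem extend_one (hΔ : ∀ v, G.degree v ≤ Δ) (hc : IsProperEC G D (Δ + 1) c)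
    (hxy : G.Adj x y) (heD : s(x, y) ∈ D) :
    ∃ c', IsProperEC G (D \ {s(x, y)}) (Δ + 1) c' := by
  classical
  obtain ⟨α, hαI, hαf⟩ := exists_free hΔ hc x
  set P : ℕ → Prop := fun n => ∃ f : ℕ → V, FanData G c D x y f n with hP
  have hP0 : P 0 := by
    refine ⟨fun _ => y, ⟨hxy, heD, rfl, ?_, ?_, ?_⟩⟩
    · intro j hj; simpa using hxy
    · intro j hj j' hj' _; omega
    · intro j hj; exact absurd hj (Nat.not_lt_zero j)
  have hbound : ∀ m, P m → m < Fintype.card V := by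
    rintro m ⟨f, hf⟩
    have hle : (Finset.range (m + 1)).card ≤ (Finset.univ : Finset V).card := by
      apply Finset.card_le_card_of_injOn f (fun _ _ => Finset.mem_univ _)
      intro a ha b hb hab
      rw [Finset.mem_coe, Finset.mem_range] at ha hb
      exact hf.hinj a (by omega) b (by omega) hab
    rw [Finset.card_range, Finset.card_univ] at hle
    omega
  set n := Nat.findGreatest P (Fintype.card V) with hn
  obtain ⟨f, hF⟩ : P n := Nat.findGreatest_spec (Nat.zero_le _) hP0
  have hmax : ∀ w, G.Adj x w → s(x, w) ∉ D → Free G c D (f n) (c s(x, w)) →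
      ∃ j, 1 ≤ j ∧ j ≤ n ∧ w = f j := by
    intro w hw hwD hwfree
    by_cases hmem : ∃ j, j ≤ n ∧ w = f j
    · obtain ⟨j, hj, rfl⟩ := hmem
      refine ⟨j, ?_, hj, rfl⟩
      rcases Nat.eq_zero_or_pos j with rfl | h
      · exfalso; rw [hF.hf0] at hwD; exact hwD heD
      · omega
    · push_neg at hmem
      exfalso
      set f' : ℕ → V := fun m => if m = n + 1 then w else f m with hf'
      have hf'eq : ∀ m, m ≤ n → f' m = f m := by
        intro m hm; simp only [hf']; rw [if_neg (by omega)]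
      have hf'top : f' (n + 1) = w := by simp [hf']
      have hF' : FanData G c D x y f' (n + 1) := by
        refine ⟨hxy, heD, by rw [hf'eq 0 (by omega), hF.hf0], ?_, ?_, ?_⟩
        · intro j hj
          rcases eq_or_ne j (n + 1) with rfl | hne
          · rw [hf'top]; exact hw
          · rw [hf'eq j (by omega)]; exact hF.hadj j (by omega)
        · intro j hj j' hj' heq
          rcases eq_or_ne j (n + 1) with rfl | hne <;> rcases eq_or_ne j' (n + 1) with rfl | hne'
          · rfl
          · rw [hf'top, hf'eq j' (by omega)] at heq
            exact absurd heq (hmem j' (by omega))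
          · rw [hf'top, hf'eq j (by omega)] at heq
            exact absurd heq.symm (hmem j (by omega))
          · rw [hf'eq j (by omega), hf'eq j' (by omega)] at heq
            exact hF.hinj j (by omega) j' (by omega) heq
        · intro j hj
          rcases eq_or_ne j n with rfl | hne
          · rw [hf'top, hf'eq n le_rfl]
            exact ⟨hwD, hwfree⟩
          · rw [hf'eq j (by omega), hf'eq (j + 1) (by omega)]
            exact hF.hfan j (by omega)
      have hlt := hbound (n + 1) ⟨f', hF'⟩
      exact Nat.findGreatest_is_greatest (P := P) (n := Fintype.card V)
        (by rw [← hn]; omega) (by omega) ⟨f', hF'⟩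
  obtain ⟨β, hβI, hβf⟩ := exists_free hΔ hc (f n)
  by_cases hβx : Free G c D x β
  · -- β is free at both x and f n : rotate the whole fan and colour with β
    refine ⟨Function.update (cFan c x f n) s(x, f n) β, ?_⟩
    exact colour_last (hF.hadj n le_rfl) (hF.cFan_proper hc le_rfl)
      (hF.cFan_free_x le_rfl hβx) (hF.cFan_free_f le_rfl hβf) hβI
  · rw [Free] at hβx
    push_neg at hβx
    obtain ⟨w, hw, hwD, hwβ⟩ := hβx
    obtain ⟨j₀, hj₀1, hj₀n, rfl⟩ := hmax w hw hwD (by rw [hwβ]; exact hβf)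
    have hβeq : c s(x, f j₀) = β := hwβ
    have hj₀n' : j₀ ≠ n := by
      intro hEq
      apply hβf x (hF.hadj n le_rfl).symm
        (by rw [Sym2.eq_swap]; exact hF.fanD (by omega) le_rfl)
      rw [Sym2.eq_swap, ← hEq]
      exact hβeq
    obtain ⟨i, rfl⟩ : ∃ i, j₀ = i + 1 := ⟨j₀ - 1, by omega⟩
    have hin : i + 1 < n := by omega
    have hαβ : α ≠ β := by
      rw [← hβeq]
      exact fun h => hαf (f (i + 1)) (hF.hadj _ (by omega)) (hF.fanD (by omega) (by omega)) h.symm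
    have hβfi : Free G c D (f i) β := by
      rw [← hβeq]; exact (hF.hfan i (by omega)).2
    have hfandist : ∀ m, 1 ≤ m → m ≤ n → ∀ m', 1 ≤ m' → m' ≤ n →
        c s(x, f m) = c s(x, f m') → m = m' := by
      intro m h1 h2 m' h1' h2' hcc
      by_contra hne
      have hedgene : s(x, f m) ≠ s(x, f m') := fun h => hne (hF.edge_inj h2 h2' h)
      exact hc.2 _ (hF.edge_mem h2) _ (hF.edge_mem h2') (hF.fanD h1 h2) (hF.fanD h1' h2')
        ⟨hedgene, x, Sym2.mem_mk_left _ _, Sym2.mem_mk_left _ _⟩ hcc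
    -- x has a unique possible neighbour in the Kempe graph of `cFan n` : namely `f i`
    have hxKn : ∀ w', (Kgraph G (cFan c x f n) (DFan D x y f n) α β).Adj x w' → w' = f i := by
      intro w' h
      rw [kgraph_adj] at h
      obtain ⟨hadj', hD', hcol⟩ := h
      rcases hcol with hcol | hcol
      · exact absurd hcol (hF.cFan_free_x le_rfl hαf w' hadj' hD')
      · by_cases hsh : ∃ m, m < n ∧ s(x, w') = s(x, f m)
        · obtain ⟨m, hm, heq⟩ := hsh
          rw [heq, cFan_shift hF le_rfl hm] at hcol
          have hmi : m + 1 = i + 1 := by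
            apply hfandist (m + 1) (by omega) (by omega) (i + 1) (by omega) (by omega)
            rw [hcol, hβeq]
          have hwfm : w' = f m := by
            rcases Sym2.eq_iff.mp heq with ⟨-, h2⟩ | ⟨h1, -⟩
            · exact h2
            · exact absurd h1.symm (hF.ne_x (by omega))
          rw [hwfm]
          congr 1
          omega
        · push_neg at hsh
          exfalso
          rw [cFan_not_shift hsh] at hcol
          have hwD' : s(x, w') ∉ D := hF.notD hD' hsh
          have hedge : s(x, w') = s(x, f (i + 1)) := by
            by_contra hne
            exact hc.2 _ ((mem_edgeSet G).mpr hadj') _ (hF.edge_mem (by omega)) hwD'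
              (hF.fanD (by omega) (by omega))
              ⟨hne, x, Sym2.mem_mk_left _ _, Sym2.mem_mk_left _ _⟩ (by rw [hcol, hβeq])
          exact hsh (i + 1) hin hedge
    -- x has a unique possible neighbour in the Kempe graph of `cFan i` : namely `f (i+1)`
    have hxKi : ∀ w', (Kgraph G (cFan c x f i) (DFan D x y f i) α β).Adj x w' →
        w' = f (i + 1) := by
      intro w' h
      rw [kgraph_adj] at h
      obtain ⟨hadj', hD', hcol⟩ := h
      rcases hcol with hcol | hcol
      · exact absurd hcol (hF.cFan_free_x (by omega) hαf w' hadj' hD')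
      · by_cases hsh : ∃ m, m < i ∧ s(x, w') = s(x, f m)
        · obtain ⟨m, hm, heq⟩ := hsh
          rw [heq, cFan_shift hF (by omega) hm] at hcol
          have hmi : m + 1 = i + 1 := by
            apply hfandist (m + 1) (by omega) (by omega) (i + 1) (by omega) (by omega)
            rw [hcol, hβeq]
          omega
        · push_neg at hsh
          rw [cFan_not_shift hsh] at hcol
          have hwD' : s(x, w') ∉ D := hF.notD hD' hsh
          have hedge : s(x, w') = s(x, f (i + 1)) := by
            by_contra hne
            exact hc.2 _ ((mem_edgeSet G).mpr hadj') _ (hF.edge_mem (by omega)) hwD'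
              (hF.fanD (by omega) (by omega))
              ⟨hne, x, Sym2.mem_mk_left _ _, Sym2.mem_mk_left _ _⟩ (by rw [hcol, hβeq])
          rcases Sym2.eq_iff.mp hedge with ⟨-, h2⟩ | ⟨h1, -⟩
          · exact h2
          · exact absurd h1.symm (hF.ne_x (by omega))
    -- transfer between Kempe graphs and HHgraph
    have hT1 : ∀ j, j ≤ n → ∀ u v : V, u ≠ x → v ≠ x →
        ((Kgraph G (cFan c x f j) (DFan D x y f j) α β).Adj u v ↔
          (HHgraph G c D x α β).Adj u v) := by
      intro j hj u v hu hv
      have hxe : x ∉ s(u, v) := by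
        rw [Sym2.mem_iff]; push_neg; exact ⟨Ne.symm hu, Ne.symm hv⟩
      rw [kgraph_adj, hhgraph_adj]
      have hcc : cFan c x f j s(u, v) = c s(u, v) := cFan_not_x hxe
      constructor
      · rintro ⟨h1, h2, h3⟩
        have hD0 : s(u, v) ∉ D := hF.notD h2
          (by intro m _ heq; rw [heq] at hxe; exact hxe (Sym2.mem_mk_left _ _))
        exact ⟨h1, hu, hv, hD0, by rw [← hcc]; exact h3⟩
      · rintro ⟨h1, -, -, h4, h5⟩
        refine ⟨h1, ?_, by rw [hcc]; exact h5⟩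
        rw [DFan, Set.mem_insert_iff]
        push_neg
        refine ⟨?_, ?_⟩
        · intro heq; rw [heq] at hxe; exact hxe (Sym2.mem_mk_left _ _)
        · intro hmem; exact h4 hmem.1
    have hwalkin : ∀ j, j ≤ n → ∀ (u v' : V)
        (q : (Kgraph G (cFan c x f j) (DFan D x y f j) α β).Walk u v'),
        x ∉ q.support → (HHgraph G c D x α β).Reachable u v' := by
      intro j hj u v' q
      induction q with
      | nil => intro _; exact SimpleGraph.Reachable.refl _
      | @cons a b cc h q ih =>
        intro hx
        rw [SimpleGraph.Walk.support_cons, List.mem_cons] at hx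
        push_neg at hx
        have hb : b ∈ q.support := q.start_mem_support
        have hbx : b ≠ x := fun h' => hx.2 (h' ▸ hb)
        exact ((hT1 j hj a b (Ne.symm hx.1) hbx).mp h).reachable.trans (ih hx.2)
    have hstrip : ∀ j, j ≤ n → ∀ z a : V, a ≠ x →
        (∀ w', (Kgraph G (cFan c x f j) (DFan D x y f j) α β).Adj x w' → w' = z) →
        (Kgraph G (cFan c x f j) (DFan D x y f j) α β).Reachable a x →
        (HHgraph G c D x α β).Reachable a z := by
      intro j hj z a hax huniq hr
      obtain ⟨p⟩ := hr
      obtain ⟨pp, hpp⟩ := p.toPath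
      cases hq : pp.reverse with
      | nil => exact absurd rfl hax
      | @cons _ w₀ _ h' q' =>
        have hz := huniq w₀ h'
        subst hz
        have hqpath : pp.reverse.IsPath := hpp.reverse
        rw [hq, SimpleGraph.Walk.cons_isPath_iff] at hqpath
        exact (hwalkin j hj _ _ q' hqpath.2).symm
    -- degree bounds in HHgraph
    letI : DecidableRel (HHgraph G c D x α β).Adj := Classical.decRel _
    have hHHinj : ∀ v w w', (HHgraph G c D x α β).Adj v w → (HHgraph G c D x α β).Adj v w' →
        c s(v, w) = c s(v, w') → w = w' := by
      intro v w w' h h' hcc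
      by_contra hne
      have hedgene : s(v, w) ≠ s(v, w') := by
        intro he
        rcases Sym2.eq_iff.mp he with ⟨-, h2⟩ | ⟨h1, -⟩
        · exact hne h2
        · exact h'.1.ne h1
      rw [hhgraph_adj] at h h'
      exact hc.2 _ ((mem_edgeSet G).mpr h.1) _ ((mem_edgeSet G).mpr h'.1) h.2.2.2.1 h'.2.2.2.1
        ⟨hedgene, v, Sym2.mem_mk_left _ _, Sym2.mem_mk_left _ _⟩ hcc
    have hdeg2 : ∀ v, (HHgraph G c D x α β).degree v ≤ 2 := by
      intro v
      have hle : ((HHgraph G c D x α β).neighborFinset v).card ≤ ({α, β} : Finset ℕ).card := by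
        apply Finset.card_le_card_of_injOn (fun w => c s(v, w))
        · intro w hw
          rw [Finset.mem_coe, SimpleGraph.mem_neighborFinset, hhgraph_adj] at hw
          rcases hw.2.2.2.2 with h | h <;> simp [h]
        · intro a ha b hb hab
          rw [Finset.mem_coe, SimpleGraph.mem_neighborFinset] at ha hb
          exact hHHinj v a b ha hb hab
      have h2 : ({α, β} : Finset ℕ).card ≤ 2 :=
        le_trans (Finset.card_insert_le _ _) (by simp)
      exact le_trans hle h2
    have hdeg1 : ∀ v, (∀ w, (HHgraph G c D x α β).Adj v w → c s(v, w) ≠ β) →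
        (HHgraph G c D x α β).degree v ≤ 1 := by
      intro v hv
      have hle : ((HHgraph G c D x α β).neighborFinset v).card ≤ ({α} : Finset ℕ).card := by
        apply Finset.card_le_card_of_injOn (fun w => c s(v, w))
        · intro w hw
          rw [Finset.mem_coe, SimpleGraph.mem_neighborFinset] at hw
          have := hv w hw
          rw [hhgraph_adj] at hw
          rcases hw.2.2.2.2 with h | h
          · simp [h]
          · exact absurd h this
        · intro a ha b hb hab
          rw [Finset.mem_coe, SimpleGraph.mem_neighborFinset] at ha hb
          exact hHHinj v a b ha hb hab
      simpa using hle
    have hdeg1n : (HHgraph G c D x α β).degree (f n) ≤ 1 := by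
      apply hdeg1
      intro w hw
      rw [hhgraph_adj] at hw
      exact hβf w hw.1 hw.2.2.2.1
    have hdeg1i : (HHgraph G c D x α β).degree (f i) ≤ 1 := by
      apply hdeg1
      intro w hw
      rw [hhgraph_adj] at hw
      exact hβfi w hw.1 hw.2.2.2.1
    have hdeg1i1 : (HHgraph G c D x α β).degree (f (i + 1)) ≤ 1 := by
      apply hdeg1
      intro w hw
      rw [hhgraph_adj] at hw
      intro hcc
      have hedge : s(f (i + 1), w) = s(x, f (i + 1)) := by
        by_contra hne
        exact hc.2 _ ((mem_edgeSet G).mpr hw.1) _ (hF.edge_mem (le_of_lt hin)) hw.2.2.2.1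
          (hF.fanD (by omega) (by omega))
          ⟨hne, f (i + 1), Sym2.mem_mk_left _ _, Sym2.mem_mk_right _ _⟩
          (by rw [hcc, hβeq])
      rcases Sym2.eq_iff.mp hedge with ⟨h1, -⟩ | ⟨-, h2⟩
      · exact hF.ne_x (le_of_lt hin) h1
      · exact hw.2.2.1 h2
    have hd1 : f n ≠ f i := fun h => by
      have := hF.hinj n le_rfl i (by omega) h; omega
    have hd2 : f n ≠ f (i + 1) := fun h => by
      have := hF.hinj n le_rfl (i + 1) (by omega) h; omega
    have hd3 : f i ≠ f (i + 1) := fun h => by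
      have := hF.hinj i (by omega) (i + 1) (by omega) h; omega
    by_cases hreach : (Kgraph G (cFan c x f n) (DFan D x y f n) α β).Reachable (f n) x
    · have hr1 : (HHgraph G c D x α β).Reachable (f n) (f i) :=
        hstrip n le_rfl (f i) (f n) (hF.ne_x le_rfl) hxKn hreach
      by_cases hreach2 : (Kgraph G (cFan c x f i) (DFan D x y f i) α β).Reachable (f i) x
      · exfalso
        have hr2 : (HHgraph G c D x α β).Reachable (f i) (f (i + 1)) :=
          hstrip i (by omega) (f (i + 1)) (f i) (hF.ne_x (by omega)) hxKi hreach2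
        exact three_leaves (HHgraph G c D x α β) hdeg2 hd1 hd2 hd3 hdeg1n hdeg1i hdeg1i1
          hr1.symm hr2
      · -- Kempe swap at `f i` in the rotated colouring `cFan i`
        have hprop2 : IsProperEC G (DFan D x y f i) (Δ + 1)
            (cSwap G (cFan c x f i) (DFan D x y f i) α β (f i)) :=
          cSwap_proper G (hF.cFan_proper hc (by omega)) hαI hβI hαβ
        have hfz : Free G (cSwap G (cFan c x f i) (DFan D x y f i) α β (f i))
            (DFan D x y f i) (f i) α :=
          cSwap_free G (hF.cFan_free_f (by omega) hβfi) hαβ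
        have hfx2 : Free G (cSwap G (cFan c x f i) (DFan D x y f i) α β (f i))
            (DFan D x y f i) x α :=
          cSwap_free_of_unreachable G (hF.cFan_free_x (by omega) hαf) hreach2
        exact ⟨_, colour_last (hF.hadj i (by omega)) hprop2 hfx2 hfz hαI⟩
    · -- Kempe swap at `f n` in the rotated colouring `cFan n`
      have hprop2 : IsProperEC G (DFan D x y f n) (Δ + 1)
          (cSwap G (cFan c x f n) (DFan D x y f n) α β (f n)) :=
        cSwap_proper G (hF.cFan_proper hc le_rfl) hαI hβI hαβ
      have hfz : Free G (cSwap G (cFan c x f n) (DFan D x y f n) α β (f n))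
          (DFan D x y f n) (f n) α :=
        cSwap_free G (hF.cFan_free_f le_rfl hβf) hαβ
      have hfx2 : Free G (cSwap G (cFan c x f n) (DFan D x y f n) α β (f n))
          (DFan D x y f n) x α :=
        cSwap_free_of_unreachable G (hF.cFan_free_x le_rfl hαf) hreach
      exact ⟨_, colour_last (hF.hadj n le_rfl) hprop2 hfx2 hfz hαI⟩

end Main

theorem colour_all (hΔ : ∀ v, G.degree v ≤ Δ) (S : Finset (Sym2 V)) :
    ∃ c, IsProperEC G (G.edgeSet \ ↑S) (Δ + 1) c := by
  classical
  induction S using Finset.induction_on with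
  | empty =>
    refine ⟨fun _ => 1, ?_, ?_⟩
    · intro e he hD
      exact absurd (by simpa using he) hD
    · intro e he _ _ hD _ _
      exact absurd (by simpa using he) hD
  | @insert a S ha ih =>
    obtain ⟨c, hc⟩ := ih
    revert ha
    induction a using Sym2.ind with
    | _ x y =>
      intro ha
      by_cases hadj : G.Adj x y
      · obtain ⟨c', hc'⟩ := extend_one hΔ hc hadj
          ⟨(mem_edgeSet G).mpr hadj, by simpa using ha⟩
        refine ⟨c', ?_⟩
        have hEq : (G.edgeSet \ ↑S) \ {s(x, y)} = G.edgeSet \ ↑(insert s(x, y) S) := by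
          ext e
          simp only [Set.mem_diff, Set.mem_singleton_iff, Finset.coe_insert,
            Set.mem_insert_iff, Finset.mem_coe]
          tauto
        rw [← hEq]
        exact hc'
      · refine ⟨c, ?_⟩
        have hEq : G.edgeSet \ ↑S = G.edgeSet \ ↑(insert s(x, y) S) := by
          ext e
          simp only [Set.mem_diff, Finset.coe_insert, Set.mem_insert_iff, Finset.mem_coe]
          constructor
          · rintro ⟨he, hS⟩
            refine ⟨he, ?_⟩
            rintro (rfl | h)
            · exact hadj ((mem_edgeSet G).mp he)
            · exact hS h
          · rintro ⟨he, hS⟩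
            exact ⟨he, fun h => hS (Or.inr h)⟩
        rw [← hEq]
        exact hc
end VizingAux

open VizingAux in
/-- **Vizing's theorem.** Every simple graph with maximum degree `Δ` has a
proper edge-colouring with colours from `{1, …, Δ + 1}`. -/
theorem vizing_simple {V : Type} [Fintype V] [DecidableEq V] (G : SimpleGraph V)
    [DecidableRel G.Adj] (Δ : ℕ) (hΔ : ∀ v, G.degree v ≤ Δ) :
    ∃ c : Sym2 V → ℕ, G.IsProperEC ∅ (Δ + 1) c := by
  obtain ⟨c, hc⟩ := colour_all G hΔ G.edgeFinset
  refine ⟨c, ?_⟩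
  rw [show (∅ : Set (Sym2 V)) = G.edgeSet \ ↑G.edgeFinset from by
    simp [SimpleGraph.coe_edgeFinset]]
  exact hc
end

section
/- Let G be a simple graph with maximum degree Δ and let M be a maximal matching of G. Then G \ M admits a proper edge-colouring using at most Δ colours. -/
open SimpleGraph

set_option linter.unusedSectionVars false
set_option linter.unusedVariables false
set_option maxHeartbeats 1000000

namespace Fournier

variable {V : Type} [Fintype V] [DecidableEq V]

/-- number of edges of `E` incident to `x`. -/
def degAt (E : Finset (Sym2 V)) (x : V) : ℕ := (E.filter (fun e => x ∈ e)).card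

/-- colour `γ` does not appear at `x` among edges of `E`. -/
def Free (c : Sym2 V → ℕ) (E : Finset (Sym2 V)) (x : V) (γ : ℕ) : Prop :=
  ∀ f ∈ E, x ∈ f → c f ≠ γ

/-- proper colouring of the edges in `E`. -/
def ProperOn (E : Finset (Sym2 V)) (c : Sym2 V → ℕ) : Prop :=
  ∀ e ∈ E, ∀ f ∈ E, EdgeAdj e f → c e ≠ c f

lemma ProperOn.mono {E E' : Finset (Sym2 V)} {c : Sym2 V → ℕ} (h : ProperOn E c)
    (hsub : E' ⊆ E) : ProperOn E' c := fun e he f hf hadj => h e (hsub he) f (hsub hf) hadj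

lemma Free.mono {c : Sym2 V → ℕ} {E E' : Finset (Sym2 V)} {x γ} (h : Free c E x γ)
    (hsub : E' ⊆ E) : Free c E' x γ := fun f hf => h f (hsub hf)

lemma degAt_mono {E E' : Finset (Sym2 V)} (hsub : E' ⊆ E) (x : V) : degAt E' x ≤ degAt E x :=
  Finset.card_le_card (Finset.filter_subset_filter _ hsub)

lemma degAt_erase {E : Finset (Sym2 V)} {e : Sym2 V} {x : V} (he : e ∈ E) (hx : x ∈ e) :
    degAt (E.erase e) x = degAt E x - 1 := by
  unfold degAt
  rw [Finset.filter_erase, Finset.card_erase_of_mem (by simp [he, hx])]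

lemma exists_free {Δ : ℕ} {E : Finset (Sym2 V)} {c : Sym2 V → ℕ} {x : V}
    (hcol : ∀ e ∈ E, c e ∈ Finset.Icc 1 Δ) (hdeg : degAt E x < Δ) :
    ∃ γ ∈ Finset.Icc 1 Δ, Free c E x γ := by
  classical
  set used := (E.filter (fun e => x ∈ e)).image c with hused
  have hsub : used ⊆ Finset.Icc 1 Δ := by
    intro γ hγ
    simp only [hused, Finset.mem_image, Finset.mem_filter] at hγ
    obtain ⟨e, ⟨he, _⟩, rfl⟩ := hγ
    exact hcol e he
  have hcard : used.card < (Finset.Icc 1 Δ).card := by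
    have h1 : used.card ≤ degAt E x := Finset.card_image_le
    have h2 : (Finset.Icc 1 Δ).card = Δ := by simp
    omega
  have : ¬ (Finset.Icc 1 Δ ⊆ used) := fun hs => absurd (Finset.card_le_card hs) (by omega)
  obtain ⟨γ, hγI, hγu⟩ := Finset.not_subset.mp this
  refine ⟨γ, hγI, fun f hf hxf hcf => hγu ?_⟩
  exact Finset.mem_image.mpr ⟨f, Finset.mem_filter.mpr ⟨hf, hxf⟩, hcf⟩

lemma chain'_transfer {α : Type*} {R S : α → α → Prop} :
    ∀ (l : List α), (∀ a b, b ∈ l.tail → R a b → S a b) → l.IsChain R → l.IsChain S := by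
  intro l
  induction l with
  | nil => intro _ _; exact List.isChain_nil
  | cons a l ih =>
    intro h hc
    cases l with
    | nil => exact List.isChain_singleton a
    | cons b l' =>
      rw [List.isChain_cons_cons] at hc ⊢
      exact ⟨h a b (by simp) hc.1, ih (fun p q hq => h p q (by simp at hq ⊢; tauto)) hc.2⟩

lemma rot (Δ : ℕ) (u : V) :
    ∀ (L : List V) (a : V) (E : Finset (Sym2 V)) (c : Sym2 V → ℕ) (β : ℕ),
      (a :: L).Nodup →
      (∀ x ∈ a :: L, x ≠ u) →
      (∀ x ∈ a :: L, s(u, x) ∈ E) →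
      ProperOn (E.erase s(u, a)) c →
      (∀ e ∈ E.erase s(u, a), c e ∈ Finset.Icc 1 Δ) →
      List.IsChain (fun x y => Free c (E.erase s(u, a)) x (c s(u, y))) (a :: L) →
      β ∈ Finset.Icc 1 Δ →
      Free c (E.erase s(u, a)) ((a :: L).getLast (by simp)) β →
      Free c (E.erase s(u, a)) u β →
      ∃ c', ProperOn E c' ∧ (∀ e ∈ E, c' e ∈ Finset.Icc 1 Δ) ∧
        (∀ e, (∀ x ∈ a :: L, e ≠ s(u, x)) → c' e = c e) ∧
        (∀ e ∈ E, u ∈ e → c' e = β ∨ ∃ f ∈ E.erase s(u, a), u ∈ f ∧ c' e = c f) := by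
  intro L
  induction L with
  | nil =>
    intro a E c β hnd hnu hmem hP hI hch hβI hβl hβu
    have hau : a ≠ u := hnu a (by simp)
    simp only [List.getLast_singleton] at hβl
    refine ⟨Function.update c s(u, a) β, ?_, ?_, ?_, ?_⟩
    · intro e he f hf ⟨hne, x, hxe, hxf⟩
      by_cases he' : e = s(u, a) <;> by_cases hf' : f = s(u, a)
      · exact absurd (he'.trans hf'.symm) hne
      · subst he'
        rw [Function.update_self, Function.update_of_ne hf']
        have hf'' : f ∈ E.erase s(u, a) := Finset.mem_erase.mpr ⟨hf', hf⟩
        rcases Sym2.mem_iff.mp hxe with rfl | rfl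
        · exact fun h => hβu f hf'' hxf h.symm
        · exact fun h => hβl f hf'' hxf h.symm
      · subst hf'
        rw [Function.update_self, Function.update_of_ne he']
        have he'' : e ∈ E.erase s(u, a) := Finset.mem_erase.mpr ⟨he', he⟩
        rcases Sym2.mem_iff.mp hxf with rfl | rfl
        · exact hβu e he'' hxe
        · exact hβl e he'' hxe
      · rw [Function.update_of_ne he', Function.update_of_ne hf']
        exact hP e (Finset.mem_erase.mpr ⟨he', he⟩) f (Finset.mem_erase.mpr ⟨hf', hf⟩)
          ⟨hne, x, hxe, hxf⟩
    · intro e he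
      by_cases he' : e = s(u, a)
      · subst he'; rw [Function.update_self]; exact hβI
      · rw [Function.update_of_ne he']; exact hI e (Finset.mem_erase.mpr ⟨he', he⟩)
    · intro e hloc
      exact Function.update_of_ne (hloc a (by simp)) _ _
    · intro e he hue
      by_cases he' : e = s(u, a)
      · subst he'; left; rw [Function.update_self]
      · right
        exact ⟨e, Finset.mem_erase.mpr ⟨he', he⟩, hue, Function.update_of_ne he' _ _⟩
  | cons b L' ih =>
    intro a E c β hnd hnu hmem hP hI hch hβI hβl hβu
    have hau : a ≠ u := hnu a (by simp)
    have hbu : b ≠ u := hnu b (by simp)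
    have hab : a ≠ b := by
      intro h; subst h; simp at hnd
    have hanl : a ∉ b :: L' := (List.nodup_cons.mp hnd).1
    set E' := E.erase s(u, a) with hE'
    have hmem' : ∀ x ∈ b :: L', s(u, x) ∈ E' := by
      intro x hx
      refine Finset.mem_erase.mpr ⟨?_, hmem x (by simp [hx])⟩
      intro h
      exact hanl ((Sym2.congr_right.mp h) ▸ hx)
    have hγmem : s(u, b) ∈ E' := hmem' b (by simp)
    set γ := c s(u, b) with hγ
    have hγI : γ ∈ Finset.Icc 1 Δ := hI _ hγmem
    -- chain head and tail
    rw [List.isChain_cons_cons] at hch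
    obtain ⟨hfan_ab, hch'⟩ := hch
    -- apply IH
    have hlast : (b :: L').getLast (by simp) = (a :: b :: L').getLast (by simp) :=
      (List.getLast_cons (by simp)).symm
    obtain ⟨c₂, hP2, hI2, hloc2, hU2⟩ :=
      ih b E' c β (List.nodup_cons.mp hnd).2 (fun x hx => hnu x (by simp [hx])) hmem'
        (hP.mono (Finset.erase_subset _ _)) (fun e he => hI e (Finset.erase_subset _ _ he))
        (hch'.imp (fun x y h => h.mono (Finset.erase_subset _ _)))
        hβI (by rw [hlast]; exact hβl.mono (Finset.erase_subset _ _))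
        (hβu.mono (Finset.erase_subset _ _))
    have hβγ : γ ≠ β := hβu s(u, b) hγmem (by simp)
    -- γ is free at a for c₂
    have hfree_a : Free c₂ E' a γ := by
      intro f hf hxa
      rw [hloc2 f ?_]
      · exact hfan_ab f hf hxa
      · intro x hx hfx
        subst hfx
        rcases Sym2.mem_iff.mp hxa with rfl | rfl
        · exact hau rfl
        · exact hanl hx
    -- γ is free at u for c₂
    have hfree_u : ∀ f ∈ E', u ∈ f → c₂ f ≠ γ := by
      intro f hf huf h
      rcases hU2 f hf huf with h' | ⟨g, hg, hug, h'⟩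
      · exact hβγ (h.symm.trans h')
      · have : c g ≠ c s(u, b) := by
          refine hP g (Finset.mem_of_mem_erase hg) s(u, b) hγmem ⟨(Finset.mem_erase.mp hg).1, u, hug, by simp⟩
        exact this (h'.symm.trans h)
    refine ⟨Function.update c₂ s(u, a) γ, ?_, ?_, ?_, ?_⟩
    · intro e he f hf ⟨hne, x, hxe, hxf⟩
      by_cases he' : e = s(u, a) <;> by_cases hf' : f = s(u, a)
      · exact absurd (he'.trans hf'.symm) hne
      · subst he'
        rw [Function.update_self, Function.update_of_ne hf']
        have hf'' : f ∈ E' := Finset.mem_erase.mpr ⟨hf', hf⟩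
        rcases Sym2.mem_iff.mp hxe with rfl | rfl
        · exact fun h => hfree_u f hf'' hxf h.symm
        · exact fun h => hfree_a f hf'' hxf h.symm
      · subst hf'
        rw [Function.update_self, Function.update_of_ne he']
        have he'' : e ∈ E' := Finset.mem_erase.mpr ⟨he', he⟩
        rcases Sym2.mem_iff.mp hxf with rfl | rfl
        · exact hfree_u e he'' hxe
        · exact hfree_a e he'' hxe
      · rw [Function.update_of_ne he', Function.update_of_ne hf']
        exact hP2 e (Finset.mem_erase.mpr ⟨he', he⟩) f (Finset.mem_erase.mpr ⟨hf', hf⟩)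
          ⟨hne, x, hxe, hxf⟩
    · intro e he
      by_cases he' : e = s(u, a)
      · subst he'; rw [Function.update_self]; exact hγI
      · rw [Function.update_of_ne he']; exact hI2 e (Finset.mem_erase.mpr ⟨he', he⟩)
    · intro e hloc
      rw [Function.update_of_ne (hloc a (by simp))]
      exact hloc2 e (fun x hx => hloc x (by simp [hx]))
    · intro e he hue
      by_cases he' : e = s(u, a)
      · subst he'
        right
        exact ⟨s(u, b), hγmem, by simp, by rw [Function.update_self]⟩
      · have he'' : e ∈ E' := Finset.mem_erase.mpr ⟨he', he⟩
        rw [Function.update_of_ne he']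
        rcases hU2 e he'' hue with h | ⟨f, hf, huf, h⟩
        · exact Or.inl h
        · exact Or.inr ⟨f, Finset.mem_of_mem_erase hf, huf, h⟩
  -- done

lemma pathW : ∀ (n : ℕ) (K : SimpleGraph V) (u y z : V)
    (p : K.Walk u y) (q : K.Walk u z), p.length ≤ n →
    (∀ x a b c', K.Adj x a → K.Adj x b → K.Adj x c' → a = b ∨ a = c' ∨ b = c') →
    (∀ a b, K.Adj u a → K.Adj u b → a = b) →
    (∀ a b, K.Adj y a → K.Adj y b → a = b) →
    (∀ a b, K.Adj z a → K.Adj z b → a = b) →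
    y ≠ z → y ≠ u → z ≠ u → p.IsPath → q.IsPath → False := by
  intro n
  induction n with
  | zero =>
    intro K u y z p q hlen _ _ _ _ _ hyu _ _ _
    cases p with
    | nil => exact hyu rfl
    | cons h p' => simp at hlen
  | succ n ihn =>
    intro K u y z p q hlen hdeg2 hdeg1u hdeg1y hdeg1z hyz hyu hzu hp hq
    cases p with
    | nil => exact hyu rfl
    | cons hadj p' =>
      rename_i a
      cases q with
      | nil => exact hzu rfl
      | cons hadj' q' =>
        rename_i a'
        have haa : a = a' := hdeg1u a a' hadj hadj'
        subst haa
        rw [SimpleGraph.Walk.cons_isPath_iff] at hp hq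
        by_cases hya : y = a
        · -- q' is a walk from a = y to z, z ≠ y so q' is a cons
          subst hya
          cases q' with
          | nil => exact hyz rfl
          | cons hadj2 q'' =>
            rename_i b
            have hbu : b ≠ u := by
              intro h; subst h
              exact hq.2 (SimpleGraph.Walk.support_cons _ _ ▸ List.mem_cons_of_mem _ q''.start_mem_support)
            exact hbu (hdeg1y u b hadj.symm hadj2).symm
        · by_cases hza : z = a
          · subst hza
            cases p' with
            | nil => exact hyz rfl
            | cons hadj2 p'' =>
              rename_i b
              have hbu : b ≠ u := by
                intro h; subst h
                exact hp.2 (SimpleGraph.Walk.support_cons _ _ ▸ List.mem_cons_of_mem _ p''.start_mem_support)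
              exact hbu (hdeg1z u b hadj.symm hadj2).symm
          · -- recurse on K minus the edge s(u,a)
            set K' := K.deleteEdges {s(u, a)} with hK'
            have hedge_p : ∀ e ∈ p'.edges, e ∉ ({s(u, a)} : Set (Sym2 V)) := by
              intro e he hmem
              rw [Set.mem_singleton_iff] at hmem
              subst hmem
              exact hp.2 (SimpleGraph.Walk.fst_mem_support_of_mem_edges p' he)
            have hedge_q : ∀ e ∈ q'.edges, e ∉ ({s(u, a)} : Set (Sym2 V)) := by
              intro e he hmem
              rw [Set.mem_singleton_iff] at hmem
              subst hmem
              exact hq.2 (SimpleGraph.Walk.fst_mem_support_of_mem_edges q' he)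
            have hKadj : ∀ x w : V, K'.Adj x w ↔ K.Adj x w ∧ s(x, w) ≠ s(u, a) := by
              intro x w
              rw [hK', SimpleGraph.deleteEdges_adj]
              simp
            refine ihn K' a y z (p'.toDeleteEdges _ hedge_p) (q'.toDeleteEdges _ hedge_q)
              ?_ ?_ ?_ ?_ ?_ hyz hya hza ?_ ?_
            · have : (p'.toDeleteEdges {s(u,a)} hedge_p).length = p'.length := by
                simp [SimpleGraph.Walk.toDeleteEdges]
              rw [this]
              simp only [SimpleGraph.Walk.length_cons] at hlen
              omega
            · intro x a₁ b₁ c₁ h₁ h₂ h₃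
              exact hdeg2 x a₁ b₁ c₁ ((hKadj _ _).mp h₁).1 ((hKadj _ _).mp h₂).1 ((hKadj _ _).mp h₃).1
            · intro c₁ d₁ h₁ h₂
              obtain ⟨h₁k, h₁e⟩ := (hKadj _ _).mp h₁
              obtain ⟨h₂k, h₂e⟩ := (hKadj _ _).mp h₂
              have hc₁ : c₁ ≠ u := by
                intro h; subst h; exact h₁e (Sym2.eq_swap)
              have hd₁ : d₁ ≠ u := by
                intro h; subst h; exact h₂e (Sym2.eq_swap)
              rcases hdeg2 a u c₁ d₁ hadj.symm h₁k h₂k with h | h | h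
              · exact absurd h.symm hc₁
              · exact absurd h.symm hd₁
              · exact h
            · intro a₁ b₁ h₁ h₂
              exact hdeg1y a₁ b₁ ((hKadj _ _).mp h₁).1 ((hKadj _ _).mp h₂).1
            · intro a₁ b₁ h₁ h₂
              exact hdeg1z a₁ b₁ ((hKadj _ _).mp h₁).1 ((hKadj _ _).mp h₂).1
            · exact hp.1.transfer _
            · exact hq.1.transfer _

def kgraph (c : Sym2 V → ℕ) (E : Finset (Sym2 V)) (α β : ℕ) : SimpleGraph V where
  Adj x y := x ≠ y ∧ s(x, y) ∈ E ∧ (c s(x, y) = α ∨ c s(x, y) = β)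
  symm := ⟨by
    intro x y ⟨h1, h2, h3⟩
    rw [Sym2.eq_swap] at h2 h3
    exact ⟨h1.symm, h2, h3⟩⟩
  loopless := ⟨fun x h => h.1 rfl⟩

open Classical in
noncomputable def kswap (c : Sym2 V → ℕ) (E : Finset (Sym2 V)) (α β : ℕ) (t : V) :
    Sym2 V → ℕ :=
  fun e => if e ∈ E ∧ (c e = α ∨ c e = β) ∧ (∃ x ∈ e, (kgraph c E α β).Reachable t x)
    then (if c e = α then β else α) else c e

section KSwap
variable {c : Sym2 V → ℕ} {E : Finset (Sym2 V)} {α β : ℕ} {t : V}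

/-- all endpoints of a swapped-eligible edge with one reachable endpoint are reachable -/
lemma kreach_all (hnd : ∀ e ∈ E, ¬ e.IsDiag) {e : Sym2 V} (he : e ∈ E)
    (hc : c e = α ∨ c e = β) {x x' : V} (hx : x ∈ e) (hx' : x' ∈ e)
    (hr : (kgraph c E α β).Reachable t x') : (kgraph c E α β).Reachable t x := by
  induction e with
  | _ p q =>
    have hpq : p ≠ q := by
      intro h; exact hnd _ he (by rw [h]; exact Sym2.mk_isDiag_iff.mpr rfl)
    have hadj : (kgraph c E α β).Adj p q := ⟨hpq, he, hc⟩
    rcases Sym2.mem_iff.mp hx with rfl | rfl <;> rcases Sym2.mem_iff.mp hx' with rfl | rfl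
    · exact hr
    · exact hr.trans hadj.symm.reachable
    · exact hr.trans hadj.reachable
    · exact hr

lemma kswap_eq_of_not_mem {e : Sym2 V} (h : e ∉ E ∨ (c e ≠ α ∧ c e ≠ β)) :
    kswap c E α β t e = c e := by
  classical
  unfold kswap
  rw [if_neg]
  rintro ⟨h1, h2, _⟩
  rcases h with h | h
  · exact h h1
  · rcases h2 with h2 | h2
    · exact h.1 h2
    · exact h.2 h2

lemma kswap_untouched (hnd : ∀ e ∈ E, ¬ e.IsDiag) {x : V} (hx : ¬ (kgraph c E α β).Reachable t x)
    {e : Sym2 V} (he : e ∈ E) (hxe : x ∈ e) : kswap c E α β t e = c e := by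
  classical
  unfold kswap
  rw [if_neg]
  rintro ⟨h1, h2, x', hx', hr⟩
  exact hx (kreach_all hnd h1 h2 hxe hx' hr)

lemma kswap_range {e : Sym2 V} :
    kswap c E α β t e = c e ∨ kswap c E α β t e = α ∨ kswap c E α β t e = β := by
  classical
  unfold kswap
  split
  · split
    · tauto
    · tauto
  · tauto

lemma kswap_proper (hnd : ∀ e ∈ E, ¬ e.IsDiag) (hP : ProperOn E c) (hαβ : α ≠ β) :
    ProperOn E (kswap c E α β t) := by
  classical
  intro e he f hf ⟨hne, x, hxe, hxf⟩
  have horig : c e ≠ c f := hP e he f hf ⟨hne, x, hxe, hxf⟩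
  unfold kswap
  by_cases hse : e ∈ E ∧ (c e = α ∨ c e = β) ∧ (∃ y ∈ e, (kgraph c E α β).Reachable t y) <;>
    by_cases hsf : f ∈ E ∧ (c f = α ∨ c f = β) ∧ (∃ y ∈ f, (kgraph c E α β).Reachable t y)
  · rw [if_pos hse, if_pos hsf]
    rcases hse.2.1 with h1 | h1 <;> rcases hsf.2.1 with h2 | h2
    · exact absurd (h1.trans h2.symm) horig
    · rw [if_pos h1, if_neg (by rw [h2]; exact hαβ.symm)]; exact hαβ.symm
    · rw [if_neg (by rw [h1]; exact hαβ.symm), if_pos h2]; exact hαβ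
    · exact absurd (h1.trans h2.symm) horig
  · rw [if_pos hse, if_neg hsf]
    -- f untouched; e touched
    obtain ⟨y, hy, hry⟩ := hse.2.2
    have hrx : (kgraph c E α β).Reachable t x := kreach_all hnd he hse.2.1 hxe hy hry
    have hcf : ¬ (c f = α ∨ c f = β) := by
      intro hc
      exact hsf ⟨hf, hc, x, hxf, hrx⟩
    push_neg at hcf
    rcases hse.2.1 with h1 | h1
    · rw [if_pos h1]; exact fun h => hcf.2 h.symm
    · rw [if_neg (by rw [h1]; exact hαβ.symm)]; exact fun h => hcf.1 h.symm
  · rw [if_neg hse, if_pos hsf]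
    obtain ⟨y, hy, hry⟩ := hsf.2.2
    have hrx : (kgraph c E α β).Reachable t x := kreach_all hnd hf hsf.2.1 hxf hy hry
    have hce : ¬ (c e = α ∨ c e = β) := by
      intro hc
      exact hse ⟨he, hc, x, hxe, hrx⟩
    push_neg at hce
    rcases hsf.2.1 with h1 | h1
    · rw [if_pos h1]; exact hce.2
    · rw [if_neg (by rw [h1]; exact hαβ.symm)]; exact hce.1
  · rw [if_neg hse, if_neg hsf]; exact horig

lemma kswap_icc {Δ : ℕ} (hα : α ∈ Finset.Icc 1 Δ) (hβ : β ∈ Finset.Icc 1 Δ)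
    (hI : ∀ e ∈ E, c e ∈ Finset.Icc 1 Δ) : ∀ e ∈ E, kswap c E α β t e ∈ Finset.Icc 1 Δ := by
  intro e he
  rcases kswap_range (c := c) (E := E) (α := α) (β := β) (t := t) (e := e) with h | h | h <;>
    rw [h]
  · exact hI e he
  · exact hα
  · exact hβ

lemma kswap_free_other {x : V} {γ : ℕ} (hγα : γ ≠ α) (hγβ : γ ≠ β)
    (hfree : Free c E x γ) : Free (kswap c E α β t) E x γ := by
  intro f hf hxf h
  rcases kswap_range (c := c) (E := E) (α := α) (β := β) (t := t) (e := f) with h' | h' | h'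
  · exact hfree f hf hxf (h' ▸ h)
  · exact hγα (h.symm.trans h')
  · exact hγβ (h.symm.trans h')

lemma kswap_free_untouched (hnd : ∀ e ∈ E, ¬ e.IsDiag) {x : V} {γ : ℕ} (hx : ¬ (kgraph c E α β).Reachable t x)
    (hfree : Free c E x γ) : Free (kswap c E α β t) E x γ := by
  intro f hf hxf
  rw [kswap_untouched hnd hx hf hxf]
  exact hfree f hf hxf

lemma kswap_pivot (hnd : ∀ e ∈ E, ¬ e.IsDiag) (hαβ : α ≠ β) (hfree : Free c E t β) : Free (kswap c E α β t) E t α := by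
  classical
  intro f hf htf h
  by_cases hsf : f ∈ E ∧ (c f = α ∨ c f = β) ∧ (∃ y ∈ f, (kgraph c E α β).Reachable t y)
  · unfold kswap at h
    rw [if_pos hsf] at h
    rcases hsf.2.1 with h1 | h1
    · rw [if_pos h1] at h; exact hαβ h.symm
    · exact hfree f hf htf h1
  · unfold kswap at h
    rw [if_neg hsf] at h
    exact hsf ⟨hf, Or.inl h, t, htf, SimpleGraph.Reachable.refl t⟩

end KSwap

lemma getLast?_append_right {γ : Type*} (l1 l2 : List γ) (h : l2 ≠ []) :
    (l1 ++ l2).getLast? = l2.getLast? := by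
  rw [List.getLast?_append, List.getLast?_eq_getLast h]
  simp

lemma ext_aux (Δ : ℕ) (u v : V) (E : Finset (Sym2 V)) (c : Sym2 V → ℕ) (α : ℕ)
    (hnd : ∀ e ∈ E, ¬ e.IsDiag)
    (huv : s(u, v) ∈ E)
    (hP : ProperOn (E.erase s(u, v)) c)
    (hI : ∀ e ∈ E.erase s(u, v), c e ∈ Finset.Icc 1 Δ)
    (hdeg : ∀ w, w ≠ u → s(u, w) ∈ E → degAt (E.erase s(u, v)) w < Δ)
    (hαI : α ∈ Finset.Icc 1 Δ)
    (hαu : Free c (E.erase s(u, v)) u α) :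
    ∀ (n : ℕ) (y : V) (T : List V),
      ((Finset.univ.filter (fun x => x ∉ y :: T)).card ≤ n) →
      (y :: T).Nodup →
      (∀ x ∈ y :: T, x ≠ u) →
      (∀ x ∈ y :: T, s(u, x) ∈ E) →
      ((y :: T).getLast (by simp) = v) →
      List.IsChain (fun b a => Free c (E.erase s(u, v)) a (c s(u, b))) (y :: T) →
      ∃ c', ProperOn E c' ∧ ∀ e ∈ E, c' e ∈ Finset.Icc 1 Δ := by
  intro n
  induction n using Nat.strong_induction_on with
  | _ n ihn =>
  intro y T hfuel hnd' hneu hmem hlast hchain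
  classical
  set E₀ := E.erase s(u, v) with hE₀
  have hnd₀ : ∀ e ∈ E₀, ¬ e.IsDiag := fun e he => hnd e (Finset.mem_of_mem_erase he)
  have hsubE : E₀ ⊆ E := Finset.erase_subset _ _
  have hyu : y ≠ u := hneu y (by simp)
  obtain ⟨β, hβI, hβy⟩ := exists_free hI (hdeg y hyu (hmem y (by simp)))
  obtain ⟨R, hR⟩ : ∃ R, (y :: T).reverse = v :: R := by
    cases hrev : (y :: T).reverse with
    | nil => exact absurd hrev (by simp)
    | cons hd tl =>
      have h1 : (y :: T).reverse.head? = some v := by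
        rw [List.head?_reverse, List.getLast?_eq_getLast (by simp)]
        exact congrArg some hlast
      rw [hrev] at h1
      simp only [List.head?_cons, Option.some.injEq] at h1
      exact ⟨tl, by rw [h1]⟩
  have hrevNodup : (v :: R).Nodup := by rw [← hR]; exact List.nodup_reverse.mpr hnd'
  have hrevMem : ∀ x ∈ v :: R, x ∈ y :: T := by
    intro x hx; rw [← List.mem_reverse, hR]; exact hx
  have hrevLast' : (v :: R).getLast (by simp) = y := by
    have h1 : (v :: R).getLast? = some y := by
      rw [← hR, List.getLast?_reverse]; simp
    rw [List.getLast?_eq_getLast (by simp)] at h1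
    exact Option.some.inj h1
  have hrevChain : List.IsChain (fun x₁ x₂ => Free c E₀ x₁ (c s(u, x₂))) (v :: R) := by
    rw [← hR]
    exact List.isChain_reverse.mpr hchain
  by_cases hβu : Free c E₀ u β
  · obtain ⟨c', hP', hI', _, _⟩ := rot Δ u R v E c β hrevNodup
      (fun x hx => hneu x (hrevMem x hx)) (fun x hx => hmem x (hrevMem x hx))
      hP hI hrevChain hβI (by rw [hrevLast']; exact hβy) hβu
    exact ⟨c', hP', hI'⟩
  · have hβex : ∃ f ∈ E₀, u ∈ f ∧ c f = β := by
      unfold Free at hβu; push_neg at hβu; exact hβu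
    obtain ⟨f, hf, huf, hcf⟩ := hβex
    obtain ⟨w, rfl⟩ := Sym2.mem_iff_exists.mp huf
    have hwu : w ≠ u := by
      rintro rfl
      exact hnd₀ _ hf (Sym2.mk_isDiag_iff.mpr rfl)
    have hαβ : α ≠ β := by
      intro h
      exact hαu s(u, w) hf (by simp) (hcf.trans h.symm)
    by_cases hwT : w ∈ y :: T
    · -- Kempe case
      have hwy : w ≠ y := by
        rintro rfl
        exact hβy s(u, w) hf (by simp) hcf
      have hwv : w ≠ v := by
        rintro rfl
        exact (Finset.mem_erase.mp hf).1 rfl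
      obtain ⟨A, t', hsplit⟩ := List.append_of_mem hwT
      obtain ⟨A', rfl⟩ : ∃ A', A = y :: A' := by
        cases A with
        | nil =>
          simp only [List.nil_append, List.cons.injEq] at hsplit
          exact absurd hsplit.1.symm hwy
        | cons a0 A' =>
          have h1 : a0 = y := by
            have h2 := congrArg List.head? hsplit
            simp only [List.head?_cons, List.cons_append, Option.some.injEq] at h2
            exact h2.symm
          exact ⟨A', by rw [h1]⟩
      obtain ⟨z, B, rfl⟩ : ∃ z B, t' = z :: B := by
        cases t' with
        | nil =>
          exfalso
          have h1 : (y :: T).getLast? = some w := by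
            rw [hsplit, getLast?_append_right _ [w] (by simp)]
            simp
          rw [List.getLast?_eq_getLast (by simp)] at h1
          exact hwv ((Option.some.inj h1).symm.trans hlast)
        | cons z B => exact ⟨z, B, rfl⟩
      have hnodup_split : ((y :: A') ++ w :: z :: B).Nodup := hsplit ▸ hnd'
      rw [List.nodup_append] at hnodup_split
      obtain ⟨hnodupA, hnodupW, hdisj⟩ := hnodup_split
      have hwzB : w ∉ z :: B := (List.nodup_cons.mp hnodupW).1
      have hwyA : w ∉ y :: A' := fun h => hdisj _ h _ (by simp) rfl
      have hzmem : z ∈ y :: T := by rw [hsplit]; simp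
      have hzu : z ≠ u := hneu z hzmem
      have hzy : z ≠ y := by
        rintro rfl
        exact hdisj _ (by simp : z ∈ z :: A') _ (by simp) rfl
      have h0 : (y :: T).getLast? = some v := by
        rw [List.getLast?_eq_getLast (by simp)]
        exact congrArg some hlast
      have hzBv : (z :: B).getLast? = some v := by
        have h1 := congrArg List.getLast? hsplit
        rw [h0, getLast?_append_right _ (w :: z :: B) (by simp)] at h1
        rw [show w :: z :: B = [w] ++ z :: B from rfl,
          getLast?_append_right _ (z :: B) (by simp)] at h1
        exact h1.symm
      have hvzB : v ∈ z :: B := by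
        have h1 := hzBv
        rw [List.getLast?_eq_getLast (by simp)] at h1
        rw [← Option.some.inj h1]
        exact List.getLast_mem _
      have hvyA : v ∉ y :: A' := fun h => hdisj _ h _ (by simp [hvzB]) rfl
      have hzβ : Free c E₀ z β := by
        have hsuf : (w :: z :: B) <:+ (y :: T) := ⟨y :: A', hsplit.symm⟩
        have hc2 := hchain.suffix hsuf
        rw [List.isChain_cons_cons] at hc2
        have := hc2.1
        rw [hcf] at this
        exact this
      -- the Kempe graph
      set K := kgraph c E₀ α β with hK
      have hsame : ∀ x a b, K.Adj x a → K.Adj x b → c s(x, a) = c s(x, b) → a = b := by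
        intro x a b ha hb hcc
        by_contra hab
        have hne : s(x, a) ≠ s(x, b) := fun h => hab (Sym2.congr_right.mp h)
        exact hP s(x, a) ha.2.1 s(x, b) hb.2.1 ⟨hne, x, by simp, by simp⟩ hcc
      have hdeg2K : ∀ x a b d, K.Adj x a → K.Adj x b → K.Adj x d → a = b ∨ a = d ∨ b = d := by
        intro x a b d ha hb hd
        rcases ha.2.2 with h1 | h1 <;> rcases hb.2.2 with h2 | h2 <;> rcases hd.2.2 with h3 | h3
        · exact Or.inl (hsame x a b ha hb (h1.trans h2.symm))
        · exact Or.inl (hsame x a b ha hb (h1.trans h2.symm))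
        · exact Or.inr (Or.inl (hsame x a d ha hd (h1.trans h3.symm)))
        · exact Or.inr (Or.inr (hsame x b d hb hd (h2.trans h3.symm)))
        · exact Or.inr (Or.inr (hsame x b d hb hd (h2.trans h3.symm)))
        · exact Or.inr (Or.inl (hsame x a d ha hd (h1.trans h3.symm)))
        · exact Or.inl (hsame x a b ha hb (h1.trans h2.symm))
        · exact Or.inl (hsame x a b ha hb (h1.trans h2.symm))
      have hdeg1 : ∀ x γ', Free c E₀ x γ' → (γ' = α ∨ γ' = β) →
          ∀ a b, K.Adj x a → K.Adj x b → a = b := by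
        intro x γ' hfr hγ' a b ha hb
        apply hsame x a b ha hb
        have hca : c s(x, a) ≠ γ' := hfr _ ha.2.1 (by simp)
        have hcb : c s(x, b) ≠ γ' := hfr _ hb.2.1 (by simp)
        rcases hγ' with rfl | rfl <;>
          (rcases ha.2.2 with h1 | h1 <;> rcases hb.2.2 with h2 | h2 <;>
            first
              | exact absurd h1 hca
              | exact absurd h2 hcb
              | exact h1.trans h2.symm)
      have hdeg1u := hdeg1 u α hαu (Or.inl rfl)
      have hdeg1y := hdeg1 y β hβy (Or.inr rfl)
      have hdeg1z := hdeg1 z β hzβ (Or.inr rfl)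
      have hW : ¬ (K.Reachable u y ∧ K.Reachable u z) := by
        rintro ⟨h1, h2⟩
        obtain ⟨p⟩ := h1
        obtain ⟨q⟩ := h2
        exact pathW (p.toPath.val.length) K u y z p.toPath.val q.toPath.val le_rfl
          hdeg2K hdeg1u hdeg1y hdeg1z (Ne.symm hzy) hyu hzu p.toPath.prop q.toPath.prop
      -- shared: M_A = (z :: B).reverse = v :: RA
      obtain ⟨RA, hRA⟩ : ∃ RA, (z :: B).reverse = v :: RA := by
        cases hrev : (z :: B).reverse with
        | nil => exact absurd hrev (by simp)
        | cons hd tl =>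
          have h1 : (z :: B).reverse.head? = some v := by
            rw [List.head?_reverse]; exact hzBv
          rw [hrev] at h1
          simp only [List.head?_cons, Option.some.injEq] at h1
          exact ⟨tl, by rw [h1]⟩
      have hMA_nodup : (v :: RA).Nodup := by
        rw [← hRA]
        exact List.nodup_reverse.mpr (List.nodup_cons.mp hnodupW).2
      have hMA_memzB : ∀ x ∈ v :: RA, x ∈ z :: B := by
        intro x hx; rw [← List.mem_reverse, hRA]; exact hx
      have hMA_mem : ∀ x ∈ v :: RA, x ∈ y :: T := by
        intro x hx
        rw [hsplit]
        exact List.mem_append_right _ (by simp [hMA_memzB x hx])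
      have hMA_last : (v :: RA).getLast (by simp) = z := by
        have h1 : (v :: RA).getLast? = some z := by
          rw [← hRA, List.getLast?_reverse]; simp
        rw [List.getLast?_eq_getLast (by simp)] at h1
        exact Option.some.inj h1
      have hMA_chain_c : List.IsChain (fun x₁ x₂ => Free c E₀ x₁ (c s(u, x₂))) (v :: RA) := by
        rw [← hRA]
        exact List.isChain_reverse.mpr
          (hchain.suffix ⟨(y :: A') ++ [w], by rw [hsplit]; simp⟩)
      -- the transfer fact: swapping any pivot keeps the fan relation on non-special edges
      have htrans : ∀ (t : V) (x₁ x₂ : V), x₂ ∈ y :: T → x₂ ≠ v → x₂ ≠ w →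
          Free c E₀ x₁ (c s(u, x₂)) →
          Free (kswap c E₀ α β t) E₀ x₁ ((kswap c E₀ α β t) s(u, x₂)) := by
        intro t x₁ x₂ hx₂ hx₂v hx₂w hfr
        have hmem₂ : s(u, x₂) ∈ E₀ :=
          Finset.mem_erase.mpr ⟨fun h => hx₂v (Sym2.congr_right.mp h), hmem _ hx₂⟩
        have hcα : c s(u, x₂) ≠ α := hαu _ hmem₂ (by simp)
        have hcβ : c s(u, x₂) ≠ β := by
          intro h
          apply hx₂w
          exact hsame u x₂ w ⟨fun hh => (hneu _ hx₂) hh.symm, hmem₂, Or.inr h⟩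
            ⟨Ne.symm hwu, hf, Or.inr hcf⟩ (h.trans hcf.symm)
        have heq : (kswap c E₀ α β t) s(u, x₂) = c s(u, x₂) :=
          kswap_eq_of_not_mem (Or.inr ⟨hcα, hcβ⟩)
        rw [heq]
        exact kswap_free_other hcα hcβ hfr
      by_cases hzu_reach : K.Reachable z u
      · -- CASE B : pivot y
        have huz : K.Reachable u z := hzu_reach.symm
        have hyu_reach : ¬ K.Reachable u y := fun h => hW ⟨h, huz⟩
        have hy_u : ¬ K.Reachable y u := fun h => hyu_reach h.symm
        have hy_z : ¬ K.Reachable y z := fun h => hyu_reach (huz.trans h.symm)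
        have hy_w : ¬ K.Reachable y w := by
          intro h
          have hadj_uw : K.Adj u w := ⟨Ne.symm hwu, hf, Or.inr hcf⟩
          exact hyu_reach (hadj_uw.reachable.trans h.symm)
        have hPc₂ : ProperOn E₀ (kswap c E₀ α β y) := kswap_proper hnd₀ hP hαβ
        have hIc₂ : ∀ e ∈ E₀, (kswap c E₀ α β y) e ∈ Finset.Icc 1 Δ := kswap_icc hαI hβI hI
        have hchain_MA : List.IsChain
            (fun x₁ x₂ => Free (kswap c E₀ α β y) E₀ x₁ ((kswap c E₀ α β y) s(u, x₂)))
            (v :: RA) := by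
          refine chain'_transfer _ ?_ hMA_chain_c
          intro a b hb hrel
          have hbRA : b ∈ v :: RA := List.mem_cons_of_mem _ hb
          have hbv : b ≠ v := by
            rintro rfl
            exact (List.nodup_cons.mp hMA_nodup).1 hb
          have hbw : b ≠ w := fun h => hwzB (h ▸ hMA_memzB b hbRA)
          exact htrans y a b (hMA_mem b hbRA) hbv hbw hrel
        have hchain_wA_c : List.IsChain (fun x₁ x₂ => Free c E₀ x₁ (c s(u, x₂)))
            (w :: (y :: A').reverse) := by
          have hpre : ((y :: A') ++ [w]) <+: (y :: T) := ⟨z :: B, by rw [hsplit]; simp⟩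
          have h1 := List.isChain_reverse.mpr (hchain.prefix hpre)
          rw [List.reverse_append] at h1
          simpa using h1
        have hchain_wA : List.IsChain
            (fun x₁ x₂ => Free (kswap c E₀ α β y) E₀ x₁ ((kswap c E₀ α β y) s(u, x₂)))
            (w :: (y :: A').reverse) := by
          refine chain'_transfer _ ?_ hchain_wA_c
          intro a b hb hrel
          have hbyA : b ∈ y :: A' := by
            rw [← List.mem_reverse]
            simpa using hb
          have hbv : b ≠ v := fun h => hvyA (h ▸ hbyA)
          have hbw : b ≠ w := fun h => hwyA (h ▸ hbyA)
          have hbyT : b ∈ y :: T := by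
            rw [hsplit]
            exact List.mem_append_left _ hbyA
          exact htrans y a b hbyT hbv hbw hrel
        have hjunc : Free (kswap c E₀ α β y) E₀ z ((kswap c E₀ α β y) s(u, w)) := by
          have h1 : (kswap c E₀ α β y) s(u, w) = β := by
            rw [kswap_untouched hnd₀ hy_u hf (by simp)]
            exact hcf
          rw [h1]
          exact kswap_free_untouched hnd₀ hy_z hzβ
        have hMB_eq : v :: R = (v :: RA) ++ (w :: (y :: A').reverse) := by
          rw [← hR, ← hRA, hsplit]
          simp
        have hMB_chain : List.IsChain
            (fun x₁ x₂ => Free (kswap c E₀ α β y) E₀ x₁ ((kswap c E₀ α β y) s(u, x₂)))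
            (v :: R) := by
          rw [hMB_eq, List.isChain_append]
          refine ⟨hchain_MA, hchain_wA, ?_⟩
          intro x hx y' hy'
          have hxz : x = z := by
            rw [← hRA, List.getLast?_reverse] at hx
            simp only [List.head?_cons, Option.mem_def, Option.some.injEq] at hx
            exact hx.symm
          have hy'w : y' = w := by
            simp only [List.head?_cons, Option.mem_def, Option.some.injEq] at hy'
            exact hy'.symm
          subst hxz; subst hy'w
          exact hjunc
        obtain ⟨c', hP', hI', _, _⟩ := rot Δ u R v E (kswap c E₀ α β y) α hrevNodup
          (fun x hx => hneu x (hrevMem x hx)) (fun x hx => hmem x (hrevMem x hx))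
          hPc₂ hIc₂ hMB_chain hαI
          (by rw [hrevLast']; exact kswap_pivot hnd₀ hαβ hβy)
          (kswap_free_untouched hnd₀ hy_u hαu)
        exact ⟨c', hP', hI'⟩
      · -- CASE A : pivot z
        have hPc₂ : ProperOn E₀ (kswap c E₀ α β z) := kswap_proper hnd₀ hP hαβ
        have hIc₂ : ∀ e ∈ E₀, (kswap c E₀ α β z) e ∈ Finset.Icc 1 Δ := kswap_icc hαI hβI hI
        have hchain_MA : List.IsChain
            (fun x₁ x₂ => Free (kswap c E₀ α β z) E₀ x₁ ((kswap c E₀ α β z) s(u, x₂)))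
            (v :: RA) := by
          refine chain'_transfer _ ?_ hMA_chain_c
          intro a b hb hrel
          have hbRA : b ∈ v :: RA := List.mem_cons_of_mem _ hb
          have hbv : b ≠ v := by
            rintro rfl
            exact (List.nodup_cons.mp hMA_nodup).1 hb
          have hbw : b ≠ w := fun h => hwzB (h ▸ hMA_memzB b hbRA)
          exact htrans z a b (hMA_mem b hbRA) hbv hbw hrel
        obtain ⟨c', hP', hI', _, _⟩ := rot Δ u RA v E (kswap c E₀ α β z) α hMA_nodup
          (fun x hx => hneu x (hMA_mem x hx)) (fun x hx => hmem x (hMA_mem x hx))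
          hPc₂ hIc₂ hchain_MA hαI
          (by rw [hMA_last]; exact kswap_pivot hnd₀ hαβ hzβ)
          (kswap_free_untouched hnd₀ hzu_reach hαu)
        exact ⟨c', hP', hI'⟩
    · -- extend the fan
      have hwmem : s(u, w) ∈ E := hsubE hf
      have hwfil : w ∈ Finset.univ.filter (fun x => x ∉ y :: T) := by
        simp only [Finset.mem_filter, Finset.mem_univ, true_and]
        exact hwT
      have hcard1 : 1 ≤ (Finset.univ.filter (fun x => x ∉ y :: T)).card :=
        Finset.card_pos.mpr ⟨w, hwfil⟩
      have hstep : (Finset.univ.filter (fun x => x ∉ w :: y :: T)) =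
          (Finset.univ.filter (fun x => x ∉ y :: T)).erase w := by
        ext x
        simp only [Finset.mem_filter, Finset.mem_univ, true_and, Finset.mem_erase,
          List.mem_cons, not_or]
      refine ihn ((Finset.univ.filter (fun x => x ∉ y :: T)).card - 1) (by omega)
        w (y :: T) ?_ ?_ ?_ ?_ ?_ ?_
      · rw [hstep, Finset.card_erase_of_mem hwfil]
      · exact List.nodup_cons.mpr ⟨hwT, hnd'⟩
      · intro x hx
        rcases List.mem_cons.mp hx with rfl | hx'
        · exact hwu
        · exact hneu x hx'
      · intro x hx
        rcases List.mem_cons.mp hx with rfl | hx'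
        · exact hwmem
        · exact hmem x hx'
      · rw [List.getLast_cons (by simp)]
        exact hlast
      · rw [List.isChain_cons_cons]
        refine ⟨?_, hchain⟩
        rw [hcf]
        exact hβy

lemma ext_step (Δ : ℕ) (u v : V) (E : Finset (Sym2 V)) (c : Sym2 V → ℕ)
    (hnd : ∀ e ∈ E, ¬ e.IsDiag)
    (huv : s(u, v) ∈ E) (hvu : v ≠ u)
    (hP : ProperOn (E.erase s(u, v)) c)
    (hI : ∀ e ∈ E.erase s(u, v), c e ∈ Finset.Icc 1 Δ)
    (hdeg : ∀ w, w ≠ u → s(u, w) ∈ E → degAt (E.erase s(u, v)) w < Δ)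
    (hdegu : degAt (E.erase s(u, v)) u < Δ) :
    ∃ c', ProperOn E c' ∧ ∀ e ∈ E, c' e ∈ Finset.Icc 1 Δ := by
  obtain ⟨α, hαI, hαu⟩ := exists_free hI hdegu
  exact ext_aux Δ u v E c α hnd huv hP hI hdeg hαI hαu _ v []
    le_rfl (by simp) (by simpa using hvu) (by simpa using huv) (by simp) (by simp)

lemma main (Δ : ℕ) (P : V → Prop) :
    ∀ (n : ℕ) (E : Finset (Sym2 V)), E.card ≤ n →
      (∀ e ∈ E, ¬ e.IsDiag) →
      (∀ x y, s(x, y) ∈ E → ¬ P x → P y) →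
      (∀ x, P x → degAt E x < Δ) →
      (∀ x, degAt E x ≤ Δ) →
      ∃ c, ProperOn E c ∧ ∀ e ∈ E, c e ∈ Finset.Icc 1 Δ := by
  intro n
  induction n with
  | zero =>
    intro E hcard _ _ _ _
    have hE : E = ∅ := Finset.card_eq_zero.mp (Nat.le_zero.mp hcard)
    subst hE
    exact ⟨fun _ => 0, fun e he => absurd he (Finset.notMem_empty e),
      fun e he => absurd he (Finset.notMem_empty e)⟩
  | succ n ih =>
    intro E hcard hnd h1 h2 h3
    classical
    rcases E.eq_empty_or_nonempty with rfl | ⟨e₀, he₀⟩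
    · exact ⟨fun _ => 0, fun e he => absurd he (Finset.notMem_empty e),
        fun e he => absurd he (Finset.notMem_empty e)⟩
    have hchoice : ∃ u v', s(u, v') ∈ E ∧ (∀ w, w ≠ u → s(u, w) ∈ E → P w) := by
      by_cases hex : ∃ u v', s(u, v') ∈ E ∧ ¬ P u
      · obtain ⟨u, v', huv, hPu⟩ := hex
        exact ⟨u, v', huv, fun w hw hwE => h1 u w hwE hPu⟩
      · push_neg at hex
        obtain ⟨⟨x, y'⟩, hrep⟩ := Quot.exists_rep e₀
        have hxy : s(x, y') ∈ E := by
          have : s(x, y') = e₀ := hrep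
          rw [this]; exact he₀
        refine ⟨x, y', hxy, fun w hw hwE => ?_⟩
        exact hex w x (by rw [Sym2.eq_swap]; exact hwE)
    obtain ⟨u, v', huv, hu⟩ := hchoice
    have hvu : v' ≠ u := by
      rintro rfl
      exact hnd _ huv (Sym2.mk_isDiag_iff.mpr rfl)
    have hEsub : E.erase s(u, v') ⊆ E := Finset.erase_subset _ _
    obtain ⟨c, hPc, hIc⟩ := ih (E.erase s(u, v'))
      (by
        rw [Finset.card_erase_of_mem huv]
        omega)
      (fun e he => hnd e (hEsub he))
      (fun x y hxy hPx => h1 x y (hEsub hxy) hPx)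
      (fun x hx => lt_of_le_of_lt (degAt_mono hEsub x) (h2 x hx))
      (fun x => le_trans (degAt_mono hEsub x) (h3 x))
    refine ext_step Δ u v' E c hnd huv hvu hPc hIc ?_ ?_
    · intro w hw hwE
      exact lt_of_le_of_lt (degAt_mono hEsub w) (h2 w (hu w hw hwE))
    · rw [degAt_erase huv (by simp)]
      have h4 : 1 ≤ degAt E u := by
        refine Finset.card_pos.mpr ⟨s(u, v'), ?_⟩
        simp [huv]
      have h5 := h3 u
      omega

end Fournier

open Fournier

/-- The `μ = 1` case of Fournier's theorem: if `M` is a maximal matching of a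
simple graph `G` with maximum degree `Δ`, then `G \ M` has a proper
edge-colouring with colours from `{1, …, Δ}`. -/
theorem fournier_simple {V : Type} [Fintype V] [DecidableEq V] (G : SimpleGraph V)
    [DecidableRel G.Adj] (Δ : ℕ) (hΔ : ∀ v, G.degree v ≤ Δ)
    (M : Set (Sym2 V)) (hM : G.IsMatchingSet M)
    (hmax : ∀ f ∈ G.edgeSet, f ∉ M → ∃ e ∈ M, EdgeAdj e f) :
    ∃ c : Sym2 V → ℕ, G.IsProperEC M Δ c := by
  classical
  set E : Finset (Sym2 V) := G.edgeFinset.filter (fun e => e ∉ M) with hE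
  have hmemE : ∀ e, e ∈ E ↔ e ∈ G.edgeSet ∧ e ∉ M := by
    intro e
    rw [hE, Finset.mem_filter, SimpleGraph.mem_edgeFinset]
  set P : V → Prop := fun x => ∃ e ∈ M, x ∈ e with hPdef
  have hGdeg : ∀ x : V, (G.edgeFinset.filter (fun e => x ∈ e)).card = G.degree x := by
    intro x
    rw [← SimpleGraph.incidenceFinset_eq_filter, SimpleGraph.card_incidenceFinset_eq_degree]
  have hdegsub : ∀ x : V, degAt E x ≤ G.degree x := by
    intro x
    rw [← hGdeg]
    exact Finset.card_le_card (Finset.filter_subset_filter _ (Finset.filter_subset _ _))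
  obtain ⟨c, hPc, hIc⟩ := main Δ P E.card E le_rfl
    (fun e he => G.not_isDiag_of_mem_edgeSet ((hmemE e).mp he).1)
    (by
      intro x y hxy hPx
      obtain ⟨hxyE, hxyM⟩ := (hmemE _).mp hxy
      obtain ⟨m, hm, hne, t, htm, hts⟩ := hmax _ hxyE hxyM
      rcases Sym2.mem_iff.mp hts with rfl | rfl
      · exact absurd ⟨m, hm, htm⟩ hPx
      · exact ⟨m, hm, htm⟩)
    (by
      intro x hx
      obtain ⟨m, hm, hxm⟩ := hx
      have hmE : m ∈ G.edgeFinset.filter (fun e => x ∈ e) := by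
        rw [Finset.mem_filter, SimpleGraph.mem_edgeFinset]
        exact ⟨hM.1 hm, hxm⟩
      have hsub : E.filter (fun e => x ∈ e) ⊆ (G.edgeFinset.filter (fun e => x ∈ e)).erase m := by
        intro e he
        rw [Finset.mem_filter] at he
        obtain ⟨heE, hxe⟩ := he
        obtain ⟨heG, heM⟩ := (hmemE e).mp heE
        refine Finset.mem_erase.mpr ⟨fun h => heM (h ▸ hm), ?_⟩
        rw [Finset.mem_filter, SimpleGraph.mem_edgeFinset]
        exact ⟨heG, hxe⟩
      have h6 : degAt E x ≤ (G.edgeFinset.filter (fun e => x ∈ e)).card - 1 := by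
        have := Finset.card_le_card hsub
        rwa [Finset.card_erase_of_mem hmE] at this
      have h7 : 1 ≤ (G.edgeFinset.filter (fun e => x ∈ e)).card :=
        Finset.card_pos.mpr ⟨m, hmE⟩
      have h8 := hGdeg x
      have h9 := hΔ x
      omega)
    (fun x => le_trans (hdegsub x) (hΔ x))
  refine ⟨c, ?_, ?_⟩
  · intro e he heM
    exact hIc e ((hmemE e).mpr ⟨he, heM⟩)
  · intro e he f hf heM hfM hadj
    exact hPc e ((hmemE e).mpr ⟨he, heM⟩) f ((hmemE f).mpr ⟨hf, hfM⟩) hadj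
end

section
/- Let G be a multigraph, M a matching of G whose edges are pairwise at distance at least 9, Φ : M → {1, …, Δ + μ} a precolouring, M′ ⊇ M a matching, and φ a proper (Δ + μ − 1)-edge-colouring of G \ M′. Suppose that for every i ∈ {1, …, Δ + μ − 1}, every edge of the alternating structure A_i (the union over endpoints u of edges of M_i of the maximal path from u alternating between φ-colour-i edges and edges of M′ \ M) lies within distance 3 of some edge of M_i. Then Φ extends to a proper (Δ + μ)-edge-colouring of G. -/
open Finset

namespace Multigraph

variable {V E : Type} [Fintype V] [Fintype E] [DecidableEq V] [DecidableEq E]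

/-- Colour `c` is missing at the vertex `v`, where `φ` colours the edges
outside `D` from `{1, …, k}`. -/
def MissingAt (G : Multigraph V E) (D : Finset E) (φ : E → ℕ) (k : ℕ) (v : V) (c : ℕ) : Prop :=
  c ∈ Finset.Icc 1 k ∧ ∀ g, g ∉ D → v ∈ G.ends g → φ g ≠ c

/-- A multi-fan `(f₁, x₁, …, f_p, x_p)` at `z` with respect to the edge
`e = f₁` and the colouring `φ` of the edges outside `D`. -/
structure IsMultiFan (G : Multigraph V E) (D : Finset E) (φ : E → ℕ) (k : ℕ)
    (z : V) (e : E) (p : ℕ) (f : Fin p → E) (x : Fin p → V) : Prop where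
  pos : 0 < p
  inj : Function.Injective f
  first : f ⟨0, pos⟩ = e
  ends_eq : ∀ i, G.ends (f i) = s(z, x i)
  coloured : ∀ i : Fin p, i.val ≠ 0 → f i ∉ D
  missing : ∀ i : Fin p, i.val ≠ 0 →
    ∃ j : Fin p, j.val < i.val ∧ G.MissingAt D φ k (x j) (φ (f i))

/-- A maximal multi-fan: it cannot be extended by any further coloured edge
at `z`. -/
def IsMaximalMultiFan (G : Multigraph V E) (D : Finset E) (φ : E → ℕ) (k : ℕ)
    (z : V) (e : E) (p : ℕ) (f : Fin p → E) (x : Fin p → V) : Prop :=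
  G.IsMultiFan D φ k z e p f x ∧
    ∀ g, g ∉ D → g ∉ Set.range f → z ∈ G.ends g →
      ¬ ∃ j : Fin p, G.MissingAt D φ k (x j) (φ g)

/-- A path starting at `u` that alternates between edges `φ`-coloured `i`
and edges of `M' \ M`. -/
def IsAltPath (G : Multigraph V E) (M M' : Finset E) (φ : E → ℕ) (i : ℕ) (u : V)
    (n : ℕ) (w : Fin (n + 1) → V) (g : Fin n → E) : Prop :=
  w 0 = u ∧ Function.Injective w ∧
    (∀ k : Fin n, G.ends (g k) = s(w k.castSucc, w k.succ)) ∧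
    ∀ k : Fin n, if Even k.val then g k ∉ M' ∧ φ (g k) = i else g k ∈ M' \ M

/-- The maximal alternating path starting at `u` contains more than one edge,
i.e. there is an alternating path from `u` with at least two edges. -/
def LongAlt (G : Multigraph V E) (M M' : Finset E) (φ : E → ℕ) (i : ℕ) (u : V) : Prop :=
  ∃ (n : ℕ) (w : Fin (n + 1) → V) (g : Fin n → E),
    G.IsAltPath M M' φ i u n w g ∧ 2 ≤ n

/-- The set `A_i`: all edges lying on an alternating path starting at an
endpoint of an edge of `M` precoloured `i`. -/
def AltSet (G : Multigraph V E) (M M' : Finset E) (φ Φ : E → ℕ) (i : ℕ) : Set E :=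
  {a | ∃ e ∈ M, Φ e = i ∧ ∃ u ∈ G.ends e, ∃ (n : ℕ) (w : Fin (n + 1) → V)
    (g : Fin n → E) (k : Fin n), G.IsAltPath M M' φ i u n w g ∧ g k = a}

/-- An edge `e ∈ M` is bad with respect to `(M', φ)`: there is a path
`e, e₁, e₂` with `φ e₁ = Φ e` and `e₂ ∈ M' \ M`. -/
def IsBadEdge (G : Multigraph V E) (M M' : Finset E) (Φ φ : E → ℕ) (e : E) : Prop :=
  e ∈ M ∧ ∃ e₁ e₂, G.EdgeAdj e e₁ ∧ G.EdgeAdj e₁ e₂ ∧ e₁ ∉ M' ∧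
    φ e₁ = Φ e ∧ e₂ ∈ M' \ M

end Multigraph

set_option linter.unusedSectionVars false

namespace Multigraph

variable {V E : Type} [Fintype V] [Fintype E] [DecidableEq V] [DecidableEq E]

lemma exists_ends (G : Multigraph V E) (e : E) : ∃ u v, u ≠ v ∧ G.ends e = s(u, v) := by
  obtain ⟨⟨u, v⟩, h'⟩ := Quot.exists_rep (G.ends e)
  have h : G.ends e = s(u, v) := h'.symm
  have hl := G.loopless e
  rw [h] at hl
  exact ⟨u, v, by simpa using hl, h⟩

lemma exists_other (G : Multigraph V E) {e : E} {v : V} (hv : v ∈ G.ends e) :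
    ∃ x, x ≠ v ∧ G.ends e = s(v, x) := by
  obtain ⟨x, hx⟩ := Sym2.mem_iff_exists.mp hv
  have hl := G.loopless e
  rw [hx] at hl
  exact ⟨x, fun h => hl (by simp [h]), hx⟩

lemma mem_ends_left (G : Multigraph V E) {e : E} {u v : V} (h : G.ends e = s(u, v)) :
    u ∈ G.ends e := by rw [h]; exact Sym2.mem_mk_left _ _

lemma mem_ends_right (G : Multigraph V E) {e : E} {u v : V} (h : G.ends e = s(u, v)) :
    v ∈ G.ends e := by rw [h]; exact Sym2.mem_mk_right _ _

lemma walk_step (G : Multigraph V E) {e : E} {u v : V} (hu : u ∈ G.ends e)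
    (hv : v ∈ G.ends e) : ∃ p : G.toSimple.Walk u v, p.length ≤ 1 := by
  by_cases h : u = v
  · subst h; exact ⟨.nil, by simp⟩
  · obtain ⟨x, y, hxy, hexy⟩ := G.exists_ends e
    have adj : G.toSimple.Adj u v := by
      refine ⟨h, e, ?_⟩
      rw [hexy] at hu hv ⊢
      rcases Sym2.mem_iff.mp hu with rfl | rfl <;> rcases Sym2.mem_iff.mp hv with rfl | rfl
      · exact absurd rfl h
      · rfl
      · exact Sym2.eq_swap
      · exact absurd rfl h
    exact ⟨adj.toWalk, by simp⟩

lemma walk_trans {G : Multigraph V E} {u v x : V} {a b : ℕ}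
    (h1 : ∃ p : G.toSimple.Walk u v, p.length ≤ a)
    (h2 : ∃ p : G.toSimple.Walk v x, p.length ≤ b) :
    ∃ p : G.toSimple.Walk u x, p.length ≤ a + b := by
  obtain ⟨p, hp⟩ := h1; obtain ⟨q, hq⟩ := h2
  exact ⟨p.append q, by rw [SimpleGraph.Walk.length_append]; omega⟩

lemma walk_symm {G : Multigraph V E} {u v : V} {a : ℕ}
    (h1 : ∃ p : G.toSimple.Walk u v, p.length ≤ a) :
    ∃ p : G.toSimple.Walk v u, p.length ≤ a := by
  obtain ⟨p, hp⟩ := h1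
  exact ⟨p.reverse, by simpa using hp⟩

lemma IsAltPath.trunc {G : Multigraph V E} {M M' : Finset E} {φ : E → ℕ} {i : ℕ} {u : V}
    {n : ℕ} {w : Fin (n + 1) → V} {g : Fin n → E}
    (hP : G.IsAltPath M M' φ i u n w g) {m : ℕ} (hm : m ≤ n) :
    G.IsAltPath M M' φ i u m (fun j => w (Fin.castLE (by omega) j))
      (fun j => g (Fin.castLE hm j)) := by
  obtain ⟨h0, hinj, hends, hpar⟩ := hP
  refine ⟨?_, ?_, ?_, ?_⟩
  · rw [← h0]; congr 1
  · intro a b hab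
    have := hinj hab
    exact Fin.castLE_injective _ this
  · intro k
    have h := hends (Fin.castLE hm k)
    exact h
  · intro k
    have h := hpar (Fin.castLE hm k)
    simpa using h

lemma IsAltPath.snoc {G : Multigraph V E} {M M' : Finset E} {φ : E → ℕ} {i : ℕ} {u : V}
    {n : ℕ} {w : Fin (n + 1) → V} {g : Fin n → E}
    (hP : G.IsAltPath M M' φ i u n w g) {b : E} {x : V}
    (hx : ∀ j, x ≠ w j) (hendb : G.ends b = s(w (Fin.last n), x))
    (hparb : if Even n then b ∉ M' ∧ φ b = i else b ∈ M' \ M) :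
    G.IsAltPath M M' φ i u (n + 1) (Fin.snoc w x) (Fin.snoc g b) := by
  obtain ⟨h0, hinj, hends, hpar⟩ := hP
  refine ⟨?_, ?_, ?_, ?_⟩
  · have h00 : (0 : Fin (n + 2)) = Fin.castSucc (0 : Fin (n + 1)) := rfl
    rw [h00, Fin.snoc_castSucc, h0]
  · intro a b hab
    induction a using Fin.lastCases with
    | last =>
      induction b using Fin.lastCases with
      | last => rfl
      | cast j =>
        rw [Fin.snoc_last, Fin.snoc_castSucc] at hab
        exact absurd hab (hx j)
    | cast j =>
      induction b using Fin.lastCases with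
      | last =>
        rw [Fin.snoc_last, Fin.snoc_castSucc] at hab
        exact absurd hab.symm (hx j)
      | cast j' =>
        rw [Fin.snoc_castSucc, Fin.snoc_castSucc] at hab
        rw [hinj hab]
  · intro k
    induction k using Fin.lastCases with
    | last =>
      rw [Fin.snoc_last]
      have h1 : (Fin.last n).castSucc = Fin.castSucc (Fin.last n) := rfl
      have h2 : (Fin.last n).succ = Fin.last (n + 1) := rfl
      rw [h1, h2, Fin.snoc_castSucc, Fin.snoc_last]
      exact hendb
    | cast j =>
      rw [Fin.snoc_castSucc]
      have h1 : (Fin.castSucc j).castSucc = Fin.castSucc j.castSucc := rfl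
      have h2 : (Fin.castSucc j).succ = Fin.castSucc j.succ := (Fin.succ_castSucc j).symm
      rw [h1, h2, Fin.snoc_castSucc, Fin.snoc_castSucc]
      exact hends j
  · intro k
    induction k using Fin.lastCases with
    | last =>
      rw [Fin.snoc_last]
      simpa using hparb
    | cast j =>
      rw [Fin.snoc_castSucc]
      have h := hpar j
      simpa using h

lemma altPath_edge_at_of_M' (G : Multigraph V E) {M M' : Finset E} (hMM' : M ⊆ M')
    (hM' : G.IsMatching M') {φ : E → ℕ} {i : ℕ} {e : E} (he : e ∈ M) {u : V}
    (hu : u ∈ G.ends e) {n : ℕ} {w : Fin (n + 1) → V} {g : Fin n → E}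
    (hP : G.IsAltPath M M' φ i u n w g) {f : E} (hf : f ∈ M') (hfM : f ∉ M)
    (j : Fin (n + 1)) (hj : j.val < n) (hvf : w j ∈ G.ends f) : ∃ t : Fin n, f = g t := by
  obtain ⟨h0, hinj, hends, hpar⟩ := hP
  have uniq : ∀ h ∈ M', w j ∈ G.ends h → f = h := by
    intro h hh hmem
    by_contra hne
    exact hM' f hf h hh hne ⟨hne, w j, hvf, hmem⟩
  rcases Nat.eq_zero_or_pos j.val with hj0 | hjpos
  · exfalso
    have hwj : w j = u := by
      have hj' : j = 0 := Fin.ext (by simpa using hj0)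
      rw [hj', h0]
    have := uniq e (hMM' he) (by rw [hwj]; exact hu)
    exact hfM (this ▸ he)
  · rcases Nat.even_or_odd j.val with hev | hodd
    · -- j even, ≥ 2 : take t = j - 1, odd index
      have h2 : j.val - 1 < n := by omega
      set t : Fin n := ⟨j.val - 1, h2⟩ with ht
      have htodd : ¬ Even t.val := by
        rw [Nat.even_iff]
        have := Nat.even_iff.mp hev
        simp only [ht]
        omega
      have hmem : g t ∈ M' \ M := by
        have h := hpar t
        rwa [if_neg htodd] at h
      have hsucc : t.succ = j := Fin.ext (by simp [ht]; omega)
      have : w j ∈ G.ends (g t) := by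
        rw [← hsucc]
        exact G.mem_ends_right (hends t)
      exact ⟨t, uniq (g t) (Finset.mem_sdiff.mp hmem).1 this⟩
    · -- j odd : take t = j
      set t : Fin n := ⟨j.val, hj⟩ with ht
      have htodd : ¬ Even t.val := by
        rw [Nat.even_iff]
        have := Nat.odd_iff.mp hodd
        simp only [ht]
        omega
      have hmem : g t ∈ M' \ M := by
        have h := hpar t
        rwa [if_neg htodd] at h
      have hcast : t.castSucc = j := Fin.ext (by simp [ht])
      have : w j ∈ G.ends (g t) := by
        rw [← hcast]
        exact G.mem_ends_left (hends t)
      exact ⟨t, uniq (g t) (Finset.mem_sdiff.mp hmem).1 this⟩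

lemma altPath_edge_at_of_colour (G : Multigraph V E) {M M' : Finset E} {φ : E → ℕ} {i : ℕ}
    (hφ2 : ∀ e f, e ∉ M' → f ∉ M' → G.EdgeAdj e f → φ e ≠ φ f) {u : V}
    {n : ℕ} {w : Fin (n + 1) → V} {g : Fin n → E}
    (hP : G.IsAltPath M M' φ i u n w g) {b : E} (hb : b ∉ M') (hφb : φ b = i)
    (j : Fin (n + 1)) (hj : j.val % 2 = 1 ∨ j.val < n) (hvb : w j ∈ G.ends b) :
    ∃ t : Fin n, b = g t := by
  obtain ⟨h0, hinj, hends, hpar⟩ := hP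
  have uniq : ∀ h, h ∉ M' → φ h = i → w j ∈ G.ends h → b = h := by
    intro h hh hφh hmem
    by_contra hne
    exact hφ2 b h hb hh ⟨hne, w j, hvb, hmem⟩ (by rw [hφb, hφh])
  rcases Nat.even_or_odd j.val with hev | hodd
  · -- j even : take t = j, need j < n
    have hjn : j.val < n := by
      rcases hj with h | h
      · exfalso; have := Nat.even_iff.mp hev; omega
      · exact h
    set t : Fin n := ⟨j.val, hjn⟩ with ht
    have htev : Even t.val := hev
    have hmem := hpar t
    rw [if_pos htev] at hmem
    have hcast : t.castSucc = j := Fin.ext (by simp [ht])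
    have : w j ∈ G.ends (g t) := by
      rw [← hcast]
      exact G.mem_ends_left (hends t)
    exact ⟨t, uniq (g t) hmem.1 hmem.2 this⟩
  · -- j odd : take t = j - 1, even index
    have hj1 : 1 ≤ j.val := by
      have := Nat.odd_iff.mp hodd; omega
    have h2 : j.val - 1 < n := by
      have := j.isLt; omega
    set t : Fin n := ⟨j.val - 1, h2⟩ with ht
    have htev : Even t.val := by
      rw [Nat.even_iff]
      have := Nat.odd_iff.mp hodd
      simp only [ht]
      omega
    have hmem := hpar t
    rw [if_pos htev] at hmem
    have hsucc : t.succ = j := Fin.ext (by simp [ht]; omega)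
    have : w j ∈ G.ends (g t) := by
      rw [← hsucc]
      exact G.mem_ends_right (hends t)
    exact ⟨t, uniq (g t) hmem.1 hmem.2 this⟩

lemma absorb_M' (G : Multigraph V E) {M M' : Finset E} (hMM' : M ⊆ M')
    (hM' : G.IsMatching M') {φ Φ : E → ℕ} {i : ℕ} {a : E}
    (ha : a ∈ G.AltSet M M' φ Φ i) (haM' : a ∉ M') {f : E} (hf : f ∈ M') (hfM : f ∉ M)
    {v : V} (hva : v ∈ G.ends a) (hvf : v ∈ G.ends f) : f ∈ G.AltSet M M' φ Φ i := by
  obtain ⟨e, he, hΦe, u, hu, n, w, g, k, hP, hgk⟩ := ha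
  have hkev : Even k.val := by
    by_contra hodd
    have h := hP.2.2.2 k
    rw [if_neg hodd] at h
    rw [hgk] at h
    exact haM' (Finset.mem_sdiff.mp h).1
  have hva' : v ∈ s(w k.castSucc, w k.succ) := by
    rw [← hP.2.2.1 k, hgk]; exact hva
  rcases Sym2.mem_iff.mp hva' with hv1 | hv2
  · obtain ⟨t, ht⟩ := G.altPath_edge_at_of_M' hMM' hM' he hu hP hf hfM k.castSucc
      (by simpa using k.isLt) (by rw [← hv1]; exact hvf)
    exact ⟨e, he, hΦe, u, hu, n, w, g, t, hP, ht.symm⟩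
  · by_cases hlt : k.val + 1 < n
    · obtain ⟨t, ht⟩ := G.altPath_edge_at_of_M' hMM' hM' he hu hP hf hfM k.succ
        (by simpa using hlt) (by rw [← hv2]; exact hvf)
      exact ⟨e, he, hΦe, u, hu, n, w, g, t, hP, ht.symm⟩
    · have hkn : k.val + 1 = n := by have := k.isLt; omega
      obtain ⟨x, hxv, hfx⟩ := G.exists_other hvf
      by_cases hxw : ∃ j : Fin (n + 1), x = w j
      · obtain ⟨j, hj⟩ := hxw
        have hjlt : j.val < n := by
          by_contra hc
          have hjn : j.val = n := by have := j.isLt; omega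
          have hjk : j = k.succ := Fin.ext (by simp [hjn, ← hkn])
          rw [hjk, ← hv2] at hj
          exact hxv hj
        obtain ⟨t, ht⟩ := G.altPath_edge_at_of_M' hMM' hM' he hu hP hf hfM j hjlt
          (by rw [← hj]; exact G.mem_ends_right hfx)
        exact ⟨e, he, hΦe, u, hu, n, w, g, t, hP, ht.symm⟩
      · push_neg at hxw
        have hlast : w (Fin.last n) = v := by
          rw [hv2]; congr 1; exact Fin.ext (by simp [← hkn])
        have hnodd : ¬ Even n := by
          rw [← hkn, Nat.even_add_one]
          simpa using hkev
        have hsnoc := hP.snoc hxw (by rw [hlast]; exact hfx)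
          (by rw [if_neg hnodd]; exact Finset.mem_sdiff.mpr ⟨hf, hfM⟩)
        refine ⟨e, he, hΦe, u, hu, n + 1, Fin.snoc w x, Fin.snoc g f, Fin.last n, hsnoc, ?_⟩
        exact Fin.snoc_last _ _

lemma absorb_colour (G : Multigraph V E) {M M' : Finset E} {φ Φ : E → ℕ}
    (hφ2 : ∀ e f, e ∉ M' → f ∉ M' → G.EdgeAdj e f → φ e ≠ φ f) {i : ℕ} {f : E}
    (hfA : f ∈ G.AltSet M M' φ Φ i) (hf : f ∈ M') {b : E} (hb : b ∉ M') (hφb : φ b = i)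
    {v : V} (hvf : v ∈ G.ends f) (hvb : v ∈ G.ends b) : b ∈ G.AltSet M M' φ Φ i := by
  obtain ⟨e, he, hΦe, u, hu, n, w, g, k, hP, hgk⟩ := hfA
  have hkodd : ¬ Even k.val := by
    intro hev
    have h := hP.2.2.2 k
    rw [if_pos hev] at h
    rw [hgk] at h
    exact h.1 hf
  have hvf' : v ∈ s(w k.castSucc, w k.succ) := by
    rw [← hP.2.2.1 k, hgk]; exact hvf
  rcases Sym2.mem_iff.mp hvf' with hv1 | hv2
  · obtain ⟨t, ht⟩ := G.altPath_edge_at_of_colour hφ2 hP hb hφb k.castSucc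
      (Or.inr (by simpa using k.isLt)) (by rw [← hv1]; exact hvb)
    exact ⟨e, he, hΦe, u, hu, n, w, g, t, hP, ht.symm⟩
  · by_cases hlt : k.val + 1 < n
    · obtain ⟨t, ht⟩ := G.altPath_edge_at_of_colour hφ2 hP hb hφb k.succ
        (Or.inr (by simpa using hlt)) (by rw [← hv2]; exact hvb)
      exact ⟨e, he, hΦe, u, hu, n, w, g, t, hP, ht.symm⟩
    · have hkn : k.val + 1 = n := by have := k.isLt; omega
      obtain ⟨x, hxv, hbx⟩ := G.exists_other hvb
      by_cases hxw : ∃ j : Fin (n + 1), x = w j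
      · obtain ⟨j, hj⟩ := hxw
        have hjlt : j.val < n := by
          by_contra hc
          have hjn : j.val = n := by have := j.isLt; omega
          have hjk : j = k.succ := Fin.ext (by simp [hjn, ← hkn])
          rw [hjk, ← hv2] at hj
          exact hxv hj
        obtain ⟨t, ht⟩ := G.altPath_edge_at_of_colour hφ2 hP hb hφb j (Or.inr hjlt)
          (by rw [← hj]; exact G.mem_ends_right hbx)
        exact ⟨e, he, hΦe, u, hu, n, w, g, t, hP, ht.symm⟩
      · push_neg at hxw
        have hlast : w (Fin.last n) = v := by
          rw [hv2]; congr 1; exact Fin.ext (by simp [← hkn])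
        have hnev : Even n := by
          rw [← hkn, Nat.even_add_one]
          exact hkodd
        have hsnoc := hP.snoc hxw (by rw [hlast]; exact hbx)
          (by rw [if_pos hnev]; exact ⟨hb, hφb⟩)
        refine ⟨e, he, hΦe, u, hu, n + 1, Fin.snoc w x, Fin.snoc g b, Fin.last n, hsnoc, ?_⟩
        exact Fin.snoc_last _ _

end Multigraph

/-- Concluding step of the main proof: if every edge of each alternating
structure `A_i` lies within distance `3` of an edge of `M` precoloured `i`,
then the precolouring extends to a proper `(Δ + μ)`-edge-colouring of `G`. -/
theorem extension_from_local_alt_sets {V E : Type} [Fintype V] [Fintype E] [DecidableEq V]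
    [DecidableEq E] (G : Multigraph V E) (Δ μ : ℕ)
    (hΔ : ∀ v, G.degree v ≤ Δ) (hμ : ∀ s, G.multiplicity s ≤ μ)
    (M M' : Finset E) (hMM' : M ⊆ M') (hM : G.IsMatching M) (hM' : G.IsMatching M')
    (hdist : ∀ e ∈ M, ∀ f ∈ M, e ≠ f → G.EdgeDistGe e f 9)
    (Φ : E → ℕ) (hΦ : ∀ e ∈ M, Φ e ∈ Finset.Icc 1 (Δ + μ))
    (φ : E → ℕ) (hφ : G.IsProperOff M' (Δ + μ - 1) φ)
    (hA : ∀ i ∈ Finset.Icc 1 (Δ + μ - 1), ∀ a ∈ G.AltSet M M' φ Φ i,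
      ∃ e ∈ M, Φ e = i ∧ G.EdgeDistLe a e 3) :
    ∃ c : E → ℕ, (∀ e, c e ∈ Finset.Icc 1 (Δ + μ)) ∧
      (∀ e f, G.EdgeAdj e f → c e ≠ c f) ∧
      ∀ e ∈ M, c e = Φ e := by
  classical
  obtain ⟨hφ1, hφ2⟩ := hφ
  -- at least one colour is available whenever an edge exists
  have one_le : E → 1 ≤ Δ + μ := by
    intro e
    obtain ⟨u, x, hux, hex⟩ := G.exists_ends e
    have hd : 0 < G.degree u :=
      (Set.ncard_pos (Set.toFinite _)).mpr ⟨e, G.mem_ends_left hex⟩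
    have := hΔ u
    unfold Multigraph.degree at this hd
    omega
  have dist8 : ∀ (e1 e2 : E), e1 ∈ M → e2 ∈ M → e1 ≠ e2 → ∀ {y1 y2 : V},
      y1 ∈ G.ends e1 → y2 ∈ G.ends e2 →
      (∃ p : G.toSimple.Walk y1 y2, p.length ≤ 8) → False := by
    intro e1 e2 h1 h2 hne y1 y2 hy1 hy2 hp
    obtain ⟨p, hp⟩ := hp
    have := hdist e1 h1 e2 h2 hne y1 y2 hy1 hy2 p
    omega
  have single : ∀ (e' f' : E) (v' : V), e' ∈ M → Φ e' = φ f' → f' ∉ M' →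
      v' ∈ G.ends e' → v' ∈ G.ends f' → f' ∈ G.AltSet M M' φ Φ (φ f') := by
    intro e' f' v' he' hΦ' hf' hv'e hv'f
    obtain ⟨x, hxv, hfx⟩ := G.exists_other hv'f
    have hpath : G.IsAltPath M M' φ (φ f') v' 1 ![v', x] ![f'] := by
      refine ⟨rfl, ?_, ?_, ?_⟩
      · intro a b hab
        fin_cases a <;> fin_cases b <;> simp_all
      · intro k
        have hk0 : k = 0 := Subsingleton.elim k 0
        subst hk0
        simpa using hfx
      · intro k
        have hk0 : k = 0 := Subsingleton.elim k 0
        subst hk0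
        rw [if_pos (by norm_num : Even ((0 : Fin 1) : ℕ))]
        exact ⟨by simpa using hf', by simp⟩
    exact ⟨e', he', hΦ', v', hv'e, 1, ![v', x], ![f'], 0, hpath, rfl⟩
  have hc : ∃ c : E → ℕ,
      (∀ e ∈ M, c e = Φ e) ∧
      (∀ e, e ∉ M → e ∈ M' →
        ∀ h : (∃ j, j ∈ Finset.Icc 1 (Δ + μ - 1) ∧ e ∈ G.AltSet M M' φ Φ j),
        c e = h.choose) ∧
      (∀ e, e ∉ M → e ∈ M' →
        ¬ (∃ j, j ∈ Finset.Icc 1 (Δ + μ - 1) ∧ e ∈ G.AltSet M M' φ Φ j) → c e = Δ + μ) ∧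
      (∀ e, e ∉ M' → e ∈ G.AltSet M M' φ Φ (φ e) → c e = Δ + μ) ∧
      (∀ e, e ∉ M' → e ∉ G.AltSet M M' φ Φ (φ e) → c e = φ e) := by
    refine ⟨fun e => if heM : e ∈ M then Φ e else if heM' : e ∈ M' then
      (if h : ∃ j, j ∈ Finset.Icc 1 (Δ + μ - 1) ∧ e ∈ G.AltSet M M' φ Φ j then h.choose
        else Δ + μ)
      else if e ∈ G.AltSet M M' φ Φ (φ e) then Δ + μ else φ e, ?_, ?_, ?_, ?_, ?_⟩
    · intro e he; simp only [dif_pos he]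
    · intro e heM heM' h; simp only [dif_neg heM, dif_pos heM', dif_pos h]
    · intro e heM heM' h; simp only [dif_neg heM, dif_pos heM', dif_neg h]
    · intro e heM' hAe
      have heM : e ∉ M := fun h => heM' (hMM' h)
      simp only [dif_neg heM, dif_neg heM', if_pos hAe]
    · intro e heM' hAe
      have heM : e ∉ M := fun h => heM' (hMM' h)
      simp only [dif_neg heM, dif_neg heM', if_neg hAe]
  obtain ⟨c, hc1, hc2, hc3, hc4, hc5⟩ := hc
  have hadj_symm : ∀ {e f : E}, G.EdgeAdj e f → G.EdgeAdj f e := by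
    rintro e f ⟨hne, v, h1, h2⟩
    exact ⟨hne.symm, v, h2, h1⟩
  have mainA : ∀ e f, G.EdgeAdj e f → e ∈ M' → f ∉ M' → c e ≠ c f := by
    intro e f hadj heM' hfM'
    obtain ⟨hne, v, hve, hvf⟩ := hadj
    have hfIcc := hφ1 f hfM'
    rw [Finset.mem_Icc] at hfIcc
    by_cases hfA : f ∈ G.AltSet M M' φ Φ (φ f)
    · rw [hc4 f hfM' hfA]
      by_cases heM : e ∈ M
      · rw [hc1 e heM]
        intro hΦeq
        obtain ⟨e', he', hΦe', hdle⟩ := hA (φ f) (hφ1 f hfM') f hfA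
        have hne' : e ≠ e' := by
          intro h
          rw [← h, hΦeq] at hΦe'
          omega
        obtain ⟨y1, y2, hy1, hy2, hw⟩ := hdle
        obtain ⟨p, hp⟩ := Multigraph.walk_trans (G.walk_step hvf hy1) hw
        exact dist8 e e' heM he' hne' hve hy2 ⟨p, by omega⟩
      · by_cases hex : ∃ j, j ∈ Finset.Icc 1 (Δ + μ - 1) ∧ e ∈ G.AltSet M M' φ Φ j
        · rw [hc2 e heM heM' hex]
          have hjI := hex.choose_spec.1
          rw [Finset.mem_Icc] at hjI
          omega
        · rw [hc3 e heM heM' hex]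
          intro _
          exact hex ⟨φ f, by rw [Finset.mem_Icc]; omega,
            G.absorb_M' hMM' hM' hfA hfM' heM' heM hvf hve⟩
    · rw [hc5 f hfM' hfA]
      by_cases heM : e ∈ M
      · rw [hc1 e heM]
        intro hΦeq
        exact hfA (single e f v heM hΦeq hfM' hve hvf)
      · by_cases hex : ∃ j, j ∈ Finset.Icc 1 (Δ + μ - 1) ∧ e ∈ G.AltSet M M' φ Φ j
        · rw [hc2 e heM heM' hex]
          intro hj
          apply hfA
          rw [← hj]
          exact G.absorb_colour hφ2 hex.choose_spec.2 heM' hfM' hj.symm hve hvf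
        · rw [hc3 e heM heM' hex]
          intro h
          omega
  have mainB : ∀ e f, G.EdgeAdj e f → e ∉ M' → f ∉ M' → c e ≠ c f := by
    intro e f hadj heM' hfM'
    obtain ⟨hne, v, hve, hvf⟩ := hadj
    have heI := hφ1 e heM'
    have hfI := hφ1 f hfM'
    rw [Finset.mem_Icc] at heI hfI
    by_cases heA : e ∈ G.AltSet M M' φ Φ (φ e) <;>
      by_cases hfA : f ∈ G.AltSet M M' φ Φ (φ f)
    · rw [hc4 e heM' heA, hc4 f hfM' hfA]
      intro _
      by_cases hpq : φ e = φ f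
      · exact hφ2 e f heM' hfM' ⟨hne, v, hve, hvf⟩ hpq
      · obtain ⟨e1, he1, hΦ1, hd1⟩ := hA (φ e) (hφ1 e heM') e heA
        obtain ⟨e2, he2, hΦ2, hd2⟩ := hA (φ f) (hφ1 f hfM') f hfA
        have hne12 : e1 ≠ e2 := by
          intro h
          rw [h, hΦ2] at hΦ1
          exact hpq hΦ1.symm
        obtain ⟨y1, z1, hy1, hz1, hw1⟩ := hd1
        obtain ⟨y2, z2, hy2, hz2, hw2⟩ := hd2
        obtain ⟨p, hp⟩ := Multigraph.walk_trans (Multigraph.walk_trans (Multigraph.walk_trans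
          (Multigraph.walk_symm hw1) (G.walk_step hy1 hve)) (G.walk_step hvf hy2)) hw2
        exact dist8 e1 e2 he1 he2 hne12 hz1 hz2 ⟨p, by omega⟩
    · rw [hc4 e heM' heA, hc5 f hfM' hfA]
      intro h
      omega
    · rw [hc5 e heM' heA, hc4 f hfM' hfA]
      intro h
      omega
    · rw [hc5 e heM' heA, hc5 f hfM' hfA]
      exact hφ2 e f heM' hfM' ⟨hne, v, hve, hvf⟩
  refine ⟨c, ?_, ?_, fun e he => hc1 e he⟩
  · intro e
    rw [Finset.mem_Icc]
    by_cases heM : e ∈ M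
    · have := hΦ e heM
      rw [Finset.mem_Icc] at this
      rw [hc1 e heM]
      omega
    · by_cases heM' : e ∈ M'
      · by_cases hex : ∃ j, j ∈ Finset.Icc 1 (Δ + μ - 1) ∧ e ∈ G.AltSet M M' φ Φ j
        · rw [hc2 e heM heM' hex]
          have := hex.choose_spec.1
          rw [Finset.mem_Icc] at this
          omega
        · rw [hc3 e heM heM' hex]
          have := one_le e
          omega
      · by_cases heA : e ∈ G.AltSet M M' φ Φ (φ e)
        · rw [hc4 e heM' heA]
          have := one_le e
          omega
        · rw [hc5 e heM' heA]
          have := hφ1 e heM'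
          rw [Finset.mem_Icc] at this
          omega
  · intro e f hadj
    by_cases heM' : e ∈ M' <;> by_cases hfM' : f ∈ M'
    · exact absurd hadj (hM' e heM' f hfM' hadj.1)
    · exact mainA e f hadj heM' hfM'
    · exact fun h => mainA f e (hadj_symm hadj) hfM' heM' h.symm
    · exact mainB e f hadj heM' hfM'
end
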